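/- arXiv:1508.02756 — 7 statements merged into one kernel-verified Lean document; each statement's English description precedes it below -/
import Mathlib

section
/- Assume condition (H.1) holds for (β, α, λ, φ). Then there exists a constant C > 0 such that for all 0 < s ≤ t, setting g₁(t,s) := R(t+s, t+s) + R(t,t) - 2 R(t, t+s) - 2λ t^{2β-α} s^α, one has |g₁(t,s)| ≤ C s t^{2β-1} if α < 1, and |g₁(t,s)| ≤ C s² t^{2β-2} if α ≥ 1. -/
noncomputable section

open Filter MeasureTheory

/-- Condition (H.1) of the paper: `φ x = -λ (x-1)^α + ψ x`, where `ψ` is twice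
differentiable on an open set containing `[1,∞)` and satisfies the bounds
(i), (ii) and the relation (iii). -/
def CondH1 (β α lam : ℝ) (φ ψ : ℝ → ℝ) : Prop :=
  (∀ x : ℝ, 1 ≤ x → φ x = -lam * (x - 1) ^ α + ψ x) ∧
  (∃ U : Set ℝ, IsOpen U ∧ Set.Ici (1 : ℝ) ⊆ U ∧
    ∀ x ∈ U, DifferentiableAt ℝ ψ x ∧ DifferentiableAt ℝ (deriv ψ) x) ∧
  (∃ C₀ : ℝ, 0 ≤ C₀ ∧
    (∀ x : ℝ, 1 < x → |deriv ψ x| ≤ C₀ * x ^ (α - 1)) ∧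
    (∀ x : ℝ, 1 < x → |deriv (deriv ψ) x| ≤ C₀ * x⁻¹ * (x - 1) ^ (α - 1)) ∧
    (1 ≤ α → deriv ψ 1 = β * ψ 1))

/-- Condition (H.2) of the paper: decay bounds for `φ'` and `φ''` on `[2,∞)`,
with exponent `ν ∈ (1,2]` and constant `C₁ > 0`. -/
def CondH2 (α ν C₁ : ℝ) (φ : ℝ → ℝ) : Prop :=
  0 < C₁ ∧ 1 < ν ∧ ν ≤ 2 ∧
  ∀ x : ℝ, 2 ≤ x →
    (α < 1 → |deriv φ x| ≤ C₁ * (x - 1) ^ (-ν) ∧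
      |deriv (deriv φ) x| ≤ C₁ * (x - 1) ^ (-ν - 1)) ∧
    (1 ≤ α → |deriv φ x| ≤ C₁ * (x - 1) ^ (α - 2) ∧
      |deriv (deriv φ) x| ≤ C₁ * (x - 1) ^ (α - 3))

/-- The covariance function `R(s,t) = (min s t)^{2β} φ(max s t / min s t)`
for `s, t > 0`, extended by `0` when `s = 0` or `t = 0`. -/
def Rcov (β : ℝ) (φ : ℝ → ℝ) (s t : ℝ) : ℝ :=
  if s = 0 ∨ t = 0 then 0 else (min s t) ^ (2 * β) * φ (max s t / min s t)

/-- The increment covariance `r(j,k)` at integer times. -/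
def rincr (β : ℝ) (φ : ℝ → ℝ) (j k : ℕ) : ℝ :=
  Rcov β φ ((j : ℝ) + 1) ((k : ℝ) + 1) - Rcov β φ (j : ℝ) ((k : ℝ) + 1)
    - Rcov β φ ((j : ℝ) + 1) (k : ℝ) + Rcov β φ (j : ℝ) (k : ℝ)

/-- The increment correlation `ρ(j,k) = r(j,k)/(ξ_j ξ_k)` with `ξ_j = √(r(j,j))`. -/
def rhoincr (β : ℝ) (φ : ℝ → ℝ) (j k : ℕ) : ℝ :=
  rincr β φ j k / (Real.sqrt (rincr β φ j j) * Real.sqrt (rincr β φ k k))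

/-- `R` is positive semidefinite. -/
def IsPosSemidef (β : ℝ) (φ : ℝ → ℝ) : Prop :=
  ∀ (m : ℕ) (ts a : Fin m → ℝ), (∀ i, 0 ≤ ts i) →
    0 ≤ ∑ i, ∑ l, a i * a l * Rcov β φ (ts i) (ts l)

/-- The second difference `|m+1|^α + |m-1|^α - 2|m|^α`. -/
def secondDiff (α : ℝ) (m : ℤ) : ℝ :=
  |(m : ℝ) + 1| ^ α + |(m : ℝ) - 1| ^ α - 2 * |(m : ℝ)| ^ α

set_option maxHeartbeats 3000000 in
/-- Lemma 3.1 of the paper: under (H.1), for `0 < s ≤ t`, the remainder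
`g₁(t,s) = E[(X_{t+s}-X_t)²] - 2λ t^{2β-α} s^α` satisfies
`|g₁(t,s)| ≤ C s t^{2β-1}` if `α < 1` and `|g₁(t,s)| ≤ C s² t^{2β-2}` if `α ≥ 1`. -/
theorem stmt_3 (β α lam : ℝ) (φ ψ : ℝ → ℝ)
    (hβ0 : 0 < β) (hβ1 : β < 1) (hα0 : 0 < α) (hα2β : α ≤ 2 * β) (hlam : 0 < lam)
    (h1 : CondH1 β α lam φ ψ) :
    ∃ C : ℝ, 0 < C ∧ ∀ s t : ℝ, 0 < s → s ≤ t →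
      (α < 1 →
        |Rcov β φ (t + s) (t + s) + Rcov β φ t t - 2 * Rcov β φ t (t + s)
          - 2 * lam * t ^ (2 * β - α) * s ^ α| ≤ C * s * t ^ (2 * β - 1)) ∧
      (1 ≤ α →
        |Rcov β φ (t + s) (t + s) + Rcov β φ t t - 2 * Rcov β φ t (t + s)
          - 2 * lam * t ^ (2 * β - α) * s ^ α| ≤ C * s ^ 2 * t ^ (2 * β - 2)) := by
  obtain ⟨hφ, ⟨U, hUopen, hUsub, hUdiff⟩, C₀, hC₀0, hb1, hb2, hb3⟩ := h1
  set h : ℝ → ℝ := fun u => ψ 1 * ((1+u) ^ (2*β) + 1) - 2 * ψ (1+u) with hh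
  set H : ℝ → ℝ := fun u => ψ 1 * (2*β * (1+u) ^ (2*β-1)) - 2 * deriv ψ (1+u) with hH
  set H' : ℝ → ℝ := fun u =>
    ψ 1 * (2*β * ((2*β-1) * (1+u) ^ (2*β-1-1))) - 2 * deriv (deriv ψ) (1+u) with hH'
  set M : ℝ := 4 * (β * |ψ 1| + C₀) + 1 with hM
  have hMpos : (0:ℝ) < M := by positivity
  have hmem : ∀ u : ℝ, 0 ≤ u → (1+u) ∈ U := fun u hu => hUsub (by
    simp only [Set.mem_Ici]; linarith)
  -- derivative of h
  have hder1 : ∀ u : ℝ, 0 ≤ u → HasDerivAt h (H u) u := by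
    intro u hu
    have h1u : (0:ℝ) < 1 + u := by linarith
    have hid : HasDerivAt (fun v : ℝ => 1 + v) 1 u := by
      simpa using (hasDerivAt_id u).const_add 1
    have hr := hid.rpow_const (p := 2*β) (Or.inl h1u.ne')
    have hψ : HasDerivAt (fun v : ℝ => ψ (1+v)) (deriv ψ (1+u)) u := by
      have hc := ((hUdiff _ (hmem u hu)).1.hasDerivAt).comp u hid; rw [mul_one] at hc; exact hc
    have h2 := ((hr.add_const 1).const_mul (ψ 1)).sub (hψ.const_mul 2)
    have he : H u = ψ 1 * (1 * (2*β) * (1+u) ^ (2*β-1)) - 2 * deriv ψ (1+u) := by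
      simp only [hH]; ring
    rw [hh, he]
    exact h2
  -- derivative of H
  have hder2 : ∀ u : ℝ, 0 ≤ u → HasDerivAt H (H' u) u := by
    intro u hu
    have h1u : (0:ℝ) < 1 + u := by linarith
    have hid : HasDerivAt (fun v : ℝ => 1 + v) 1 u := by
      simpa using (hasDerivAt_id u).const_add 1
    have hr := hid.rpow_const (p := 2*β-1) (Or.inl h1u.ne')
    have hψ : HasDerivAt (fun v : ℝ => deriv ψ (1+v)) (deriv (deriv ψ) (1+u)) u := by
      have hc := ((hUdiff _ (hmem u hu)).2.hasDerivAt).comp u hid; rw [mul_one] at hc; exact hc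
    have h2 := (((hr.const_mul (2*β)).const_mul (ψ 1))).sub (hψ.const_mul 2)
    have he : H' u = ψ 1 * (2*β * (1 * (2*β-1) * (1+u) ^ (2*β-1-1))) - 2 * deriv (deriv ψ) (1+u) := by
      simp only [hH']; ring
    rw [hH, he]
    exact h2
  have h0eq : h 0 = 0 := by
    simp only [hh, add_zero, Real.one_rpow]; ring
  -- generic rpow bound
  have hrb : ∀ u : ℝ, 0 ≤ u → u ≤ 1 → ∀ e : ℝ, e ≤ 1 → (1+u) ^ e ≤ 2 := by
    intro u hu hu1 e he
    calc (1+u) ^ e ≤ (1+u) ^ (1:ℝ) :=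
          Real.rpow_le_rpow_of_exponent_le (by linarith) he
    _ = 1 + u := Real.rpow_one _
    _ ≤ 2 := by linarith
  -- bound on |H|
  have hHb : ∀ u ∈ Set.Ioc (0:ℝ) 1, |H u| ≤ M := by
    intro u hu
    obtain ⟨hu0, hu1⟩ := hu
    have h2 : (1+u) ^ (2*β-1) ≤ 2 := hrb u hu0.le hu1 _ (by linarith)
    have h2' : (0:ℝ) ≤ (1+u) ^ (2*β-1) := Real.rpow_nonneg (by linarith) _
    have h4 : (1+u) ^ (α-1) ≤ 2 := hrb u hu0.le hu1 _ (by linarith)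
    have h4' : (0:ℝ) ≤ (1+u) ^ (α-1) := Real.rpow_nonneg (by linarith) _
    have h3 : |deriv ψ (1+u)| ≤ 2 * C₀ := by
      have := hb1 (1+u) (by linarith)
      nlinarith
    have e1 : |ψ 1 * (2*β * (1+u) ^ (2*β-1))| ≤ |ψ 1| * (2*β*2) := by
      rw [abs_mul]
      have : |2*β * (1+u) ^ (2*β-1)| = 2*β * (1+u) ^ (2*β-1) := abs_of_nonneg (by positivity)
      rw [this]
      have : 2*β * (1+u) ^ (2*β-1) ≤ 2*β*2 := by nlinarith
      nlinarith [abs_nonneg (ψ 1)]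
    calc |H u| ≤ |ψ 1 * (2*β * (1+u) ^ (2*β-1))| + |2 * deriv ψ (1+u)| := abs_sub _ _
    _ ≤ |ψ 1| * (2*β*2) + 2 * (2*C₀) := by
        have h6 : |2 * deriv ψ (1+u)| = 2 * |deriv ψ (1+u)| := by
          rw [abs_mul (2:ℝ)]; norm_num
        rw [h6]; linarith
    _ ≤ M := by rw [hM]; nlinarith [abs_nonneg (ψ 1)]
  -- bound on |H'| when α ≥ 1
  have hH'b : 1 ≤ α → ∀ u ∈ Set.Ioc (0:ℝ) 1, |H' u| ≤ M := by
    intro hα1 u hu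
    obtain ⟨hu0, hu1⟩ := hu
    have h2 : (1+u) ^ (2*β-1-1) ≤ 2 := hrb u hu0.le hu1 _ (by linarith)
    have h2' : (0:ℝ) ≤ (1+u) ^ (2*β-1-1) := Real.rpow_nonneg (by linarith) _
    have h3 : |deriv (deriv ψ) (1+u)| ≤ C₀ := by
      have hb := hb2 (1+u) (by linarith)
      rw [show (1:ℝ)+u-1 = u by ring] at hb
      have hinv : (1+u)⁻¹ ≤ 1 := by
        rw [inv_le_one_iff₀]; right; linarith
      have hup : u ^ (α-1) ≤ 1 := Real.rpow_le_one hu0.le hu1 (by linarith)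
      have hup' : (0:ℝ) ≤ u ^ (α-1) := Real.rpow_nonneg hu0.le _
      have hinv' : (0:ℝ) ≤ (1+u)⁻¹ := by positivity
      calc |deriv (deriv ψ) (1+u)| ≤ C₀ * (1+u)⁻¹ * u ^ (α-1) := hb
      _ ≤ C₀ * 1 * 1 := by
          apply mul_le_mul _ hup hup' (by positivity)
          nlinarith
      _ = C₀ := by ring
    have hβ1' : |2*β - 1| ≤ 1 := by rw [abs_le]; constructor <;> linarith
    have e1 : |ψ 1 * (2*β * ((2*β-1) * (1+u) ^ (2*β-1-1)))| ≤ |ψ 1| * (2*β*2) := by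
      rw [abs_mul (ψ 1) _, abs_mul (2*β) _, abs_mul (2*β-1) _]
      have hb2a : |(2:ℝ)*β| = 2*β := abs_of_nonneg (by linarith)
      have hb2b : |(1+u) ^ (2*β-1-1)| = (1+u) ^ (2*β-1-1) := abs_of_nonneg h2'
      rw [hb2a, hb2b]
      have : |2*β-1| * (1+u) ^ (2*β-1-1) ≤ 1 * 2 := by
        apply mul_le_mul hβ1' h2 h2' (by norm_num)
      nlinarith [mul_le_mul_of_nonneg_left this
        (mul_nonneg (abs_nonneg (ψ 1)) (by linarith : (0:ℝ) ≤ 2*β))]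
    calc |H' u| ≤ |ψ 1 * (2*β * ((2*β-1) * (1+u) ^ (2*β-1-1)))| + |2 * deriv (deriv ψ) (1+u)| :=
        abs_sub _ _
    _ ≤ |ψ 1| * (2*β*2) + 2 * C₀ := by
        have h6 : |2 * deriv (deriv ψ) (1+u)| = 2 * |deriv (deriv ψ) (1+u)| := by
          rw [abs_mul (2:ℝ)]; norm_num
        rw [h6]; linarith
    _ ≤ M := by rw [hM]; nlinarith [abs_nonneg (ψ 1)]
  -- H 0 = 0 when α ≥ 1
  have H0eq : 1 ≤ α → H 0 = 0 := by
    intro hα1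
    simp only [hH, add_zero, Real.one_rpow]
    rw [hb3 hα1]; ring
  -- mean value estimate helper
  have mvt : ∀ (f F : ℝ → ℝ) (B : ℝ), (∀ x : ℝ, 0 ≤ x → HasDerivAt f (F x) x) →
      ∀ w v : ℝ, 0 < w → w ≤ v → (∀ x ∈ Set.Icc w v, |F x| ≤ B) →
      |f v - f w| ≤ B * (v - w) := by
    intro f F B hder w v hw hwv hbound
    have := (convex_Icc w v).norm_image_sub_le_of_norm_hasDerivWithin_le
      (f := f) (f' := F)
      (fun x hx => (hder x (le_trans hw.le hx.1)).hasDerivWithinAt)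
      (fun x hx => hbound x hx)
      (Set.left_mem_Icc.mpr hwv) (Set.right_mem_Icc.mpr hwv)
    simpa [Real.norm_eq_abs, abs_of_nonneg (by linarith : (0:ℝ) ≤ v - w)] using this
  -- limit argument
  have key : ∀ (f : ℝ → ℝ) (B u : ℝ), ContinuousAt f 0 → f 0 = 0 → 0 < u →
      (∀ w ∈ Set.Ioc (0:ℝ) u, |f u - f w| ≤ B) → |f u| ≤ B := by
    intro f B u hc h0 hu hbb
    have t0 : Tendsto f (nhdsWithin (0:ℝ) (Set.Ioi 0)) (nhds (f 0)) :=
      hc.tendsto.mono_left nhdsWithin_le_nhds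
    have t1 : Tendsto (fun w => B + |f w|) (nhdsWithin (0:ℝ) (Set.Ioi 0)) (nhds (B + |f 0|)) :=
      tendsto_const_nhds.add t0.abs
    have ev : ∀ᶠ w in nhdsWithin (0:ℝ) (Set.Ioi 0), |f u| ≤ B + |f w| := by
      filter_upwards [mem_of_superset (Ioo_mem_nhdsGT hu) Set.Ioo_subset_Ioc_self] with w hw
      have h1 := hbb w hw
      have h2 : |f u| ≤ |f u - f w| + |f w| := by
        simpa using abs_add_le (f u - f w) (f w)
      linarith
    have := ge_of_tendsto t1 ev
    rw [h0] at this
    simpa using this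
  -- first order estimate
  have est1 : ∀ u : ℝ, 0 < u → u ≤ 1 → |h u| ≤ M * u := by
    intro u hu0 hu1
    apply key h (M*u) u (hder1 0 le_rfl).continuousAt h0eq hu0
    intro w hw
    have hb := mvt h H M hder1 w u hw.1 hw.2
      (fun x hx => hHb x ⟨lt_of_lt_of_le hw.1 hx.1, le_trans hx.2 hu1⟩)
    nlinarith [hw.1, hMpos]
  -- second order estimate
  have estH : 1 ≤ α → ∀ v : ℝ, 0 < v → v ≤ 1 → |H v| ≤ M * v := by
    intro hα1 v hv0 hv1
    apply key H (M*v) v (hder2 0 le_rfl).continuousAt (H0eq hα1) hv0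
    intro w hw
    have hb := mvt H H' M hder2 w v hw.1 hw.2
      (fun x hx => hH'b hα1 x ⟨lt_of_lt_of_le hw.1 hx.1, le_trans hx.2 hv1⟩)
    nlinarith [hw.1, hMpos]
  have est2 : 1 ≤ α → ∀ u : ℝ, 0 < u → u ≤ 1 → |h u| ≤ M * u * u := by
    intro hα1 u hu0 hu1
    apply key h (M*u*u) u (hder1 0 le_rfl).continuousAt h0eq hu0
    intro w hw
    have hb := mvt h H (M*u) hder1 w u hw.1 hw.2 (fun x hx => by
      have hx0 : 0 < x := lt_of_lt_of_le hw.1 hx.1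
      have := estH hα1 x hx0 (le_trans hx.2 hu1)
      nlinarith [hx.2, hMpos])
    nlinarith [hb, mul_nonneg (mul_nonneg hMpos.le hu0.le) hw.1.le]
  -- value of φ at 1
  have hφ1 : φ 1 = ψ 1 := by
    rw [hφ 1 le_rfl, show (1:ℝ) - 1 = 0 by ring, Real.zero_rpow hα0.ne']; ring
  refine ⟨M, hMpos, ?_⟩
  intro s t hs hst
  have ht : 0 < t := hs.trans_le hst
  set u := s / t with hu
  have hu0 : 0 < u := div_pos hs ht
  have hu1 : u ≤ 1 := (div_le_one ht).mpr hst
  have hts : 0 < t + s := by linarith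
  have hA : Rcov β φ (t+s) (t+s) = (t+s) ^ (2*β) * ψ 1 := by
    rw [Rcov, if_neg (by push_neg; exact ⟨hts.ne', hts.ne'⟩), min_self, max_self,
      div_self hts.ne', hφ1]
  have hB : Rcov β φ t t = t ^ (2*β) * ψ 1 := by
    rw [Rcov, if_neg (by push_neg; exact ⟨ht.ne', ht.ne'⟩), min_self, max_self,
      div_self ht.ne', hφ1]
  have hC : Rcov β φ t (t+s) = t ^ (2*β) * φ (1+u) := by
    rw [Rcov, if_neg (by push_neg; exact ⟨ht.ne', hts.ne'⟩),
      min_eq_left (by linarith), max_eq_right (by linarith)]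
    congr 2
    rw [add_div, div_self ht.ne', hu]
  have hφu : φ (1+u) = -lam * u ^ α + ψ (1+u) := by
    rw [hφ (1+u) (by linarith), show (1:ℝ)+u-1 = u by ring]
  have hsα : t ^ (2*β) * u ^ α = t ^ (2*β-α) * s ^ α := by
    rw [hu, Real.div_rpow hs.le ht.le, Real.rpow_sub ht]
    field_simp
  have htt : t + s = t * (1+u) := by
    rw [hu, mul_comm, add_mul, one_mul, div_mul_cancel₀ s ht.ne']
  have hts2β : (t+s) ^ (2*β) = t ^ (2*β) * (1+u) ^ (2*β) := by
    rw [htt, Real.mul_rpow ht.le (by linarith)]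
  have hmain : Rcov β φ (t+s) (t+s) + Rcov β φ t t - 2 * Rcov β φ t (t+s)
      - 2 * lam * t ^ (2*β-α) * s ^ α = t ^ (2*β) * h u := by
    rw [hA, hB, hC, hφu, hts2β]
    simp only [hh]
    linear_combination 2 * lam * hsα
  have habs : |t ^ (2*β) * h u| = t ^ (2*β) * |h u| := by
    rw [abs_mul, abs_of_nonneg (Real.rpow_nonneg ht.le _)]
  constructor
  · intro _
    rw [hmain, habs]
    calc t ^ (2*β) * |h u| ≤ t ^ (2*β) * (M*u) :=
        mul_le_mul_of_nonneg_left (est1 u hu0 hu1) (Real.rpow_nonneg ht.le _)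
    _ = M * s * t ^ (2*β-1) := by
        rw [Real.rpow_sub ht, Real.rpow_one, hu]
        field_simp
  · intro hα1
    rw [hmain, habs]
    calc t ^ (2*β) * |h u| ≤ t ^ (2*β) * (M*u*u) :=
        mul_le_mul_of_nonneg_left (est2 hα1 u hu0 hu1) (Real.rpow_nonneg ht.le _)
    _ = M * s ^ 2 * t ^ (2*β-2) := by
        have h2 : t ^ ((2:ℝ)) = t ^ (2:ℕ) := by
          rw [← Real.rpow_natCast]; norm_num
        rw [Real.rpow_sub ht, h2, hu]
        field_simp
end
end

section
/- Assume condition (H.1) holds for (β, α, λ, φ). Then there exists a constant C > 0 such that for all s, t with 0 < 2s ≤ t, setting g₂(t,s) := [R(t+s, t) - R(t,t) - R(t+s, t-s) + R(t, t-s)] - (2^α - 2) λ t^{2β-α} s^α, one has |g₂(t,s)| ≤ C s² (t-s)^{2β-2} + C s^{α+1} (t-s)^{2β-α-1}. -/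
noncomputable section

open Filter MeasureTheory

open Set

/-- Mean value inequality, abs version. -/
lemma abs_sub_le_of_deriv_le {f f' : ℝ → ℝ} {a b C : ℝ} (hab : a ≤ b)
    (hf : ∀ x ∈ Icc a b, HasDerivAt f (f' x) x)
    (hb : ∀ x ∈ Ico a b, |f' x| ≤ C) :
    |f b - f a| ≤ C * (b - a) := by
  have := norm_image_sub_le_of_norm_deriv_le_segment'
    (fun x hx => (hf x hx).hasDerivWithinAt) (fun x hx => by simpa using hb x hx)
    b (Set.right_mem_Icc.2 hab)
  simpa [Real.norm_eq_abs] using this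

lemma hasDerivAt_shift_rpow {x a : ℝ} (hx : 1 < x) :
    HasDerivAt (fun y => (y - 1) ^ a) (a * (x - 1) ^ (a - 1)) x := by
  have hne : x - 1 ≠ 0 := by
    have : (0:ℝ) < x - 1 := by linarith
    exact this.ne'
  have h := Real.hasDerivAt_rpow_const (x := x - 1) (p := a) (Or.inl hne)
  have h2 := h.comp x ((hasDerivAt_id x).sub_const 1)
  simpa [Function.comp_def] using h2

lemma mono_comp {a C₀ : ℝ} {g : ℝ → ℝ} (ha0 : 0 < a)
    (hdiff : ∀ x : ℝ, 1 ≤ x → DifferentiableAt ℝ g x)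
    (hbd : ∀ x : ℝ, 1 < x → -(C₀ * (x - 1) ^ (a - 1)) ≤ deriv g x) :
    ∀ p q : ℝ, 1 ≤ p → p ≤ q → g p - g q ≤ (C₀ / a) * ((q - 1) ^ a - (p - 1) ^ a) := by
  intro p q hp hpq
  set F : ℝ → ℝ := fun x => (C₀ / a) * (x - 1) ^ a + g x with hF
  have hmono : MonotoneOn F (Icc p q) := by
    apply monotoneOn_of_deriv_nonneg (convex_Icc p q)
    · intro x hx
      have hx1 : 1 ≤ x := le_trans hp hx.1
      have c1 : ContinuousAt (fun x : ℝ => (C₀ / a) * (x - 1) ^ a) x := by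
        have : ContinuousAt (fun x : ℝ => (x - 1) ^ a) x :=
          ContinuousAt.rpow_const ((continuous_id.sub continuous_const).continuousAt)
            (Or.inr ha0.le)
        exact continuousAt_const.mul this
      exact (c1.add (hdiff x hx1).continuousAt).continuousWithinAt
    · rw [interior_Icc]
      intro x hx
      have hx1 : 1 < x := lt_of_le_of_lt hp hx.1
      exact (((hasDerivAt_shift_rpow hx1).const_mul (C₀ / a)).add
        (hdiff x hx1.le).hasDerivAt).differentiableAt.differentiableWithinAt
    · rw [interior_Icc]
      intro x hx
      have hx1 : 1 < x := lt_of_le_of_lt hp hx.1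
      have hd : HasDerivAt F ((C₀ / a) * (a * (x - 1) ^ (a - 1)) + deriv g x) x :=
        ((hasDerivAt_shift_rpow hx1).const_mul (C₀ / a)).add (hdiff x hx1.le).hasDerivAt
      rw [hd.deriv]
      have he : (C₀ / a) * (a * (x - 1) ^ (a - 1)) = C₀ * (x - 1) ^ (a - 1) := by
        field_simp
      rw [he]
      have := hbd x hx1
      linarith
  have h2 := hmono (Set.left_mem_Icc.2 hpq) (Set.right_mem_Icc.2 hpq) hpq
  simp only [hF] at h2
  linarith

lemma rpow_combine {z : ℝ} (hz : 0 < z) (e1 e2 : ℝ) : z ^ e1 * z ^ e2 = z ^ (e1 + e2) :=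
  (Real.rpow_add hz e1 e2).symm


set_option maxHeartbeats 1000000 in
/-- Lemma 3.2(a) of the paper: under (H.1), for `0 < 2s ≤ t`, the remainder
`g₂(t,s) = E[(X_{t+s}-X_t)(X_t-X_{t-s})] - (2^α - 2)λ t^{2β-α} s^α` satisfies
`|g₂(t,s)| ≤ C s² (t-s)^{2β-2} + C s^{α+1} (t-s)^{2β-α-1}`. -/
theorem stmt_4 (β α lam : ℝ) (φ ψ : ℝ → ℝ)
    (hβ0 : 0 < β) (hβ1 : β < 1) (hα0 : 0 < α) (hα2β : α ≤ 2 * β) (hlam : 0 < lam)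
    (h1 : CondH1 β α lam φ ψ) :
    ∃ C : ℝ, 0 < C ∧ ∀ s t : ℝ, 0 < s → 2 * s ≤ t →
      |(Rcov β φ (t + s) t - Rcov β φ t t - Rcov β φ (t + s) (t - s) + Rcov β φ t (t - s))
          - ((2 : ℝ) ^ α - 2) * lam * t ^ (2 * β - α) * s ^ α|
        ≤ C * s ^ 2 * (t - s) ^ (2 * β - 2) + C * s ^ (α + 1) * (t - s) ^ (2 * β - α - 1) := by
  obtain ⟨hφψ, ⟨U, hUopen, hUsub, hUdiff⟩, C₀, hC₀, hψ1, hψ2, -⟩ := h1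
  have hU : ∀ x : ℝ, 1 ≤ x → DifferentiableAt ℝ ψ x ∧ DifferentiableAt ℝ (deriv ψ) x :=
    fun x hx => hUdiff x (hUsub hx)
  set C₀' : ℝ := C₀ * 3 ^ |α - 1| with hC₀'def
  have hC₀'nn : 0 ≤ C₀' := mul_nonneg hC₀ (Real.rpow_nonneg (by norm_num) _)
  -- uniform bound of deriv ψ on (1, 3]
  have hψ'bd : ∀ x : ℝ, 1 < x → x ≤ 3 → |deriv ψ x| ≤ C₀' := by
    intro x hx1 hx3
    refine le_trans (hψ1 x hx1) (mul_le_mul_of_nonneg_left ?_ hC₀)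
    rcases le_or_gt 0 (α - 1) with h | h
    · rw [abs_of_nonneg h]
      exact Real.rpow_le_rpow (by linarith) hx3 h
    · have h1' : x ^ (α - 1) ≤ 1 := Real.rpow_le_one_of_one_le_of_nonpos hx1.le h.le
      have h2' : (3:ℝ) ^ (0:ℝ) ≤ 3 ^ |α - 1| :=
        Real.rpow_le_rpow_of_exponent_le (by norm_num) (abs_nonneg _)
      rw [Real.rpow_zero] at h2'
      linarith
  -- second derivative bound without the x⁻¹ factor
  have hψ2' : ∀ x : ℝ, 1 < x → |deriv (deriv ψ) x| ≤ C₀ * (x - 1) ^ (α - 1) := by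
    intro x hx
    refine (hψ2 x hx).trans ?_
    have hx0 : (0:ℝ) < x := by linarith
    have hinv : x⁻¹ ≤ 1 := by
      rw [inv_le_one_iff₀]
      right; linarith
    have hrnn : 0 ≤ (x - 1) ^ (α - 1) := Real.rpow_nonneg (by linarith) _
    calc C₀ * x⁻¹ * (x - 1) ^ (α - 1) ≤ C₀ * 1 * (x - 1) ^ (α - 1) := by
          apply mul_le_mul_of_nonneg_right _ hrnn
          exact mul_le_mul_of_nonneg_left hinv hC₀
      _ = C₀ * (x - 1) ^ (α - 1) := by ring
  -- increment bound for deriv ψ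
  have hψ'incr : ∀ p q : ℝ, 1 ≤ p → p ≤ q →
      |deriv ψ q - deriv ψ p| ≤ (C₀ / α) * ((q - 1) ^ α - (p - 1) ^ α) := by
    intro p q hp hpq
    have hlow : ∀ x : ℝ, 1 < x → -(C₀ * (x - 1) ^ (α - 1)) ≤ deriv (deriv ψ) x :=
      fun x hx => (abs_le.mp (hψ2' x hx)).1
    have hA := mono_comp hα0 (fun x hx => (hU x hx).2) hlow p q hp hpq
    have hlow2 : ∀ x : ℝ, 1 < x → -(C₀ * (x - 1) ^ (α - 1)) ≤ deriv (fun y => -deriv ψ y) x := by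
      intro x hx
      rw [deriv.fun_neg]
      have := (abs_le.mp (hψ2' x hx)).2
      linarith
    have hB := mono_comp hα0 (fun x hx => ((hU x hx).2).neg) hlow2 p q hp hpq
    simp only [Pi.neg_apply] at hB
    rw [abs_sub_le_iff]
    constructor
    · linarith
    · linarith
  -- the constant
  have h2α : (1:ℝ) ≤ 2 ^ α := by
    have := Real.rpow_le_rpow_of_exponent_le (x := 2) one_le_two hα0.le (y := 0)
    simpa using this
  refine ⟨(2*β+1)*C₀' + C₀/α * 2^(α+1) + lam*(2^α-1)*(2 * |2*β-α|) + 1, ?_, ?_⟩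
  · have a1 : 0 ≤ (2*β+1)*C₀' := mul_nonneg (by linarith) hC₀'nn
    have a2 : 0 ≤ C₀/α * 2^(α+1) :=
      mul_nonneg (div_nonneg hC₀ hα0.le) (Real.rpow_nonneg (by norm_num) _)
    have a3 : 0 ≤ lam*(2^α-1)*(2 * |2*β-α|) :=
      mul_nonneg (mul_nonneg hlam.le (by linarith)) (by positivity)
    linarith
  intro s t hs hst
  have ht : 0 < t := by linarith
  have hts : 0 < t - s := by linarith
  have ht2 : t ≤ 2 * (t - s) := by linarith
  have h3ts : t + s ≤ 3 * (t - s) := by linarith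
  have hRcov_eq : ∀ a b : ℝ, 0 < b → b ≤ a → Rcov β φ a b = b ^ (2*β) * φ (a/b) := by
    intro a b hb hab
    have ha : 0 < a := lt_of_lt_of_le hb hab
    rw [Rcov, if_neg (by push_neg; exact ⟨ha.ne', hb.ne'⟩), min_eq_right hab, max_eq_left hab]
  -- split the expression
  set Fψ : ℝ → ℝ := fun u => u^(2*β) * (ψ ((t+s)/u) - ψ (t/u)) with hFψdef
  have hsplit : (Rcov β φ (t + s) t - Rcov β φ t t - Rcov β φ (t + s) (t - s)
        + Rcov β φ t (t - s)) - ((2 : ℝ) ^ α - 2) * lam * t ^ (2 * β - α) * s ^ α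
      = (Fψ t - Fψ (t-s)) + lam*(2^α-1)*s^α*((t-s)^(2*β-α) - t^(2*β-α)) := by
    rw [hRcov_eq (t+s) t ht (by linarith), hRcov_eq t t ht le_rfl,
      hRcov_eq (t+s) (t-s) hts (by linarith), hRcov_eq t (t-s) hts (by linarith)]
    rw [hφψ ((t+s)/t) ((one_le_div ht).mpr (by linarith)),
      hφψ (t/t) (by rw [div_self ht.ne']),
      hφψ ((t+s)/(t-s)) ((one_le_div hts).mpr (by linarith)),
      hφψ (t/(t-s)) ((one_le_div hts).mpr (by linarith))]
    have a1 : (t+s)/t - 1 = s/t := by field_simp; ring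
    have a2 : t/t - 1 = 0 := by rw [div_self ht.ne']; ring
    have a3 : (t+s)/(t-s) - 1 = (2*s)/(t-s) := by field_simp; ring
    have a4 : t/(t-s) - 1 = s/(t-s) := by field_simp; ring
    rw [a1, a2, a3, a4, Real.zero_rpow hα0.ne']
    have r1 : (s/t)^α = s^α * (t^α)⁻¹ := by
      rw [Real.div_rpow hs.le ht.le, div_eq_mul_inv]
    have r2 : ((2*s)/(t-s))^α = 2^α * s^α * (((t-s):ℝ)^α)⁻¹ := by
      rw [Real.div_rpow (by positivity) hts.le, Real.mul_rpow (by norm_num) hs.le,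
        div_eq_mul_inv]
    have r3 : (s/(t-s))^α = s^α * (((t-s):ℝ)^α)⁻¹ := by
      rw [Real.div_rpow hs.le hts.le, div_eq_mul_inv]
    have r4 : t^(2*β-α) = t^(2*β) * (t^α)⁻¹ := by
      rw [Real.rpow_sub ht, div_eq_mul_inv]
    have r5 : (t-s)^(2*β-α) = (t-s)^(2*β) * (((t-s):ℝ)^α)⁻¹ := by
      rw [Real.rpow_sub hts, div_eq_mul_inv]
    simp only [hFψdef]
    rw [div_self ht.ne']
    rw [r1, r2, r3, r4, r5]
    ring
  rw [hsplit]
  -- derivative of Fψ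
  set D : ℝ → ℝ := fun u => 2*β*u^(2*β-1) * (ψ ((t+s)/u) - ψ (t/u))
      + u^(2*β) * (deriv ψ ((t+s)/u) * ((t+s) * -(u^2)⁻¹) - deriv ψ (t/u) * (t * -(u^2)⁻¹))
    with hDdef
  have hFd : ∀ u ∈ Set.Icc (t-s) t, HasDerivAt Fψ (D u) u := by
    intro u hu
    have hu0 : 0 < u := lt_of_lt_of_le hts hu.1
    have harg1 : 1 ≤ (t+s)/u := (one_le_div hu0).mpr (by linarith [hu.2])
    have harg2 : 1 ≤ t/u := (one_le_div hu0).mpr hu.2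
    have hinv1 : HasDerivAt (fun y : ℝ => (t+s)/y) ((t+s) * -(u^2)⁻¹) u := by
      simpa [div_eq_mul_inv] using (hasDerivAt_inv hu0.ne').const_mul (t+s)
    have hinv2 : HasDerivAt (fun y : ℝ => t/y) (t * -(u^2)⁻¹) u := by
      simpa [div_eq_mul_inv] using (hasDerivAt_inv hu0.ne').const_mul t
    have hc1 : HasDerivAt (fun y : ℝ => ψ ((t+s)/y))
        (deriv ψ ((t+s)/u) * ((t+s) * -(u^2)⁻¹)) u := by
      have := ((hU _ harg1).1.hasDerivAt).comp u hinv1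
      simpa [Function.comp_def] using this
    have hc2 : HasDerivAt (fun y : ℝ => ψ (t/y))
        (deriv ψ (t/u) * (t * -(u^2)⁻¹)) u := by
      have := ((hU _ harg2).1.hasDerivAt).comp u hinv2
      simpa [Function.comp_def] using this
    have hp : HasDerivAt (fun y : ℝ => y^(2*β)) (2*β*u^(2*β-1)) u :=
      Real.hasDerivAt_rpow_const (Or.inl hu0.ne')
    exact hp.mul (hc1.sub hc2)
  -- bound on D
  have hDb : ∀ u ∈ Set.Ico (t-s) t, |D u|
      ≤ (2*β+1)*C₀'*s*(t-s)^(2*β-2) + (C₀/α * 2^(α+1))*s^α*(t-s)^(2*β-α-1) := by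
    intro u hu
    obtain ⟨hu1, hu2⟩ := hu
    have hu0 : 0 < u := lt_of_lt_of_le hts hu1
    have hx2gt : 1 < t/u := (one_lt_div hu0).mpr hu2
    have hx12 : t/u ≤ (t+s)/u := (div_le_div_iff_of_pos_right hu0).mpr (by linarith)
    have hx13 : (t+s)/u ≤ 3 := (div_le_iff₀ hu0).mpr (by linarith)
    have hx1gt : 1 < (t+s)/u := lt_of_lt_of_le hx2gt hx12
    have hx21 : (t+s)/u - t/u = s/u := by rw [div_sub_div_same]; congr 1; ring
    -- P1
    have P1 : |ψ ((t+s)/u) - ψ (t/u)| ≤ C₀' * (s/u) := by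
      have := abs_sub_le_of_deriv_le (f := ψ) (f' := deriv ψ) (C := C₀') hx12
        (fun y hy => (hU y (le_trans hx2gt.le hy.1)).1.hasDerivAt)
        (fun y hy => hψ'bd y (lt_of_lt_of_le hx2gt hy.1) (le_trans hy.2.le hx13))
      rw [hx21] at this
      exact this
    have P2 : |deriv ψ ((t+s)/u)| ≤ C₀' := hψ'bd _ hx1gt hx13
    have P3 : |deriv ψ ((t+s)/u) - deriv ψ (t/u)|
        ≤ (C₀/α) * ((2*s)^α / (t-s)^α) := by
      refine (hψ'incr (t/u) ((t+s)/u) hx2gt.le hx12).trans ?_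
      have hn2 : (0:ℝ) ≤ t/u - 1 := by linarith
      have hca : 0 ≤ C₀/α := div_nonneg hC₀ hα0.le
      have e1 : (t+s)/u - 1 = (t+s-u)/u := by field_simp
      have e2 : ((t+s)/u - 1)^α ≤ (2*s)^α / (t-s)^α := by
        rw [e1, ← Real.div_rpow (by linarith) hts.le]
        apply Real.rpow_le_rpow (div_nonneg (by linarith) hu0.le) _ hα0.le
        exact div_le_div₀ (by linarith) (by linarith) hts hu1
      have e3 : 0 ≤ (t/u - 1)^α := Real.rpow_nonneg hn2 _
      have := sub_le_self (((t+s)/u - 1)^α) e3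
      apply mul_le_mul_of_nonneg_left _ hca
      linarith
    -- rpow facts
    have q1 : u^(2*β-1) * u⁻¹ = u^(2*β-2) := by
      rw [← Real.rpow_neg_one u, rpow_combine hu0]
      congr 1; ring
    have q2 : u^(2*β) * ((u:ℝ)^2)⁻¹ = u^(2*β-2) := by
      rw [show ((u:ℝ)^2)⁻¹ = u⁻¹ * u⁻¹ by rw [sq, mul_inv], ← Real.rpow_neg_one u,
        ← mul_assoc, rpow_combine hu0, rpow_combine hu0]
      congr 1; ring
    have q3 : u^(2*β-2) ≤ (t-s)^(2*β-2) :=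
      Real.rpow_le_rpow_of_nonpos hts hu1 (by linarith)
    have hw2nn : (0:ℝ) ≤ (t-s)^(2*β-2) := Real.rpow_nonneg hts.le _
    -- bound |A|
    have hAnn : 0 ≤ 2*β*u^(2*β-1) := mul_nonneg (by linarith) (Real.rpow_nonneg hu0.le _)
    have hA : |2*β*u^(2*β-1) * (ψ ((t+s)/u) - ψ (t/u))| ≤ 2*β*C₀'*s*(t-s)^(2*β-2) := by
      rw [abs_mul, abs_of_nonneg hAnn]
      calc 2*β*u^(2*β-1) * |ψ ((t+s)/u) - ψ (t/u)|
          ≤ 2*β*u^(2*β-1) * (C₀' * (s/u)) := mul_le_mul_of_nonneg_left P1 hAnn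
        _ = 2*β*C₀'*s*(u^(2*β-1) * u⁻¹) := by ring
        _ = 2*β*C₀'*s*u^(2*β-2) := by rw [q1]
        _ ≤ 2*β*C₀'*s*(t-s)^(2*β-2) := by
            apply mul_le_mul_of_nonneg_left q3
            exact mul_nonneg (mul_nonneg (by linarith) hC₀'nn) hs.le
    -- bound |B|
    have hXnn : 0 ≤ u^(2*β) * ((u:ℝ)^2)⁻¹ := by positivity
    have hinner : |(t+s) * deriv ψ ((t+s)/u) - t * deriv ψ (t/u)|
        ≤ s*C₀' + t*((C₀/α) * ((2*s)^α / (t-s)^α)) := by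
      have h0 : (t+s) * deriv ψ ((t+s)/u) - t * deriv ψ (t/u)
          = s * deriv ψ ((t+s)/u) + t * (deriv ψ ((t+s)/u) - deriv ψ (t/u)) := by ring
      rw [h0]
      refine (abs_add_le _ _).trans ?_
      rw [abs_mul, abs_mul, abs_of_nonneg hs.le, abs_of_nonneg ht.le]
      exact add_le_add (mul_le_mul_of_nonneg_left P2 hs.le)
        (mul_le_mul_of_nonneg_left P3 ht.le)
    have hB : |u^(2*β) * (deriv ψ ((t+s)/u) * ((t+s) * -(u^2)⁻¹)
          - deriv ψ (t/u) * (t * -(u^2)⁻¹))|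
        ≤ C₀'*s*(t-s)^(2*β-2) + (C₀/α * 2^(α+1))*s^α*(t-s)^(2*β-α-1) := by
      have hBeq : u^(2*β) * (deriv ψ ((t+s)/u) * ((t+s) * -(u^2)⁻¹)
            - deriv ψ (t/u) * (t * -(u^2)⁻¹))
          = -((u^(2*β) * ((u:ℝ)^2)⁻¹) * ((t+s) * deriv ψ ((t+s)/u) - t * deriv ψ (t/u))) := by
        ring
      rw [hBeq, abs_neg, abs_mul, abs_of_nonneg hXnn, q2]
      have hInn : (0:ℝ) ≤ s*C₀' + t*((C₀/α) * ((2*s)^α / (t-s)^α)) := by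
        have : (0:ℝ) ≤ (C₀/α) * ((2*s)^α / (t-s)^α) := by
          apply mul_nonneg (div_nonneg hC₀ hα0.le)
          positivity
        have h2 := mul_nonneg ht.le this
        linarith [mul_nonneg hs.le hC₀'nn]
      calc u^(2*β-2) * |(t+s) * deriv ψ ((t+s)/u) - t * deriv ψ (t/u)|
          ≤ u^(2*β-2) * (s*C₀' + t*((C₀/α) * ((2*s)^α / (t-s)^α))) :=
            mul_le_mul_of_nonneg_left hinner (Real.rpow_nonneg hu0.le _)
        _ ≤ (t-s)^(2*β-2) * (s*C₀' + t*((C₀/α) * ((2*s)^α / (t-s)^α))) :=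
            mul_le_mul_of_nonneg_right q3 hInn
        _ ≤ (t-s)^(2*β-2) * (s*C₀' + (2*(t-s))*((C₀/α) * ((2*s)^α / (t-s)^α))) := by
            have hXnn2 : (0:ℝ) ≤ (C₀/α) * ((2*s)^α / (t-s)^α) := by
              apply mul_nonneg (div_nonneg hC₀ hα0.le); positivity
            apply mul_le_mul_of_nonneg_left _ hw2nn
            have := mul_le_mul_of_nonneg_right ht2 hXnn2
            linarith
        _ = C₀'*s*(t-s)^(2*β-2) + (C₀/α * 2^(α+1))*s^α*(t-s)^(2*β-α-1) := by
            have e4 : (2*s)^α = 2^α * s^α := Real.mul_rpow (by norm_num) hs.le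
            have e5 : (2:ℝ)^(α+1) = 2^α * 2 := Real.rpow_add_one (by norm_num) α
            have e6 : (t-s)^(2*β-2) * (t-s) * ((t-s)^α)⁻¹ = (t-s)^(2*β-α-1) := by
              rw [← Real.rpow_add_one hts.ne' (2*β-2), ← Real.rpow_neg hts.le,
                rpow_combine hts]
              congr 1; ring
            rw [e4, e5, ← e6]
            ring
    have hDu : D u = 2*β*u^(2*β-1) * (ψ ((t+s)/u) - ψ (t/u))
        + u^(2*β) * (deriv ψ ((t+s)/u) * ((t+s) * -(u^2)⁻¹)
          - deriv ψ (t/u) * (t * -(u^2)⁻¹)) := by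
      rw [hDdef]
    rw [hDu]
    refine (abs_add_le _ _).trans ?_
    have := add_le_add hA hB
    nlinarith [this]
    -- MVT for Fψ
  have hFdiff : |Fψ t - Fψ (t-s)|
      ≤ ((2*β+1)*C₀'*s*(t-s)^(2*β-2) + (C₀/α * 2^(α+1))*s^α*(t-s)^(2*β-α-1)) * s := by
    have h := abs_sub_le_of_deriv_le (by linarith : t - s ≤ t) hFd hDb
    rw [show t - (t-s) = s by ring] at h
    exact h
  -- bound for the rpow difference
  have hT1 : |(t-s)^(2*β-α) - t^(2*β-α)| ≤ (|2*β-α| * (2*(t-s)^(2*β-α-1))) * s := by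
    have hub : ∀ x ∈ Set.Ico (t-s) t,
        |(2*β-α) * x^(2*β-α-1)| ≤ |2*β-α| * (2*(t-s)^(2*β-α-1)) := by
      intro x hx
      have hx0 : 0 < x := lt_of_lt_of_le hts hx.1
      rw [abs_mul, abs_of_nonneg (Real.rpow_nonneg hx0.le _)]
      apply mul_le_mul_of_nonneg_left _ (abs_nonneg _)
      rcases le_or_gt 0 (2*β-α-1) with he | he
      · calc x^(2*β-α-1) ≤ (2*(t-s))^(2*β-α-1) :=
            Real.rpow_le_rpow hx0.le (by linarith [hx.2]) he
          _ = 2^(2*β-α-1) * (t-s)^(2*β-α-1) := Real.mul_rpow (by norm_num) hts.le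
          _ ≤ 2 * (t-s)^(2*β-α-1) := by
              have h21 : (2:ℝ)^(2*β-α-1) ≤ 2^(1:ℝ) :=
                Real.rpow_le_rpow_of_exponent_le one_le_two (by linarith)
              rw [Real.rpow_one] at h21
              exact mul_le_mul_of_nonneg_right h21 (Real.rpow_nonneg hts.le _)
      · calc x^(2*β-α-1) ≤ (t-s)^(2*β-α-1) :=
            Real.rpow_le_rpow_of_nonpos hts hx.1 he.le
          _ ≤ 2*(t-s)^(2*β-α-1) := by nlinarith [Real.rpow_nonneg hts.le (2*β-α-1)]
    have h := abs_sub_le_of_deriv_le (f := fun u => u^(2*β-α))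
      (f' := fun u => (2*β-α) * u^(2*β-α-1)) (by linarith : t - s ≤ t)
      (fun x hx => Real.hasDerivAt_rpow_const (Or.inl (lt_of_lt_of_le hts hx.1).ne'))
      hub
    rw [show t - (t-s) = s by ring] at h
    rw [abs_sub_comm] at h
    exact h
  -- assemble everything
  have hYnn : 0 ≤ lam*(2^α-1)*s^α :=
    mul_nonneg (mul_nonneg hlam.le (by linarith)) (Real.rpow_nonneg hs.le _)
  have step1 : |Fψ t - Fψ (t-s) + lam*(2^α-1)*s^α*((t-s)^(2*β-α) - t^(2*β-α))|
      ≤ |Fψ t - Fψ (t-s)| + lam*(2^α-1)*s^α * |(t-s)^(2*β-α) - t^(2*β-α)| := by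
    refine (abs_add_le _ _).trans ?_
    rw [abs_mul, abs_of_nonneg hYnn]
  have step2 := add_le_add hFdiff (mul_le_mul_of_nonneg_left hT1 hYnn)
  have hsan : s^(α+1) = s^α * s := Real.rpow_add_one hs.ne' α
  have pw1 : (0:ℝ) ≤ (t-s)^(2*β-2) := Real.rpow_nonneg hts.le _
  have pw2 : (0:ℝ) ≤ (t-s)^(2*β-α-1) := Real.rpow_nonneg hts.le _
  have psα : (0:ℝ) ≤ s^α := Real.rpow_nonneg hs.le _
  have hK3nn : (0:ℝ) ≤ C₀/α * 2^(α+1) :=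
    mul_nonneg (div_nonneg hC₀ hα0.le) (Real.rpow_nonneg (by norm_num) _)
  have hK2nn : (0:ℝ) ≤ (2*β+1)*C₀' := mul_nonneg (by linarith) hC₀'nn
  have hK4nn : (0:ℝ) ≤ lam*(2^α-1)*(2 * |2*β-α|) :=
    mul_nonneg (mul_nonneg hlam.le (by linarith)) (by positivity)
  have m1 : (0:ℝ) ≤ (s*s)*(t-s)^(2*β-2) := by positivity
  have m2 : (0:ℝ) ≤ (s^α*s)*(t-s)^(2*β-α-1) := by positivity
  calc |Fψ t - Fψ (t-s) + lam*(2^α-1)*s^α*((t-s)^(2*β-α) - t^(2*β-α))|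
      ≤ |Fψ t - Fψ (t-s)| + lam*(2^α-1)*s^α * |(t-s)^(2*β-α) - t^(2*β-α)| := step1
    _ ≤ ((2*β+1)*C₀'*s*(t-s)^(2*β-2) + (C₀/α * 2^(α+1))*s^α*(t-s)^(2*β-α-1)) * s
        + lam*(2^α-1)*s^α * ((|2*β-α| * (2*(t-s)^(2*β-α-1))) * s) := step2
    _ ≤ ((2*β+1)*C₀' + C₀/α * 2^(α+1) + lam*(2^α-1)*(2 * |2*β-α|) + 1) * s ^ 2
          * (t-s)^(2*β-2)
        + ((2*β+1)*C₀' + C₀/α * 2^(α+1) + lam*(2^α-1)*(2 * |2*β-α|) + 1) * s^(α+1)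
          * (t-s)^(2*β-α-1) := by
        rw [hsan, sq]
        nlinarith [mul_nonneg hK3nn m1, mul_nonneg hK4nn m1, mul_nonneg hK2nn m2, m1, m2]
end
end

section
/- Assume condition (H.1) holds for (β, α, λ, φ). Then there exists a constant C > 0 such that for all r, s, t with 0 < 2s ≤ t/3 ≤ r ≤ t - 2s, setting g₃(r,t,s) := [R(t, r) - R(t-s, r) - R(t, r-s) + R(t-s, r-s)] - λ (r-s)^{2β-α} [ (t-r-s)^α + (t-r+s)^α - 2(t-r)^α ], one has |g₃(r,t,s)| ≤ C s² (r-s)^{2β-α-1} (t-r-s)^{α-1} + C s² (r-s)^{2β-2}. -/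
noncomputable section

open Filter MeasureTheory

private lemma rpow_scale {x y K p : ℝ} (hy : 0 < y) (hyx : y ≤ x) (hxK : x ≤ K * y)
    (hK : 1 ≤ K) (hp : p ≤ 1) : x ^ p ≤ K * y ^ p := by
  rcases le_or_gt p 0 with hp0 | hp0
  · calc x ^ p ≤ y ^ p := Real.rpow_le_rpow_of_nonpos hy hyx hp0
      _ ≤ K * y ^ p := le_mul_of_one_le_left (Real.rpow_nonneg hy.le p) hK
  · calc x ^ p ≤ (K * y) ^ p := Real.rpow_le_rpow (by linarith) hxK hp0.le
      _ = K ^ p * y ^ p := Real.mul_rpow (by linarith) hy.le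
      _ ≤ K * y ^ p := by
          have h := Real.rpow_le_rpow_of_exponent_le hK hp
          rw [Real.rpow_one] at h
          exact mul_le_mul_of_nonneg_right h (Real.rpow_nonneg hy.le p)

private lemma rpow_diff_bound {a b p M : ℝ} (ha : 0 < a) (hab : a ≤ b)
    (hM : ∀ u : ℝ, a ≤ u → u ≤ b → |p| * u ^ (p - 1) ≤ M) :
    |b ^ p - a ^ p| ≤ M * (b - a) := by
  have h := Convex.norm_image_sub_le_of_norm_hasDerivWithin_le
    (f := fun x : ℝ => x ^ p) (f' := fun x : ℝ => p * x ^ (p - 1)) (s := Set.Icc a b) (C := M)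
    (fun x hx => (Real.hasDerivAt_rpow_const
      (Or.inl (ne_of_gt (lt_of_lt_of_le ha hx.1)))).hasDerivWithinAt)
    (fun x hx => by
      have hx0 : 0 < x := lt_of_lt_of_le ha hx.1
      have he : ‖p * x ^ (p - 1)‖ = |p| * x ^ (p - 1) := by
        rw [norm_mul, Real.norm_eq_abs, Real.norm_eq_abs,
          abs_of_nonneg (Real.rpow_nonneg hx0.le _)]
      rw [he]; exact hM x hx.1 hx.2)
    (convex_Icc a b) ⟨le_refl a, hab⟩ ⟨hab, le_refl b⟩
  rw [Real.norm_eq_abs, Real.norm_eq_abs, abs_of_nonneg (by linarith : (0:ℝ) ≤ b - a)] at h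
  exact h

private lemma Rcov_eq {β : ℝ} {φ : ℝ → ℝ} {a b : ℝ} (hb : 0 < b) (hba : b ≤ a) :
    Rcov β φ a b = b ^ (2 * β) * φ (a / b) := by
  have ha : 0 < a := lt_of_lt_of_le hb hba
  rw [Rcov, if_neg (by push_neg; exact ⟨ne_of_gt ha, ne_of_gt hb⟩),
    min_eq_right hba, max_eq_left hba]

private lemma key_phi {α lam q : ℝ} {φ ψ : ℝ → ℝ}
    (hφψ : ∀ x : ℝ, 1 ≤ x → φ x = -lam * (x - 1) ^ α + ψ x)
    {a b : ℝ} (hb : 0 < b) (hab : b ≤ a) :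
    b ^ q * φ (a / b) = -lam * (b ^ (q - α) * (a - b) ^ α) + b ^ q * ψ (a / b) := by
  rw [hφψ _ ((one_le_div hb).2 hab)]
  have h1 : a / b - 1 = (a - b) / b := by field_simp
  rw [h1, Real.div_rpow (by linarith) hb.le, Real.rpow_sub hb]
  have hbα : (0:ℝ) < b ^ α := Real.rpow_pos_of_pos hb α
  field_simp

private lemma kderiv {β : ℝ} {ψ : ℝ → ℝ} {u v : ℝ} (hu : 0 < u)
    (hd1 : DifferentiableAt ℝ (deriv ψ) (v / u)) :
    HasDerivAt (fun u : ℝ => u ^ (2 * β) * (deriv ψ (v / u) * (1 / u)))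
      (u ^ (2 * β) * ((2 * β - 1) * deriv ψ (v / u) / u ^ 2
        - v * deriv (deriv ψ) (v / u) / u ^ 3)) u := by
  have hv : HasDerivAt (fun y : ℝ => v / y) (-(v / u ^ 2)) u := by
    have h := (hasDerivAt_const u v).div (hasDerivAt_id u) (ne_of_gt hu)
    refine h.congr_deriv ?_
    simp only [id]
    field_simp
    ring
  have h2 : HasDerivAt (fun y : ℝ => deriv ψ (v / y))
      (deriv (deriv ψ) (v / u) * -(v / u ^ 2)) u :=
    HasDerivAt.comp u hd1.hasDerivAt hv
  have h3 : HasDerivAt (fun y : ℝ => 1 / y) (-(1 / u ^ 2)) u := by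
    simpa [one_div] using hasDerivAt_inv (ne_of_gt hu)
  have h1 : HasDerivAt (fun y : ℝ => y ^ (2 * β)) (2 * β * u ^ (2 * β - 1)) u :=
    Real.hasDerivAt_rpow_const (Or.inl (ne_of_gt hu))
  have h := h1.mul (h2.mul h3)
  refine h.congr_deriv ?_
  simp only [Pi.mul_apply]
  have hpow : u ^ (2 * β - 1) = u ^ (2 * β) / u := by
    rw [Real.rpow_sub hu, Real.rpow_one]
  rw [hpow]
  field_simp
  ring

private lemma kbound {β α C₀ : ℝ} {ψ : ℝ → ℝ} (hβ0 : 0 < β) (hC₀ : 0 ≤ C₀)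
    (hψ1 : ∀ x : ℝ, 1 < x → |deriv ψ x| ≤ C₀ * x ^ (α - 1))
    (hψ2 : ∀ x : ℝ, 1 < x → |deriv (deriv ψ) x| ≤ C₀ * x⁻¹ * (x - 1) ^ (α - 1))
    {u v : ℝ} (hu : 0 < u) (huv : u < v) :
    |u ^ (2 * β) * ((2 * β - 1) * deriv ψ (v / u) / u ^ 2
        - v * deriv (deriv ψ) (v / u) / u ^ 3)|
      ≤ C₀ * (2 * β + 1) * (u ^ (2 * β - α - 1) * v ^ (α - 1))
        + C₀ * (u ^ (2 * β - α - 1) * (v - u) ^ (α - 1)) := by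
  have hv0 : 0 < v := lt_trans hu huv
  have hx : 1 < v / u := (one_lt_div hu).2 huv
  have huq : (0:ℝ) ≤ u ^ (2 * β) := (Real.rpow_pos_of_pos hu _).le
  have hup : (0:ℝ) < u ^ (α - 1) := Real.rpow_pos_of_pos hu _
  have hPb : |deriv ψ (v / u)| ≤ C₀ * (v ^ (α - 1) / u ^ (α - 1)) := by
    rw [← Real.div_rpow hv0.le hu.le]; exact hψ1 _ hx
  have hQb : |deriv (deriv ψ) (v / u)| ≤ C₀ * (u / v) * ((v - u) ^ (α - 1) / u ^ (α - 1)) := by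
    have h1 : (v / u)⁻¹ = u / v := by rw [inv_div]
    have h2 : v / u - 1 = (v - u) / u := by field_simp
    rw [← Real.div_rpow (by linarith) hu.le, ← h2, ← h1]
    exact hψ2 _ hx
  have habs : |u ^ (2 * β) * ((2 * β - 1) * deriv ψ (v / u) / u ^ 2
        - v * deriv (deriv ψ) (v / u) / u ^ 3)|
      ≤ u ^ (2 * β) * ((2 * β + 1) * |deriv ψ (v / u)| / u ^ 2
        + v * |deriv (deriv ψ) (v / u)| / u ^ 3) := by
    rw [abs_mul, abs_of_nonneg huq]
    refine mul_le_mul_of_nonneg_left (le_trans (abs_sub _ _) ?_) huq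
    rw [abs_div, abs_div, abs_mul, abs_mul, abs_of_pos (pow_pos hu 2),
      abs_of_pos (pow_pos hu 3), abs_of_pos hv0]
    gcongr
    exact abs_le.2 ⟨by linarith, by linarith⟩
  have hstep : u ^ (2 * β) * ((2 * β + 1) * |deriv ψ (v / u)| / u ^ 2
        + v * |deriv (deriv ψ) (v / u)| / u ^ 3)
      ≤ u ^ (2 * β) * ((2 * β + 1) * (C₀ * (v ^ (α - 1) / u ^ (α - 1))) / u ^ 2
        + v * (C₀ * (u / v) * ((v - u) ^ (α - 1) / u ^ (α - 1))) / u ^ 3) := by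
    gcongr
  have hkey : u ^ (2 * β - α - 1) = u ^ (2 * β) / u ^ (α - 1) / u ^ 2 := by
    rw [show (2 * β - α - 1 : ℝ) = (2 * β - (α - 1)) - ((2:ℕ):ℝ) by push_cast; ring,
      Real.rpow_sub hu, Real.rpow_sub hu, Real.rpow_natCast]
  have heq : u ^ (2 * β) * ((2 * β + 1) * (C₀ * (v ^ (α - 1) / u ^ (α - 1))) / u ^ 2
        + v * (C₀ * (u / v) * ((v - u) ^ (α - 1) / u ^ (α - 1))) / u ^ 3)
      = C₀ * (2 * β + 1) * (u ^ (2 * β - α - 1) * v ^ (α - 1))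
        + C₀ * (u ^ (2 * β - α - 1) * (v - u) ^ (α - 1)) := by
    rw [hkey]
    field_simp
  exact le_trans habs (le_trans hstep (le_of_eq heq))


set_option maxHeartbeats 2000000 in
/-- Lemma 3.2(b) of the paper: under (H.1), for `0 < 2s ≤ t/3 ≤ r ≤ t - 2s`, the remainder
`g₃(r,t,s) = E[(X_t-X_{t-s})(X_r-X_{r-s})] - λ(r-s)^{2β-α}[(t-r-s)^α+(t-r+s)^α-2(t-r)^α]`
satisfies `|g₃(r,t,s)| ≤ C s² (r-s)^{2β-α-1}(t-r-s)^{α-1} + C s² (r-s)^{2β-2}`. -/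
theorem stmt_5 (β α lam : ℝ) (φ ψ : ℝ → ℝ)
    (hβ0 : 0 < β) (hβ1 : β < 1) (hα0 : 0 < α) (hα2β : α ≤ 2 * β) (hlam : 0 < lam)
    (h1 : CondH1 β α lam φ ψ) :
    ∃ C : ℝ, 0 < C ∧ ∀ r s t : ℝ, 0 < s → 2 * s ≤ t / 3 → t / 3 ≤ r → r ≤ t - 2 * s →
      |(Rcov β φ t r - Rcov β φ (t - s) r - Rcov β φ t (r - s) + Rcov β φ (t - s) (r - s))
          - lam * (r - s) ^ (2 * β - α) *
            ((t - r - s) ^ α + (t - r + s) ^ α - 2 * (t - r) ^ α)|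
        ≤ C * s ^ 2 * (r - s) ^ (2 * β - α - 1) * (t - r - s) ^ (α - 1)
          + C * s ^ 2 * (r - s) ^ (2 * β - 2) := by
  obtain ⟨hφψ, ⟨U, hUo, hUsub, hUdiff⟩, C₀, hC₀, hψ1, hψ2, -⟩ := h1
  have hdψ : ∀ x : ℝ, 1 < x → DifferentiableAt ℝ ψ x ∧ DifferentiableAt ℝ (deriv ψ) x :=
    fun x hx => hUdiff x (hUsub (le_of_lt hx))
  refine ⟨lam * (8 * β * α) + 12 * C₀ * (2 * β + 1) + 1, ?_, ?_⟩
  · nlinarith [mul_pos (mul_pos hlam hβ0) hα0, mul_nonneg hC₀ hβ0.le]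
  intro r s t hs h2s h3r hrtt
  set C : ℝ := lam * (8 * β * α) + 12 * C₀ * (2 * β + 1) + 1 with hCdef
  have ht0 : 0 < t := by linarith
  have hr0 : 0 < r := by linarith
  have hrs0 : 0 < r - s := by linarith
  have htrs0 : 0 < t - r - s := by linarith
  have hrts : r < t - s := by linarith
  have hrt : r ≤ t := by linarith
  have hr2rs : r ≤ 2 * (r - s) := by linarith
  have ht6rs : t ≤ 6 * (r - s) := by linarith
  have hexp1 : 2 * β - α - 1 ≤ 1 := by linarith
  have hexpα : α - 1 ≤ 1 := by linarith
  have hA0 : (0:ℝ) ≤ (r - s) ^ (2 * β - α - 1) := Real.rpow_nonneg hrs0.le _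
  have hA0' : (0:ℝ) ≤ (r - s) ^ (α - 1) := Real.rpow_nonneg hrs0.le _
  have hW0 : (0:ℝ) ≤ (t - r - s) ^ (α - 1) := Real.rpow_nonneg htrs0.le _
  have hT20 : (0:ℝ) ≤ (r - s) ^ (2 * β - 2) := Real.rpow_nonneg hrs0.le _
  -- rewrite the covariance combination
  have K1 := key_phi (q := 2 * β) hφψ hr0 hrt
  have K2 := key_phi (q := 2 * β) hφψ hr0 hrts.le
  have K3 := key_phi (q := 2 * β) hφψ hrs0 (by linarith : r - s ≤ t)
  have K4 := key_phi (q := 2 * β) hφψ hrs0 (by linarith : r - s ≤ t - s)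
  rw [show t - s - r = t - r - s by ring] at K2
  rw [show t - (r - s) = t - r + s by ring] at K3
  rw [show t - s - (r - s) = t - r by ring] at K4
  have hEeq : (Rcov β φ t r - Rcov β φ (t - s) r - Rcov β φ t (r - s)
        + Rcov β φ (t - s) (r - s))
      - lam * (r - s) ^ (2 * β - α) *
        ((t - r - s) ^ α + (t - r + s) ^ α - 2 * (t - r) ^ α)
    = (-lam) * ((r ^ (2 * β - α) - (r - s) ^ (2 * β - α))
        * ((t - r) ^ α - (t - r - s) ^ α))
      + ((r ^ (2 * β) * ψ (t / r) - (r - s) ^ (2 * β) * ψ (t / (r - s)))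
        - (r ^ (2 * β) * ψ ((t - s) / r) - (r - s) ^ (2 * β) * ψ ((t - s) / (r - s)))) := by
    rw [Rcov_eq hr0 hrt, Rcov_eq hr0 hrts.le, Rcov_eq hrs0 (by linarith : r - s ≤ t),
      Rcov_eq hrs0 (by linarith : r - s ≤ t - s), K1, K2, K3, K4]
    ring
  -- bound on the first (lam) term
  have hD1 : |r ^ (2 * β - α) - (r - s) ^ (2 * β - α)|
      ≤ ((2 * β - α) * (2 * (r - s) ^ (2 * β - α - 1))) * s := by
    have h := rpow_diff_bound (p := 2 * β - α)
      (M := (2 * β - α) * (2 * (r - s) ^ (2 * β - α - 1))) hrs0 (by linarith : r - s ≤ r)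
      (fun u hu1 hu2 => by
        rw [abs_of_nonneg (by linarith : (0:ℝ) ≤ 2 * β - α)]
        have hsc := rpow_scale (x := u) (y := r - s) (K := 2) (p := 2 * β - α - 1)
          hrs0 hu1 (by linarith) one_le_two hexp1
        exact mul_le_mul_of_nonneg_left hsc (by linarith))
    rw [show r - (r - s) = s by ring] at h
    exact h
  have hD2 : |(t - r) ^ α - (t - r - s) ^ α|
      ≤ (α * (2 * (t - r - s) ^ (α - 1))) * s := by
    have h := rpow_diff_bound (p := α)
      (M := α * (2 * (t - r - s) ^ (α - 1))) htrs0 (by linarith : t - r - s ≤ t - r)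
      (fun u hu1 hu2 => by
        rw [abs_of_nonneg hα0.le]
        have hsc := rpow_scale (x := u) (y := t - r - s) (K := 2) (p := α - 1)
          htrs0 hu1 (by linarith) one_le_two hexpα
        exact mul_le_mul_of_nonneg_left hsc hα0.le)
    rw [show t - r - (t - r - s) = s by ring] at h
    exact h
  -- bound on the ψ part via two applications of the mean value inequality
  set MK : ℝ := C₀ * (2 * β + 1) * ((2 * (r - s) ^ (2 * β - α - 1)) * (6 * (r - s) ^ (α - 1)))
      + C₀ * ((2 * (r - s) ^ (2 * β - α - 1)) * (3 * (t - r - s) ^ (α - 1))) with hMKdef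
  have hGd : ∀ v ∈ Set.Icc (t - s) t,
      ‖(r ^ (2 * β) * (deriv ψ (v / r) * (1 / r))
        - (r - s) ^ (2 * β) * (deriv ψ (v / (r - s)) * (1 / (r - s))))‖ ≤ MK * s := by
    intro v hv
    obtain ⟨hv1, hv2⟩ := hv
    have hrv : r < v := by linarith
    have h := Convex.norm_image_sub_le_of_norm_hasDerivWithin_le
      (f := fun u : ℝ => u ^ (2 * β) * (deriv ψ (v / u) * (1 / u)))
      (f' := fun u : ℝ => u ^ (2 * β) * ((2 * β - 1) * deriv ψ (v / u) / u ^ 2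
        - v * deriv (deriv ψ) (v / u) / u ^ 3))
      (s := Set.Icc (r - s) r) (C := MK)
      (fun u hu => by
        have hu0 : 0 < u := lt_of_lt_of_le hrs0 hu.1
        have huv : u < v := by have := hu.2; linarith
        exact (kderiv hu0 (hdψ _ ((one_lt_div hu0).2 huv)).2).hasDerivWithinAt)
      (fun u hu => by
        have hu0 : 0 < u := lt_of_lt_of_le hrs0 hu.1
        have huv : u < v := by have := hu.2; linarith
        rw [Real.norm_eq_abs]
        refine le_trans (kbound hβ0 hC₀ hψ1 hψ2 hu0 huv) ?_
        have s1 : u ^ (2 * β - α - 1) ≤ 2 * (r - s) ^ (2 * β - α - 1) :=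
          rpow_scale hrs0 hu.1 (by linarith [hu.2]) one_le_two hexp1
        have s2 : v ^ (α - 1) ≤ 6 * (r - s) ^ (α - 1) :=
          rpow_scale hrs0 (by linarith) (by linarith) (by norm_num) hexpα
        have s3 : (v - u) ^ (α - 1) ≤ 3 * (t - r - s) ^ (α - 1) :=
          rpow_scale htrs0 (by linarith [hu.2]) (by linarith [hu.1]) (by norm_num) hexpα
        have h1 : u ^ (2 * β - α - 1) * v ^ (α - 1)
            ≤ (2 * (r - s) ^ (2 * β - α - 1)) * (6 * (r - s) ^ (α - 1)) :=
          mul_le_mul s1 s2 (Real.rpow_nonneg (by linarith) _) (by linarith)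
        have h2 : u ^ (2 * β - α - 1) * (v - u) ^ (α - 1)
            ≤ (2 * (r - s) ^ (2 * β - α - 1)) * (3 * (t - r - s) ^ (α - 1)) :=
          mul_le_mul s1 s3 (Real.rpow_nonneg (by linarith) _) (by linarith)
        rw [hMKdef]
        have hb1 : (0:ℝ) ≤ C₀ * (2 * β + 1) := by nlinarith
        exact add_le_add (mul_le_mul_of_nonneg_left h1 hb1)
          (mul_le_mul_of_nonneg_left h2 hC₀))
      (convex_Icc _ _) ⟨le_refl (r - s), by linarith⟩ ⟨by linarith, le_refl r⟩
    rw [show r - (r - s) = s by ring] at h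
    simp only [Real.norm_eq_abs] at h ⊢
    rw [abs_of_pos hs] at h
    simpa using h
  have hB : ‖((r ^ (2 * β) * ψ (t / r) - (r - s) ^ (2 * β) * ψ (t / (r - s)))
        - (r ^ (2 * β) * ψ ((t - s) / r) - (r - s) ^ (2 * β) * ψ ((t - s) / (r - s))))‖
      ≤ (MK * s) * s := by
    have h := Convex.norm_image_sub_le_of_norm_hasDerivWithin_le
      (f := fun v : ℝ => r ^ (2 * β) * ψ (v / r) - (r - s) ^ (2 * β) * ψ (v / (r - s)))
      (f' := fun v : ℝ => r ^ (2 * β) * (deriv ψ (v / r) * (1 / r))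
        - (r - s) ^ (2 * β) * (deriv ψ (v / (r - s)) * (1 / (r - s))))
      (s := Set.Icc (t - s) t) (C := MK * s)
      (fun v hv => by
        have hv1 : 1 < v / r := (one_lt_div hr0).2 (by linarith [hv.1])
        have hv2 : 1 < v / (r - s) := (one_lt_div hrs0).2 (by linarith [hv.1])
        have hdr : HasDerivAt (fun y : ℝ => y / r) (1 / r) v := by
          simpa using (hasDerivAt_id v).div_const r
        have hdrs : HasDerivAt (fun y : ℝ => y / (r - s)) (1 / (r - s)) v := by
          simpa using (hasDerivAt_id v).div_const (r - s)
        have hc1 : HasDerivAt (fun y : ℝ => ψ (y / r)) (deriv ψ (v / r) * (1 / r)) v :=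
          HasDerivAt.comp v (hdψ _ hv1).1.hasDerivAt hdr
        have hc2 : HasDerivAt (fun y : ℝ => ψ (y / (r - s)))
            (deriv ψ (v / (r - s)) * (1 / (r - s))) v :=
          HasDerivAt.comp v (hdψ _ hv2).1.hasDerivAt hdrs
        exact ((hc1.const_mul _).sub (hc2.const_mul _)).hasDerivWithinAt)
      (fun v hv => hGd v hv)
      (convex_Icc _ _) ⟨le_refl (t - s), by linarith⟩ ⟨by linarith, le_refl t⟩
    rw [show t - (t - s) = s by ring] at h
    simp only [Real.norm_eq_abs] at h ⊢
    rw [abs_of_pos hs] at h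
    simpa using h
  rw [Real.norm_eq_abs] at hB
  -- assemble
  have hXab : |(-lam) * ((r ^ (2 * β - α) - (r - s) ^ (2 * β - α))
        * ((t - r) ^ α - (t - r - s) ^ α))|
      = lam * (|r ^ (2 * β - α) - (r - s) ^ (2 * β - α)|
        * |(t - r) ^ α - (t - r - s) ^ α|) := by
    rw [abs_mul, abs_neg, abs_of_pos hlam, abs_mul]
  have hX : lam * (|r ^ (2 * β - α) - (r - s) ^ (2 * β - α)|
        * |(t - r) ^ α - (t - r - s) ^ α|)
      ≤ lam * ((((2 * β - α) * (2 * (r - s) ^ (2 * β - α - 1))) * s)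
        * ((α * (2 * (t - r - s) ^ (α - 1))) * s)) := by
    refine mul_le_mul_of_nonneg_left ?_ hlam.le
    exact mul_le_mul hD1 hD2 (abs_nonneg _)
      (mul_nonneg (mul_nonneg (by linarith) (by linarith)) hs.le)
  have hT2 : (r - s) ^ (2 * β - α - 1) * (r - s) ^ (α - 1) = (r - s) ^ (2 * β - 2) := by
    rw [← Real.rpow_add hrs0, show (2 * β - α - 1) + (α - 1) = 2 * β - 2 by ring]
  have hexpand : lam * ((((2 * β - α) * (2 * (r - s) ^ (2 * β - α - 1))) * s)
        * ((α * (2 * (t - r - s) ^ (α - 1))) * s)) + (MK * s) * s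
      = (4 * lam * (2 * β - α) * α + 6 * C₀)
          * (s ^ 2 * ((r - s) ^ (2 * β - α - 1) * (t - r - s) ^ (α - 1)))
        + (12 * C₀ * (2 * β + 1))
          * (s ^ 2 * ((r - s) ^ (2 * β - α - 1) * (r - s) ^ (α - 1))) := by
    rw [hMKdef]; ring
  rw [hT2] at hexpand
  have hn1 : (0:ℝ) ≤ s ^ 2 * ((r - s) ^ (2 * β - α - 1) * (t - r - s) ^ (α - 1)) :=
    mul_nonneg (sq_nonneg s) (mul_nonneg hA0 hW0)
  have hn2 : (0:ℝ) ≤ s ^ 2 * (r - s) ^ (2 * β - 2) :=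
    mul_nonneg (sq_nonneg s) hT20
  have hg1 : 4 * lam * (2 * β - α) * α + 6 * C₀ ≤ C := by
    rw [hCdef]
    nlinarith [mul_nonneg (mul_nonneg hlam.le hα0.le) hα0.le, mul_nonneg hC₀ hβ0.le]
  have hg2 : 12 * C₀ * (2 * β + 1) ≤ C := by
    rw [hCdef]
    nlinarith [mul_pos (mul_pos hlam hβ0) hα0]
  calc |(Rcov β φ t r - Rcov β φ (t - s) r - Rcov β φ t (r - s) + Rcov β φ (t - s) (r - s))
          - lam * (r - s) ^ (2 * β - α) *
            ((t - r - s) ^ α + (t - r + s) ^ α - 2 * (t - r) ^ α)|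
      = |(-lam) * ((r ^ (2 * β - α) - (r - s) ^ (2 * β - α))
          * ((t - r) ^ α - (t - r - s) ^ α))
        + ((r ^ (2 * β) * ψ (t / r) - (r - s) ^ (2 * β) * ψ (t / (r - s)))
          - (r ^ (2 * β) * ψ ((t - s) / r) - (r - s) ^ (2 * β) * ψ ((t - s) / (r - s))))| := by
        rw [hEeq]
    _ ≤ |(-lam) * ((r ^ (2 * β - α) - (r - s) ^ (2 * β - α))
          * ((t - r) ^ α - (t - r - s) ^ α))|
        + |((r ^ (2 * β) * ψ (t / r) - (r - s) ^ (2 * β) * ψ (t / (r - s)))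
          - (r ^ (2 * β) * ψ ((t - s) / r) - (r - s) ^ (2 * β) * ψ ((t - s) / (r - s))))| :=
        abs_add_le _ _
    _ ≤ lam * ((((2 * β - α) * (2 * (r - s) ^ (2 * β - α - 1))) * s)
          * ((α * (2 * (t - r - s) ^ (α - 1))) * s)) + (MK * s) * s := by
        rw [hXab]; exact add_le_add hX hB
    _ = (4 * lam * (2 * β - α) * α + 6 * C₀)
          * (s ^ 2 * ((r - s) ^ (2 * β - α - 1) * (t - r - s) ^ (α - 1)))
        + (12 * C₀ * (2 * β + 1)) * (s ^ 2 * (r - s) ^ (2 * β - 2)) := hexpand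
    _ ≤ C * (s ^ 2 * ((r - s) ^ (2 * β - α - 1) * (t - r - s) ^ (α - 1)))
        + C * (s ^ 2 * (r - s) ^ (2 * β - 2)) :=
        add_le_add (mul_le_mul_of_nonneg_right hg1 hn1) (mul_le_mul_of_nonneg_right hg2 hn2)
    _ = C * s ^ 2 * (r - s) ^ (2 * β - α - 1) * (t - r - s) ^ (α - 1)
        + C * s ^ 2 * (r - s) ^ (2 * β - 2) := by ring
end
end

section
/- Assume conditions (H.1) and (H.2) hold for (β, α, λ, φ). Then there exists a constant C > 0 such that for all integers j, k ≥ 1 with 3k ≤ j: |r(j,k)| ≤ C k^{2β+ν-2} (j-k)^{-ν} if α < 1, and |r(j,k)| ≤ C k^{2β-α} (j-k)^{α-2} if α ≥ 1. (Equivalently, by the homogeneity R(as,at) = a^{2β} R(s,t), for every n the increment covariance R((j+1)/n,(k+1)/n) - R(j/n,(k+1)/n) - R((j+1)/n,k/n) + R(j/n,k/n) is bounded by C n^{-2β} k^{2β+ν-2}(j-k)^{-ν} when α < 1 and by C n^{-2β} k^{2β-α}(j-k)^{α-2} when α ≥ 1.) -/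
set_option maxHeartbeats 1000000


noncomputable section

open Filter MeasureTheory

lemma aux_rpow_four (e x y : ℝ) (he1 : -2 ≤ e) (he2 : e ≤ 2) (hy : 0 < y)
    (hxy : y ≤ x) (hx2 : x ≤ 2 * y) : x ^ e ≤ 4 * y ^ e := by
  rcases le_or_gt 0 e with he | he
  · calc x ^ e ≤ (2 * y) ^ e := Real.rpow_le_rpow (by linarith) hx2 he
      _ = 2 ^ e * y ^ e := Real.mul_rpow (by norm_num) hy.le
      _ ≤ 4 * y ^ e := by
          have h2 : (2:ℝ) ^ e ≤ 2 ^ (2:ℝ) :=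
            Real.rpow_le_rpow_of_exponent_le one_le_two he2
          have : (2:ℝ) ^ (2:ℝ) = 4 := by
            rw [show (2:ℝ) = ((2:ℕ):ℝ) by norm_num, Real.rpow_natCast]; norm_num
          nlinarith [Real.rpow_pos_of_pos hy e]
  · have h1 : x ^ e ≤ y ^ e := Real.rpow_le_rpow_of_nonpos hy hxy he.le
    have h2 : 0 < y ^ e := Real.rpow_pos_of_pos hy e
    linarith

lemma aux_rpow_four' (p x y : ℝ) (hp1 : -2 ≤ p) (hp2 : p ≤ 0) (hy : 0 < y)
    (h : y ≤ 2 * x) : x ^ p ≤ 4 * y ^ p := by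
  have hx : 0 < x := by linarith
  have h1 : x ^ p ≤ (y / 2) ^ p :=
    Real.rpow_le_rpow_of_nonpos (by linarith) (by linarith) hp2
  have h2 : (y / 2) ^ p = y ^ p / 2 ^ p := Real.div_rpow hy.le (by norm_num : (0:ℝ) ≤ 2) p
  have h3 : (2:ℝ) ^ (-p) ≤ 4 := by
    have : (2:ℝ) ^ (-p) ≤ 2 ^ (2:ℝ) :=
      Real.rpow_le_rpow_of_exponent_le one_le_two (by linarith)
    have h4 : (2:ℝ) ^ (2:ℝ) = 4 := by
      rw [show (2:ℝ) = ((2:ℕ):ℝ) by norm_num, Real.rpow_natCast]; norm_num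
    linarith
  have h5 : y ^ p / 2 ^ p = y ^ p * 2 ^ (-p) := by
    rw [Real.rpow_neg (by norm_num : (0:ℝ) ≤ 2), div_eq_mul_inv]
  have h6 : 0 < y ^ p := Real.rpow_pos_of_pos hy p
  calc x ^ p ≤ y ^ p * 2 ^ (-p) := by rw [← h5, ← h2]; exact h1
    _ ≤ 4 * y ^ p := by nlinarith




lemma aux_core (β C₁ p : ℝ) (φ : ℝ → ℝ) (hβ0 : 0 < β) (hβ1 : β < 1) (hC₁ : 0 < C₁)
    (hp1 : -2 ≤ p) (hp2 : p ≤ 0)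
    (hφd : ∀ x : ℝ, 1 < x → DifferentiableAt ℝ φ x)
    (hφ'd : ∀ x : ℝ, 1 < x → DifferentiableAt ℝ (deriv φ) x)
    (hb1 : ∀ x : ℝ, 2 ≤ x → |deriv φ x| ≤ C₁ * (x - 1) ^ p)
    (hb2 : ∀ x : ℝ, 2 ≤ x → |deriv (deriv φ) x| ≤ C₁ * (x - 1) ^ (p - 1))
    (j k : ℕ) (hk : 1 ≤ k) (hj2 : 2 * k + 2 ≤ j) :
    |rincr β φ j k| ≤ 48 * C₁ * (k : ℝ) ^ (2 * β - 2 - p) * ((j : ℝ) - (k : ℝ)) ^ p := by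
  have hK1 : (1 : ℝ) ≤ (k : ℝ) := by exact_mod_cast hk
  have hJ2 : 2 * (k : ℝ) + 2 ≤ (j : ℝ) := by exact_mod_cast hj2
  set K : ℝ := (k : ℝ) with hKdef
  set J : ℝ := (j : ℝ) with hJdef
  have hK0 : (0 : ℝ) < K := by linarith
  have hK10 : (0 : ℝ) < K + 1 := by linarith
  -- derivative of F
  have hterm : ∀ c s : ℝ, 0 < c → 1 < s / c →
      HasDerivAt (fun s => φ (s / c)) (deriv φ (s / c) * (1 / c)) s := by
    intro c s hc hsc
    have h1 : HasDerivAt (fun y : ℝ => y / c) (1 / c) s := (hasDerivAt_id s).div_const c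
    exact ((hφd _ hsc).hasDerivAt).comp s h1
  have hFd : ∀ s ∈ Set.Icc J (J + 1),
      HasDerivAt (fun s => (K+1) ^ (2*β) * φ (s/(K+1)) - K ^ (2*β) * φ (s/K))
        ((K+1) ^ (2*β) * (deriv φ (s/(K+1)) * (1/(K+1))) - K ^ (2*β) * (deriv φ (s/K) * (1/K))) s := by
    intro s hs
    have hs1 : 1 < s / (K + 1) := (one_lt_div hK10).mpr (by linarith [hs.1])
    have hs2 : 1 < s / K := (one_lt_div hK0).mpr (by linarith [hs.1])
    exact ((hterm (K+1) s hK10 hs1).const_mul _).sub ((hterm K s hK0 hs2).const_mul _)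
  obtain ⟨ξ, hξ, hξeq⟩ := exists_hasDerivAt_eq_slope
    (fun s => (K+1) ^ (2*β) * φ (s/(K+1)) - K ^ (2*β) * φ (s/K))
    (fun s => (K+1) ^ (2*β) * (deriv φ (s/(K+1)) * (1/(K+1))) - K ^ (2*β) * (deriv φ (s/K) * (1/K)))
    (by linarith : J < J + 1)
    (fun s hs => (hFd s hs).continuousAt.continuousWithinAt)
    (fun s hs => hFd s (Set.Ioo_subset_Icc_self hs))
  simp only [add_sub_cancel_left, div_one] at hξeq
  -- rincr equals F (J+1) - F J
  have hne : ∀ a b : ℝ, 0 < a → 0 < b → b ≤ a → Rcov β φ a b = b ^ (2*β) * φ (a / b) := by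
    intro a b ha hb hba
    rw [Rcov, if_neg (by push_neg; exact ⟨ne_of_gt ha, ne_of_gt hb⟩),
      min_eq_right hba, max_eq_left hba]
  have hrF : rincr β φ j k =
      (K+1) ^ (2*β) * (deriv φ (ξ/(K+1)) * (1/(K+1))) - K ^ (2*β) * (deriv φ (ξ/K) * (1/K)) := by
    rw [rincr, hne _ _ (by linarith) (by linarith) (by linarith),
      hne _ _ (by linarith) (by linarith) (by linarith),
      hne _ _ (by linarith) (by linarith) (by linarith),
      hne _ _ (by linarith) (by linarith) (by linarith), hξeq]
    ring
  -- second MVT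
  have hξJ : J < ξ := hξ.1
  have hξJ1 : ξ < J + 1 := hξ.2
  have hGd : ∀ t ∈ Set.Icc K (K + 1),
      HasDerivAt (fun t : ℝ => t ^ (2*β-1) * deriv φ (ξ/t))
        ((2*β-1) * t ^ (2*β-1-1) * deriv φ (ξ/t)
          + t ^ (2*β-1) * (deriv (deriv φ) (ξ/t) * (ξ * -(t^2)⁻¹))) t := by
    intro t ht
    have ht0 : 0 < t := lt_of_lt_of_le hK0 ht.1
    have hxt : 1 < ξ / t := (one_lt_div ht0).mpr (by nlinarith [ht.2])
    have h1 : HasDerivAt (fun t : ℝ => t ^ (2*β-1)) ((2*β-1) * t ^ (2*β-1-1)) t :=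
      Real.hasDerivAt_rpow_const (Or.inl (ne_of_gt ht0))
    have h2 : HasDerivAt (fun t : ℝ => ξ / t) (ξ * -(t^2)⁻¹) t := by
      simpa [div_eq_mul_inv] using (hasDerivAt_inv (ne_of_gt ht0)).const_mul ξ
    have h3 : HasDerivAt (fun t : ℝ => deriv φ (ξ / t))
        (deriv (deriv φ) (ξ/t) * (ξ * -(t^2)⁻¹)) t :=
      ((hφ'd _ hxt).hasDerivAt).comp t h2
    exact h1.mul h3
  obtain ⟨η, hη, hηeq⟩ := exists_hasDerivAt_eq_slope
    (fun t : ℝ => t ^ (2*β-1) * deriv φ (ξ/t))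
    (fun t : ℝ => (2*β-1) * t ^ (2*β-1-1) * deriv φ (ξ/t)
      + t ^ (2*β-1) * (deriv (deriv φ) (ξ/t) * (ξ * -(t^2)⁻¹)))
    (by linarith : K < K + 1)
    (fun t ht => (hGd t ht).continuousAt.continuousWithinAt)
    (fun t ht => hGd t (Set.Ioo_subset_Icc_self ht))
  simp only [add_sub_cancel_left, div_one] at hηeq
  -- G(K+1) - G(K) = F' ξ
  have hpow : ∀ c : ℝ, 0 < c → c ^ (2*β-1) = c ^ (2*β) * (1/c) := by
    intro c hc
    rw [show 2*β-1 = 2*β + (-1) by ring, Real.rpow_add hc, Real.rpow_neg_one]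
    ring
  have hrG : rincr β φ j k =
      (2*β-1) * η ^ (2*β-1-1) * deriv φ (ξ/η)
        + η ^ (2*β-1) * (deriv (deriv φ) (ξ/η) * (ξ * -(η^2)⁻¹)) := by
    rw [hpow _ hK10, hpow _ hK0] at hηeq
    rw [hrF]
    linear_combination -hηeq
  -- estimates
  have hη0 : 0 < η := lt_trans hK0 hη.1
  have hηK1 : η < K + 1 := hη.2
  set x : ℝ := ξ / η with hxdef
  have hx2 : 2 ≤ x := by
    rw [hxdef, le_div_iff₀ hη0]
    nlinarith
  have hx10 : 0 < x - 1 := by linarith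
  have hB1 := hb1 x hx2
  have hB2 := hb2 x hx2
  set A : ℝ := η ^ (2*β-2) with hAdef
  have hA0 : 0 < A := Real.rpow_pos_of_pos hη0 _
  have hA1 : η ^ (2*β-1) = A * η := by
    rw [hAdef, show 2*β-1 = (2*β-2) + 1 by ring, Real.rpow_add hη0, Real.rpow_one]
  have hA2 : η ^ (2*β-1-1) = A := by rw [hAdef]; ring_nf
  -- |G' η| bound
  have habs : |rincr β φ j k| ≤ A * |deriv φ x| + A * x * |deriv (deriv φ) x| := by
    rw [hrG, hA1, hA2]
    have e1 : |(2*β-1) * A * deriv φ (ξ/η)| ≤ A * |deriv φ x| := by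
      rw [abs_mul, abs_mul, abs_of_pos hA0]
      have : |2*β-1| ≤ 1 := abs_le.mpr ⟨by linarith, by linarith⟩
      have h0 : (0:ℝ) ≤ |deriv φ (ξ/η)| := abs_nonneg _
      rw [hxdef]
      calc |2*β-1| * A * |deriv φ (ξ/η)| ≤ 1 * A * |deriv φ (ξ/η)| :=
            mul_le_mul_of_nonneg_right (mul_le_mul_of_nonneg_right this hA0.le) h0
        _ = A * |deriv φ (ξ/η)| := by ring
    have hx0 : 0 < x := by linarith
    have e2 : |A * η * (deriv (deriv φ) (ξ/η) * (ξ * -(η^2)⁻¹))| = A * x * |deriv (deriv φ) x| := by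
      have hrw : A * η * (deriv (deriv φ) (ξ/η) * (ξ * -(η^2)⁻¹))
          = -(A * x * deriv (deriv φ) (ξ/η)) := by
        rw [hxdef]
        field_simp
      rw [hrw, abs_neg, abs_mul, abs_mul, abs_of_pos hA0, abs_of_pos hx0, hxdef]
    calc |(2*β-1) * A * deriv φ (ξ/η) + A * η * (deriv (deriv φ) (ξ/η) * (ξ * -(η^2)⁻¹))|
        ≤ |(2*β-1) * A * deriv φ (ξ/η)| + |A * η * (deriv (deriv φ) (ξ/η) * (ξ * -(η^2)⁻¹))| :=
          abs_add_le _ _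
      _ ≤ A * |deriv φ x| + A * x * |deriv (deriv φ) x| := by
          rw [e2]; exact add_le_add e1 le_rfl
  have hxb : x * (x-1) ^ (p-1) ≤ 2 * (x-1) ^ p := by
    have h1 : (x-1) ^ p = (x-1) * (x-1) ^ (p-1) := by
      have := Real.rpow_add hx10 1 (p-1)
      rw [show (1:ℝ)+(p-1) = p by ring, Real.rpow_one] at this
      exact this
    have h2 : 0 < (x-1) ^ (p-1) := Real.rpow_pos_of_pos hx10 _
    rw [h1]
    nlinarith
  have hmain : |rincr β φ j k| ≤ 3 * C₁ * (A * (x-1) ^ p) := by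
    have h1 : A * |deriv φ x| ≤ A * (C₁ * (x-1) ^ p) := by
      exact mul_le_mul_of_nonneg_left hB1 hA0.le
    have h2 : A * x * |deriv (deriv φ) x| ≤ A * x * (C₁ * (x-1) ^ (p-1)) := by
      apply mul_le_mul_of_nonneg_left hB2
      positivity
    have h3 : A * x * (C₁ * (x-1) ^ (p-1)) ≤ A * (C₁ * (2 * (x-1) ^ p)) := by
      have := mul_le_mul_of_nonneg_left hxb (mul_pos hA0 hC₁).le
      calc A * x * (C₁ * (x-1) ^ (p-1)) = (A * C₁) * (x * (x-1)^(p-1)) := by ring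
        _ ≤ (A * C₁) * (2 * (x-1)^p) := this
        _ = A * (C₁ * (2 * (x-1) ^ p)) := by ring
    calc |rincr β φ j k| ≤ A * |deriv φ x| + A * x * |deriv (deriv φ) x| := habs
      _ ≤ A * (C₁ * (x-1) ^ p) + A * (C₁ * (2 * (x-1) ^ p)) := by
          refine add_le_add h1 (le_trans h2 h3)
      _ = 3 * C₁ * (A * (x-1) ^ p) := by ring
  -- rewrite A * (x-1)^p
  have hxm1 : x - 1 = (ξ - η) / η := by
    rw [hxdef]; field_simp
  have hξη0 : 0 < ξ - η := by nlinarith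
  have hsplit : A * (x-1) ^ p = η ^ (2*β-2-p) * (ξ - η) ^ p := by
    rw [hxm1, Real.div_rpow hξη0.le hη0.le, hAdef,
      show 2*β-2-p = (2*β-2) + (-p) by ring, Real.rpow_add hη0, Real.rpow_neg hη0.le,
      div_eq_mul_inv]
    ring
  have he1 : η ^ (2*β-2-p) ≤ 4 * K ^ (2*β-2-p) :=
    aux_rpow_four _ _ _ (by linarith) (by linarith) hK0 hη.1.le (by linarith)
  have he2 : (ξ - η) ^ p ≤ 4 * (J - K) ^ p :=
    aux_rpow_four' _ _ _ hp1 hp2 (by linarith) (by linarith)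
  have hpos1 : 0 < η ^ (2*β-2-p) := Real.rpow_pos_of_pos hη0 _
  have hpos2 : 0 < (ξ - η) ^ p := Real.rpow_pos_of_pos hξη0 _
  have hpos3 : 0 < K ^ (2*β-2-p) := Real.rpow_pos_of_pos hK0 _
  have hpos4 : 0 < (J - K) ^ p := Real.rpow_pos_of_pos (by linarith) _
  calc |rincr β φ j k| ≤ 3 * C₁ * (A * (x-1) ^ p) := hmain
    _ = 3 * C₁ * (η ^ (2*β-2-p) * (ξ - η) ^ p) := by rw [hsplit]
    _ ≤ 3 * C₁ * ((4 * K ^ (2*β-2-p)) * (4 * (J - K) ^ p)) := by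
        apply mul_le_mul_of_nonneg_left _ (by positivity : (0:ℝ) ≤ 3 * C₁)
        exact mul_le_mul he1 he2 hpos2.le (by positivity)
    _ = 48 * C₁ * K ^ (2*β-2-p) * (J - K) ^ p := by ring

/-- Lemma 5.1 of the paper: under (H.1) and (H.2), for integers `j, k ≥ 1` with `3k ≤ j`,
the increment covariance satisfies `|r(j,k)| ≤ C k^{2β+ν-2}(j-k)^{-ν}` if `α < 1`, and
`|r(j,k)| ≤ C k^{2β-α}(j-k)^{α-2}` if `α ≥ 1`. -/
theorem stmt_6 (β α lam ν C₁ : ℝ) (φ ψ : ℝ → ℝ)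
    (hβ0 : 0 < β) (hβ1 : β < 1) (hα0 : 0 < α) (hα2β : α ≤ 2 * β) (hlam : 0 < lam)
    (h1 : CondH1 β α lam φ ψ) (h2 : CondH2 α ν C₁ φ) :
    ∃ C : ℝ, 0 < C ∧ ∀ j k : ℕ, 1 ≤ k → 3 * k ≤ j →
      (α < 1 →
        |rincr β φ j k| ≤ C * (k : ℝ) ^ (2 * β + ν - 2) * ((j : ℝ) - (k : ℝ)) ^ (-ν)) ∧
      (1 ≤ α →
        |rincr β φ j k| ≤ C * (k : ℝ) ^ (2 * β - α) * ((j : ℝ) - (k : ℝ)) ^ (α - 2)) := by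
  obtain ⟨hφψ, ⟨U, hUopen, hUsub, hUdiff⟩, -⟩ := h1
  obtain ⟨hC₁, hν1, hν2, hH2⟩ := h2
  have hev : ∀ x : ℝ, 1 < x → φ =ᶠ[nhds x] fun y => -lam * (y - 1) ^ α + ψ y := by
    intro x hx
    filter_upwards [eventually_gt_nhds hx] with y hy
    exact hφψ y hy.le
  have hRHSderiv : ∀ x : ℝ, 1 < x → HasDerivAt (fun y => -lam * (y - 1) ^ α + ψ y)
      (-lam * (α * (x - 1) ^ (α - 1) * 1) + deriv ψ x) x := by
    intro x hx
    have hψd : DifferentiableAt ℝ ψ x := (hUdiff x (hUsub hx.le)).1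
    have hlin : HasDerivAt (fun y : ℝ => y - 1) 1 x := (hasDerivAt_id x).sub_const 1
    have h2' : HasDerivAt (fun z : ℝ => z ^ α) (α * (x - 1) ^ (α - 1)) (x - 1) :=
      Real.hasDerivAt_rpow_const (Or.inl (ne_of_gt (by linarith)))
    have h3 : HasDerivAt (fun y : ℝ => (y - 1) ^ α) (α * (x - 1) ^ (α - 1) * 1) x := by
      have := h2'.comp x hlin; exact this
    exact (h3.const_mul (-lam)).add hψd.hasDerivAt
  have hφd : ∀ x : ℝ, 1 < x → DifferentiableAt ℝ φ x := fun x hx =>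
    ((hRHSderiv x hx).differentiableAt).congr_of_eventuallyEq (hev x hx)
  have hderiv_eq : ∀ x : ℝ, 1 < x →
      deriv φ x = -lam * (α * (x - 1) ^ (α - 1) * 1) + deriv ψ x := by
    intro x hx
    exact ((hRHSderiv x hx).congr_of_eventuallyEq (hev x hx)).deriv
  have hφ'ev : ∀ x : ℝ, 1 < x →
      (deriv φ) =ᶠ[nhds x] fun y => -lam * (α * (y - 1) ^ (α - 1) * 1) + deriv ψ y := by
    intro x hx
    filter_upwards [eventually_gt_nhds hx] with y hy
    exact hderiv_eq y hy
  have hφ'd : ∀ x : ℝ, 1 < x → DifferentiableAt ℝ (deriv φ) x := by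
    intro x hx
    have h1' : HasDerivAt (fun y : ℝ => (y - 1) ^ (α - 1)) ((α - 1) * (x - 1) ^ (α - 1 - 1) * 1) x := by
      have := (Real.hasDerivAt_rpow_const (p := α - 1) (Or.inl (ne_of_gt (by linarith : (0:ℝ) < x - 1)))).comp x
        ((hasDerivAt_id x).sub_const 1)
      exact this
    have h2' : DifferentiableAt ℝ (deriv ψ) x := (hUdiff x (hUsub hx.le)).2
    have hgd : DifferentiableAt ℝ (fun y => -lam * (α * (y - 1) ^ (α - 1) * 1) + deriv ψ y) x :=
      (((h1'.differentiableAt.const_mul α).mul_const 1).const_mul (-lam)).add h2'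
    exact hgd.congr_of_eventuallyEq (hφ'ev x hx)
  have h2p : ∀ q : ℝ, -2 ≤ q → (1:ℝ)/4 ≤ (2:ℝ) ^ q := by
    intro q hq
    have h := Real.rpow_le_rpow_of_exponent_le one_le_two hq
    have h4 : (2:ℝ) ^ (-2:ℝ) = 1/4 := by
      rw [show (-2:ℝ) = ((-2:ℤ):ℝ) by norm_num, Real.rpow_intCast]
      norm_num
    rw [h4] at h
    exact h
  set C : ℝ := 48 * C₁ + 4 * |rincr β φ 3 1| + 1 with hCdef
  have hC0 : 0 < C := by positivity
  have hCge : 48 * C₁ ≤ C := by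
    have := abs_nonneg (rincr β φ 3 1)
    rw [hCdef]; linarith
  refine ⟨C, hC0, ?_⟩
  intro j k hk hjk
  by_cases hcase : 2 * k + 2 ≤ j
  · have hjk0 : (0:ℝ) < (j:ℝ) - (k:ℝ) := by
      have : k < j := by omega
      have : (k:ℝ) < (j:ℝ) := by exact_mod_cast this
      linarith
    have hk0 : (0:ℝ) < (k:ℝ) := by
      have : (1:ℝ) ≤ (k:ℝ) := by exact_mod_cast hk
      linarith
    constructor
    · intro hα1
      have hb1 : ∀ x : ℝ, 2 ≤ x → |deriv φ x| ≤ C₁ * (x - 1) ^ (-ν) :=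
        fun x hx => ((hH2 x hx).1 hα1).1
      have hb2 : ∀ x : ℝ, 2 ≤ x → |deriv (deriv φ) x| ≤ C₁ * (x - 1) ^ (-ν - 1) :=
        fun x hx => ((hH2 x hx).1 hα1).2
      have hcore := aux_core β C₁ (-ν) φ hβ0 hβ1 hC₁ (by linarith) (by linarith)
        hφd hφ'd hb1 hb2 j k hk hcase
      rw [show 2 * β - 2 - (-ν) = 2 * β + ν - 2 by ring] at hcore
      have hpos : 0 < (k:ℝ) ^ (2*β+ν-2) * ((j:ℝ) - (k:ℝ)) ^ (-ν) :=
        mul_pos (Real.rpow_pos_of_pos hk0 _) (Real.rpow_pos_of_pos hjk0 _)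
      calc |rincr β φ j k| ≤ 48 * C₁ * (k:ℝ) ^ (2*β+ν-2) * ((j:ℝ)-(k:ℝ)) ^ (-ν) := hcore
        _ = 48 * C₁ * ((k:ℝ) ^ (2*β+ν-2) * ((j:ℝ)-(k:ℝ)) ^ (-ν)) := by ring
        _ ≤ C * ((k:ℝ) ^ (2*β+ν-2) * ((j:ℝ)-(k:ℝ)) ^ (-ν)) :=
            mul_le_mul_of_nonneg_right hCge hpos.le
        _ = C * (k:ℝ) ^ (2*β+ν-2) * ((j:ℝ)-(k:ℝ)) ^ (-ν) := by ring
    · intro hα1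
      have hb1 : ∀ x : ℝ, 2 ≤ x → |deriv φ x| ≤ C₁ * (x - 1) ^ (α - 2) :=
        fun x hx => ((hH2 x hx).2 hα1).1
      have hb2 : ∀ x : ℝ, 2 ≤ x → |deriv (deriv φ) x| ≤ C₁ * (x - 1) ^ (α - 2 - 1) := by
        intro x hx
        have h := ((hH2 x hx).2 hα1).2
        rwa [show α - 3 = α - 2 - 1 by ring] at h
      have hcore := aux_core β C₁ (α - 2) φ hβ0 hβ1 hC₁ (by linarith) (by linarith)
        hφd hφ'd hb1 hb2 j k hk hcase
      rw [show 2 * β - 2 - (α - 2) = 2 * β - α by ring] at hcore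
      have hpos : 0 < (k:ℝ) ^ (2*β-α) * ((j:ℝ) - (k:ℝ)) ^ (α-2) :=
        mul_pos (Real.rpow_pos_of_pos hk0 _) (Real.rpow_pos_of_pos hjk0 _)
      calc |rincr β φ j k| ≤ 48 * C₁ * (k:ℝ) ^ (2*β-α) * ((j:ℝ)-(k:ℝ)) ^ (α-2) := hcore
        _ = 48 * C₁ * ((k:ℝ) ^ (2*β-α) * ((j:ℝ)-(k:ℝ)) ^ (α-2)) := by ring
        _ ≤ C * ((k:ℝ) ^ (2*β-α) * ((j:ℝ)-(k:ℝ)) ^ (α-2)) :=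
            mul_le_mul_of_nonneg_right hCge hpos.le
        _ = C * (k:ℝ) ^ (2*β-α) * ((j:ℝ)-(k:ℝ)) ^ (α-2) := by ring
  · have hk1 : k = 1 := by omega
    have hj3 : j = 3 := by omega
    subst hk1 hj3
    have habs : 0 ≤ |rincr β φ 3 1| := abs_nonneg _
    have hRC : 4 * |rincr β φ 3 1| ≤ C := by rw [hCdef]; nlinarith
    constructor
    · intro hα1
      have h2q : (1:ℝ)/4 ≤ (2:ℝ) ^ (-ν) := h2p (-ν) (by linarith)
      have hgoal : |rincr β φ 3 1| ≤ C * (2:ℝ) ^ (-ν) := by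
        have h1' : C * (1/4) ≤ C * (2:ℝ) ^ (-ν) := mul_le_mul_of_nonneg_left h2q hC0.le
        nlinarith
      calc |rincr β φ 3 1| ≤ C * (2:ℝ) ^ (-ν) := hgoal
        _ = C * ((1:ℕ):ℝ) ^ (2*β+ν-2) * (((3:ℕ):ℝ) - ((1:ℕ):ℝ)) ^ (-ν) := by
            norm_num
    · intro hα1
      have h2q : (1:ℝ)/4 ≤ (2:ℝ) ^ (α - 2) := h2p (α - 2) (by linarith)
      have hgoal : |rincr β φ 3 1| ≤ C * (2:ℝ) ^ (α - 2) := by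
        have h1' : C * (1/4) ≤ C * (2:ℝ) ^ (α - 2) := mul_le_mul_of_nonneg_left h2q hC0.le
        nlinarith
      calc |rincr β φ 3 1| ≤ C * (2:ℝ) ^ (α - 2) := hgoal
        _ = C * ((1:ℕ):ℝ) ^ (2*β-α) * (((3:ℕ):ℝ) - ((1:ℕ):ℝ)) ^ (α-2) := by
            norm_num
end
end

section
/- Assume conditions (H.1) and (H.2) hold for (β, α, λ, φ), and assume r(j,j) > 0 for every integer j ≥ 0. Let q ≥ 2 be an integer with α < 2 - 1/q, and let t > 0. Then lim_{n→∞} (1/n) Σ_{j=3}^{⌊nt⌋-1} Σ_{k=1}^{⌊j/3⌋} |ρ(j,k)|^q = 0. -/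
noncomputable section

open Filter MeasureTheory

lemma mvt_aux {f : ℝ → ℝ} {a b : ℝ} (hab : a < b)
    (hd : ∀ x ∈ Set.Icc a b, DifferentiableAt ℝ f x) :
    ∃ c ∈ Set.Ioo a b, f b - f a = deriv f c * (b - a) := by
  obtain ⟨c, hc, hc'⟩ := exists_deriv_eq_slope f hab
    (fun x hx => (hd x hx).continuousAt.continuousWithinAt)
    (fun x hx => (hd x (Set.Ioo_subset_Icc_self hx)).differentiableWithinAt)
  refine ⟨c, hc, ?_⟩
  rw [hc']
  field_simp [ne_of_gt (sub_pos.2 hab)]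

lemma hasDerivAt_rpow_shift {p x : ℝ} (hx : x ≠ 1) :
    HasDerivAt (fun y : ℝ => (y - 1) ^ p) (p * (x - 1) ^ (p - 1)) x := by
  have h1 : HasDerivAt (fun y : ℝ => y - 1) 1 x := (hasDerivAt_id x).sub_const 1
  have h2 := Real.hasDerivAt_rpow_const (x := x - 1) (p := p) (Or.inl (sub_ne_zero.2 hx))
  simpa [Function.comp_def] using h2.comp x h1

lemma hasDerivAt_one_add_rpow {p x : ℝ} (hx : x ≠ -1) :
    HasDerivAt (fun u : ℝ => (1 + u) ^ p) (p * (1 + x) ^ (p - 1)) x := by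
  have h1 : HasDerivAt (fun y : ℝ => 1 + y) 1 x := (hasDerivAt_id x).const_add 1
  have h2 := Real.hasDerivAt_rpow_const (x := 1 + x) (p := p)
    (Or.inl (by intro h; apply hx; linarith))
  simpa [Function.comp_def] using h2.comp x h1

-- bound: 1 ≤ c → c ≤ 2 → p ≤ 1 → c ^ p ≤ 2
lemma rpow_le_two_aux {c p : ℝ} (h1 : 1 ≤ c) (h2 : c ≤ 2) (hp : p ≤ 1) : c ^ p ≤ 2 := by
  rcases le_or_gt p 0 with hp0 | hp0
  · exact le_trans (Real.rpow_le_one_of_one_le_of_nonpos h1 hp0) one_le_two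
  · calc c ^ p ≤ 2 ^ p := Real.rpow_le_rpow (by linarith) h2 hp0.le
    _ ≤ 2 ^ (1:ℝ) := Real.rpow_le_rpow_of_exponent_le one_le_two hp
    _ = 2 := Real.rpow_one 2

section phi
open Set Filter
variable {β α lam : ℝ} {φ ψ : ℝ → ℝ}

lemma phi_eventually_eq (hφ : ∀ x : ℝ, 1 ≤ x → φ x = -lam * (x - 1) ^ α + ψ x)
    {x : ℝ} (hx : 1 < x) :
    φ =ᶠ[nhds x] fun y => -lam * (y - 1) ^ α + ψ y := by
  filter_upwards [IsOpen.mem_nhds isOpen_Ioi hx] with y hy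
  exact hφ y (le_of_lt hy)

lemma phi_hasDeriv (h1 : CondH1 β α lam φ ψ) {x : ℝ} (hx : 1 < x) :
    HasDerivAt φ (-lam * (α * (x - 1) ^ (α - 1)) + deriv ψ x) x := by
  obtain ⟨hφ, ⟨U, hUo, hU1, hUd⟩, _⟩ := h1
  have hψ : DifferentiableAt ℝ ψ x := (hUd x (hU1 (le_of_lt hx))).1
  have h : HasDerivAt (fun y => -lam * (y - 1) ^ α + ψ y)
      (-lam * (α * (x - 1) ^ (α - 1)) + deriv ψ x) x :=
    ((hasDerivAt_rpow_shift hx.ne').const_mul (-lam)).add hψ.hasDerivAt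
  exact h.congr_of_eventuallyEq (phi_eventually_eq hφ hx)

lemma phi_diffAt (h1 : CondH1 β α lam φ ψ) {x : ℝ} (hx : 1 < x) :
    DifferentiableAt ℝ φ x := (phi_hasDeriv h1 hx).differentiableAt

lemma deriv_phi_eventually_eq (h1 : CondH1 β α lam φ ψ) {x : ℝ} (hx : 1 < x) :
    deriv φ =ᶠ[nhds x] fun y => -lam * (α * (y - 1) ^ (α - 1)) + deriv ψ y := by
  filter_upwards [IsOpen.mem_nhds isOpen_Ioi hx] with y hy
  exact (phi_hasDeriv h1 hy).deriv

lemma deriv_phi_diffAt (h1 : CondH1 β α lam φ ψ) {x : ℝ} (hx : 1 < x) :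
    DifferentiableAt ℝ (deriv φ) x := by
  obtain ⟨U, hUo, hU1, hUd⟩ := h1.2.1
  have hψ : DifferentiableAt ℝ (deriv ψ) x := (hUd x (hU1 (le_of_lt hx))).2
  have h : DifferentiableAt ℝ (fun y => -lam * (α * (y - 1) ^ (α - 1)) + deriv ψ y) x :=
    (((hasDerivAt_rpow_shift hx.ne').const_mul α).const_mul (-lam)).differentiableAt.add hψ
  exact ((deriv_phi_eventually_eq h1 hx).differentiableAt_iff).mpr h

end phi
section diagest
open Set Filter

lemma rincr_diag_eq {β : ℝ} {φ : ℝ → ℝ} {j : ℕ} (hj : 1 ≤ j) :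
    rincr β φ j j = ((j:ℝ)+1) ^ (2*β) * φ 1 + (j:ℝ) ^ (2*β) * φ 1
      - 2 * ((j:ℝ) ^ (2*β) * φ (((j:ℝ)+1)/(j:ℝ))) := by
  have hj0 : (0:ℝ) < (j:ℝ) := by exact_mod_cast Nat.pos_of_ne_zero (by omega)
  have hj0' : (0:ℝ) < (j:ℝ)+1 := by linarith
  have hle : (j:ℝ) ≤ (j:ℝ)+1 := by linarith
  unfold rincr Rcov
  rw [if_neg (by push_neg; constructor <;> positivity),
      if_neg (by push_neg; constructor <;> positivity),
      if_neg (by push_neg; constructor <;> positivity),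
      if_neg (by push_neg; constructor <;> positivity)]
  rw [min_self, max_self, div_self hj0'.ne', min_eq_left hle, max_eq_right hle,
      min_eq_right hle, max_eq_left hle, min_self, max_self, div_self hj0.ne']
  ring

lemma one_add_rpow_lin {β h : ℝ} (hβ0 : 0 < β) (hβ1 : β < 1)
    (h0 : 0 < h) (hh1 : h ≤ 1) :
    |(1 + h) ^ (2*β) - 1| ≤ 4 * h := by
  obtain ⟨c, hc, hc'⟩ := mvt_aux (f := fun u : ℝ => (1+u) ^ (2*β)) h0
    (fun u hu => (hasDerivAt_one_add_rpow
      (by intro he; rw [he] at hu; linarith [hu.1] : u ≠ -1)).differentiableAt)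
  have hd : deriv (fun u : ℝ => (1+u) ^ (2*β)) c = 2*β * (1+c) ^ (2*β-1) :=
    (hasDerivAt_one_add_rpow (by intro he; rw [he] at hc; linarith [hc.1] : c ≠ -1)).deriv
  have h1c : (1:ℝ) ≤ 1 + c := by linarith [hc.1]
  have h2c : (1:ℝ) + c ≤ 2 := by linarith [hc.2, hh1]
  have hb : (1+c) ^ (2*β-1) ≤ 2 := rpow_le_two_aux h1c h2c (by linarith)
  have hpos : (0:ℝ) < (1+c) ^ (2*β-1) := Real.rpow_pos_of_pos (by linarith) _
  have : (1+h) ^ (2*β) - 1 = 2*β * (1+c) ^ (2*β-1) * h := by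
    have := hc'
    simp only [Real.one_rpow, add_zero, sub_zero] at this
    rw [this, hd]
  rw [this, abs_of_nonneg (by positivity)]
  nlinarith [mul_le_mul_of_nonneg_left hb hβ0.le, h0, hpos]

lemma one_add_rpow_taylor {β h : ℝ} (hβ0 : 0 < β) (hβ1 : β < 1)
    (h0 : 0 < h) (hh1 : h ≤ 1) :
    |(1 + h) ^ (2*β) - 1 - 2*β*h| ≤ 2 * h^2 := by
  have hder : ∀ u : ℝ, 0 ≤ u → HasDerivAt (fun u : ℝ => (1+u) ^ (2*β) - 1 - 2*β*u)
      (2*β * (1+u) ^ (2*β-1) - 2*β) u := by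
    intro u hu
    have h1 := (hasDerivAt_one_add_rpow (by intro he; rw [he] at hu; linarith : u ≠ -1)
      (p := 2*β)).sub_const 1
    have h2 := (hasDerivAt_id u).const_mul (2*β)
    exact (h1.sub h2).congr_deriv (by ring)
  obtain ⟨c, hc, hc'⟩ := mvt_aux (f := fun u : ℝ => (1+u) ^ (2*β) - 1 - 2*β*u) h0
    (fun u hu => (hder u hu.1).differentiableAt)
  -- inner MVT for (1+u)^(2β-1)
  obtain ⟨d, hd, hd'⟩ := mvt_aux (f := fun u : ℝ => (1+u) ^ (2*β-1)) hc.1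
    (fun u hu => (hasDerivAt_one_add_rpow
      (by intro he; rw [he] at hu; linarith [hu.1] : u ≠ -1)).differentiableAt)
  have hdd : deriv (fun u : ℝ => (1+u) ^ (2*β-1)) d = (2*β-1) * (1+d) ^ (2*β-1-1) :=
    (hasDerivAt_one_add_rpow (by intro he; rw [he] at hd; linarith [hd.1] : d ≠ -1)).deriv
  have hval : (1+h) ^ (2*β) - 1 - 2*β*h = 2*β * ((1+c) ^ (2*β-1) - 1) * h := by
    have h1 := hc'
    rw [(hder c hc.1.le).deriv] at h1
    simp only [Real.one_rpow, add_zero, mul_zero, sub_zero, sub_self] at h1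
    linear_combination h1
  have hin : (1+c) ^ (2*β-1) - 1 = (2*β-1) * (1+d) ^ (2*β-1-1) * c := by
    have := hd'
    simp only [Real.one_rpow, add_zero, sub_zero] at this
    rw [this, hdd]
  have hb : |(1+d) ^ (2*β-1-1)| ≤ 1 := by
    rw [abs_of_nonneg (Real.rpow_nonneg (by linarith [hd.1]) _)]
    exact Real.rpow_le_one_of_one_le_of_nonpos (by linarith [hd.1]) (by linarith)
  rw [hval, hin]
  have hc2 : |c| ≤ h := by rw [abs_of_nonneg hc.1.le]; linarith [hc.2]
  have h2b : |2*β - 1| ≤ 1 := abs_le.2 ⟨by linarith, by linarith⟩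
  have h2β : |2*β| ≤ 2 := by rw [abs_of_nonneg (by linarith)]; linarith
  have hh : |h| = h := abs_of_nonneg h0.le
  calc |2*β * ((2*β-1) * (1+d) ^ (2*β-1-1) * c) * h|
      = |2*β| * (|2*β-1| * |(1+d) ^ (2*β-1-1)| * |c|) * |h| := by
        simp only [abs_mul]
    _ ≤ 2 * (1 * 1 * h) * h := by
        rw [hh]; gcongr
    _ = 2 * h^2 := by ring

lemma psi_increment {ψ : ℝ → ℝ} {C₀ α h : ℝ}
    (hdiff : ∀ x : ℝ, 1 ≤ x → DifferentiableAt ℝ ψ x)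
    (hb : ∀ x : ℝ, 1 < x → |deriv ψ x| ≤ C₀ * x ^ (α - 1))
    (hC₀ : 0 ≤ C₀) (hα2 : α ≤ 2) (h0 : 0 < h) (hh1 : h ≤ 1) :
    |ψ (1 + h) - ψ 1| ≤ 2 * C₀ * h := by
  obtain ⟨c, hc, hc'⟩ := mvt_aux (f := ψ) (by linarith : (1:ℝ) < 1 + h)
    (fun x hx => hdiff x hx.1)
  have hc2 : c ≤ 2 := by linarith [hc.2]
  have hbc : |deriv ψ c| ≤ 2 * C₀ := by
    calc |deriv ψ c| ≤ C₀ * c ^ (α-1) := hb c hc.1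
      _ ≤ C₀ * 2 := by
          apply mul_le_mul_of_nonneg_left (rpow_le_two_aux hc.1.le hc2 (by linarith)) hC₀
      _ = 2 * C₀ := by ring
  rw [hc']
  rw [abs_mul]
  have : |1 + h - 1| = h := by rw [abs_of_nonneg (by linarith)]; ring
  rw [this]
  exact mul_le_mul_of_nonneg_right hbc h0.le

lemma psi_taylor {ψ : ℝ → ℝ} {C₀ α h : ℝ}
    (hdiff : ∀ x : ℝ, 1 ≤ x → DifferentiableAt ℝ ψ x)
    (hdiff' : ∀ x : ℝ, 1 ≤ x → DifferentiableAt ℝ (deriv ψ) x)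
    (hb : ∀ x : ℝ, 1 < x → |deriv (deriv ψ) x| ≤ C₀ * x⁻¹ * (x - 1) ^ (α - 1))
    (hC₀ : 0 ≤ C₀) (hα1 : 1 ≤ α) (h0 : 0 < h) (hh1 : h ≤ 1) :
    |ψ (1 + h) - ψ 1 - deriv ψ 1 * h| ≤ C₀ * h^2 := by
  have hder : ∀ u : ℝ, 0 ≤ u → HasDerivAt (fun u : ℝ => ψ (1+u) - deriv ψ 1 * u)
      (deriv ψ (1+u) - deriv ψ 1) u := by
    intro u hu
    have h1 : HasDerivAt (fun u : ℝ => ψ (1+u)) (deriv ψ (1+u) * 1) u :=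
      ((hdiff (1+u) (by linarith)).hasDerivAt).comp u ((hasDerivAt_id u).const_add 1)
    have h2 := (hasDerivAt_id u).const_mul (deriv ψ 1)
    exact (h1.sub h2).congr_deriv (by ring)
  obtain ⟨c, hc, hc'⟩ := mvt_aux (f := fun u : ℝ => ψ (1+u) - deriv ψ 1 * u) h0
    (fun u hu => (hder u hu.1).differentiableAt)
  obtain ⟨d, hd, hd'⟩ := mvt_aux (f := deriv ψ) (by linarith [hc.1] : (1:ℝ) < 1 + c)
    (fun x hx => hdiff' x hx.1)
  have hval : ψ (1+h) - ψ 1 - deriv ψ 1 * h = (deriv ψ (1+c) - deriv ψ 1) * h := by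
    have h1 := hc'
    rw [(hder c hc.1.le).deriv] at h1
    simp only [add_zero, mul_zero, sub_zero] at h1
    linarith [h1]
  have hin : deriv ψ (1+c) - deriv ψ 1 = deriv (deriv ψ) d * c := by
    have := hd'
    rw [this]; ring
  have hd1 : 1 < d := hd.1
  have hbd : |deriv (deriv ψ) d| ≤ C₀ := by
    calc |deriv (deriv ψ) d| ≤ C₀ * d⁻¹ * (d-1) ^ (α-1) := hb d hd1
      _ ≤ C₀ * 1 * 1 := by
          apply mul_le_mul
          · exact mul_le_mul_of_nonneg_left (inv_le_one_of_one_le₀ (by linarith)) hC₀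
          · exact Real.rpow_le_one (by linarith [hd.1]) (by linarith [hd.2, hc.2, hc.1]) (by linarith)
          · exact Real.rpow_nonneg (by linarith [hd.1]) _
          · exact mul_nonneg hC₀ zero_le_one
      _ = C₀ := by ring
  rw [hval, hin, abs_mul, abs_mul]
  have hcb : |c| ≤ h := by rw [abs_of_nonneg hc.1.le]; linarith [hc.2]
  calc |deriv (deriv ψ) d| * |c| * |h| ≤ C₀ * h * h := by
        apply mul_le_mul _ (le_of_eq (abs_of_nonneg h0.le)) (abs_nonneg _) (by positivity)
        exact mul_le_mul hbd hcb (abs_nonneg _) hC₀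
    _ = C₀ * h^2 := by ring

end diagest


lemma abs_sub_le_abs_add_abs' (a b : ℝ) : |a - b| ≤ |a| + |b| := by
  rw [sub_eq_add_neg]; exact (abs_add_le _ _).trans (by rw [abs_neg])

lemma diag_lower {β α lam : ℝ} {φ ψ : ℝ → ℝ}
    (hβ0 : 0 < β) (hβ1 : β < 1) (hα0 : 0 < α) (hα2β : α ≤ 2 * β) (hlam : 0 < lam)
    (h1 : CondH1 β α lam φ ψ) (hpos : ∀ j : ℕ, 0 < rincr β φ j j) :
    ∃ c : ℝ, 0 < c ∧ ∀ j : ℕ, 1 ≤ j → c * (j:ℝ) ^ (2*β - α) ≤ rincr β φ j j := by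
  obtain ⟨C₀, hC₀, hb1, hb2, hb3⟩ := h1.2.2
  obtain ⟨U, hUo, hU1, hUd⟩ := h1.2.1
  have hφ := h1.1
  have hdiff : ∀ x:ℝ, 1 ≤ x → DifferentiableAt ℝ ψ x := fun x hx => (hUd x (hU1 hx)).1
  have hdiff' : ∀ x:ℝ, 1 ≤ x → DifferentiableAt ℝ (deriv ψ) x := fun x hx => (hUd x (hU1 hx)).2
  have hα2 : α < 2 := lt_of_le_of_lt hα2β (by linarith)
  have hψ1 : φ 1 = ψ 1 := by
    have h := hφ 1 le_rfl
    rw [h, sub_self, Real.zero_rpow hα0.ne', mul_zero, zero_add]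
  have habs2 : ∀ x:ℝ, |2*x| = 2*|x| := fun x => by rw [abs_mul]; norm_num
  have hid : ∀ h : ℝ, 0 < h → h ≤ 1 →
      (1+h) ^ (2*β) * φ 1 + φ 1 - 2 * φ (1+h)
      = 2*lam*h^α + (((1+h) ^ (2*β) - 1) * ψ 1 - 2 * (ψ (1+h) - ψ 1)) := by
    intro h h0 hh1
    have e1 : φ (1+h) = -lam * h ^ α + ψ (1+h) := by
      have e := hφ (1+h) (by linarith)
      rw [e, add_sub_cancel_left]
    rw [e1, hψ1]; ring
  have key : ∃ h₀ : ℝ, 0 < h₀ ∧ h₀ ≤ 1 ∧ ∀ h : ℝ, 0 < h → h ≤ h₀ →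
      lam * h ^ α ≤ (1+h) ^ (2*β) * φ 1 + φ 1 - 2 * φ (1+h) := by
    rcases lt_or_ge α 1 with hα1 | hα1
    · set M := 4*|ψ 1| + 4*C₀ + 1 with hM
      have hM0 : 0 < M := by positivity
      have h1α : (0:ℝ) < 1 - α := by linarith
      refine ⟨min 1 ((lam/M) ^ (1/(1-α))),
        lt_min one_pos (Real.rpow_pos_of_pos (by positivity) _), min_le_left _ _, ?_⟩
      intro h h0 hh0
      have hh1 : h ≤ 1 := le_trans hh0 (min_le_left _ _)
      rw [hid h h0 hh1]
      have hE : |((1+h) ^ (2*β) - 1) * ψ 1 - 2 * (ψ (1+h) - ψ 1)| ≤ M * h := by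
        calc |((1+h) ^ (2*β) - 1) * ψ 1 - 2 * (ψ (1+h) - ψ 1)|
            ≤ |((1+h) ^ (2*β) - 1) * ψ 1| + |2 * (ψ (1+h) - ψ 1)| :=
              abs_sub_le_abs_add_abs' _ _
          _ = |(1+h) ^ (2*β) - 1| * |ψ 1| + 2 * |ψ (1+h) - ψ 1| := by
              rw [abs_mul, habs2]
          _ ≤ (4*h) * |ψ 1| + 2 * (2*C₀*h) := by
              gcongr
              · exact one_add_rpow_lin hβ0 hβ1 h0 hh1
              · exact psi_increment hdiff hb1 hC₀ (le_of_lt hα2) h0 hh1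
          _ ≤ M * h := by rw [hM]; nlinarith [abs_nonneg (ψ 1)]
      have hMh : M * h ≤ lam * h ^ α := by
        have hs : h = h ^ (1-α) * h ^ α := by
          rw [← Real.rpow_add h0, sub_add_cancel, Real.rpow_one]
        have hle : h ^ (1-α) ≤ lam / M := by
          calc h ^ (1-α) ≤ (min 1 ((lam/M) ^ (1/(1-α)))) ^ (1-α) :=
                Real.rpow_le_rpow h0.le hh0 h1α.le
            _ ≤ ((lam/M) ^ (1/(1-α))) ^ (1-α) :=
                Real.rpow_le_rpow
                  (le_min zero_le_one (Real.rpow_nonneg (by positivity) _))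
                  (min_le_right _ _) h1α.le
            _ = lam / M := by
                rw [← Real.rpow_mul (by positivity : (0:ℝ) ≤ lam/M), one_div,
                  inv_mul_cancel₀ h1α.ne', Real.rpow_one]
        calc M * h = M * (h ^ (1-α) * h ^ α) := by rw [← hs]
          _ ≤ M * ((lam/M) * h ^ α) := by gcongr
          _ = lam * h ^ α := by field_simp
      have habs := abs_le.1 hE
      linarith [habs.1]
    · set M := 2*|ψ 1| + 2*C₀ + 1 with hM
      have hM0 : 0 < M := by positivity
      have h2α : (0:ℝ) < 2 - α := by linarith
      refine ⟨min 1 ((lam/M) ^ (1/(2-α))),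
        lt_min one_pos (Real.rpow_pos_of_pos (by positivity) _), min_le_left _ _, ?_⟩
      intro h h0 hh0
      have hh1 : h ≤ 1 := le_trans hh0 (min_le_left _ _)
      rw [hid h h0 hh1]
      have hpsi1 : deriv ψ 1 = β * ψ 1 := hb3 hα1
      have hE : |((1+h) ^ (2*β) - 1) * ψ 1 - 2 * (ψ (1+h) - ψ 1)| ≤ M * h^2 := by
        have iden : ((1+h) ^ (2*β) - 1) * ψ 1 - 2 * (ψ (1+h) - ψ 1)
            = ((1+h) ^ (2*β) - 1 - 2*β*h) * ψ 1
              - 2 * (ψ (1+h) - ψ 1 - deriv ψ 1 * h) := by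
          rw [hpsi1]; ring
        rw [iden]
        calc |((1+h) ^ (2*β) - 1 - 2*β*h) * ψ 1 - 2 * (ψ (1+h) - ψ 1 - deriv ψ 1 * h)|
            ≤ |((1+h) ^ (2*β) - 1 - 2*β*h) * ψ 1| + |2 * (ψ (1+h) - ψ 1 - deriv ψ 1 * h)| :=
              abs_sub_le_abs_add_abs' _ _
          _ = |(1+h) ^ (2*β) - 1 - 2*β*h| * |ψ 1| + 2 * |ψ (1+h) - ψ 1 - deriv ψ 1 * h| := by
              rw [abs_mul, habs2]
          _ ≤ (2*h^2) * |ψ 1| + 2 * (C₀*h^2) := by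
              gcongr
              · exact one_add_rpow_taylor hβ0 hβ1 h0 hh1
              · exact psi_taylor hdiff hdiff' hb2 hC₀ hα1 h0 hh1
          _ ≤ M * h^2 := by rw [hM]; nlinarith [abs_nonneg (ψ 1), sq_nonneg h]
      have hMh : M * h^2 ≤ lam * h ^ α := by
        have hs : h^2 = h ^ (2-α) * h ^ α := by
          rw [← Real.rpow_add h0, sub_add_cancel, ← Real.rpow_natCast h 2]
          norm_num
        have hle : h ^ (2-α) ≤ lam / M := by
          calc h ^ (2-α) ≤ (min 1 ((lam/M) ^ (1/(2-α)))) ^ (2-α) :=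
                Real.rpow_le_rpow h0.le hh0 h2α.le
            _ ≤ ((lam/M) ^ (1/(2-α))) ^ (2-α) :=
                Real.rpow_le_rpow
                  (le_min zero_le_one (Real.rpow_nonneg (by positivity) _))
                  (min_le_right _ _) h2α.le
            _ = lam / M := by
                rw [← Real.rpow_mul (by positivity : (0:ℝ) ≤ lam/M), one_div,
                  inv_mul_cancel₀ h2α.ne', Real.rpow_one]
        calc M * h^2 = M * (h ^ (2-α) * h ^ α) := by rw [← hs]
          _ ≤ M * ((lam/M) * h ^ α) := by gcongr
          _ = lam * h ^ α := by field_simp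
      have habs := abs_le.1 hE
      linarith [habs.1]
  obtain ⟨h₀, hh₀0, hh₀1, hkey⟩ := key
  set j₀ : ℕ := max 1 ⌈1/h₀⌉₊ with hj₀
  have hne : (Finset.Icc 1 j₀).Nonempty := ⟨1, Finset.mem_Icc.2 ⟨le_rfl, le_max_left _ _⟩⟩
  set c₂ := (Finset.Icc 1 j₀).inf' hne (fun i => rincr β φ i i / (i:ℝ) ^ (2*β - α)) with hc₂
  have hc₂0 : 0 < c₂ := by
    rw [hc₂, Finset.lt_inf'_iff]
    intro i hi
    have hi1 : 1 ≤ i := (Finset.mem_Icc.1 hi).1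
    have hiR : (0:ℝ) < (i:ℝ) := by exact_mod_cast Nat.pos_of_ne_zero (by omega)
    exact div_pos (hpos i) (Real.rpow_pos_of_pos hiR _)
  refine ⟨min lam c₂, lt_min hlam hc₂0, ?_⟩
  intro j hj
  have hjR : (0:ℝ) < (j:ℝ) := by exact_mod_cast Nat.pos_of_ne_zero (by omega)
  have he : (0:ℝ) < (j:ℝ) ^ (2*β-α) := Real.rpow_pos_of_pos hjR _
  rcases le_or_gt j j₀ with hle | hlt
  · have hmem : j ∈ Finset.Icc 1 j₀ := Finset.mem_Icc.2 ⟨hj, hle⟩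
    have hinf := Finset.inf'_le (fun i : ℕ => rincr β φ i i / (i:ℝ) ^ (2*β - α)) hmem
    calc min lam c₂ * (j:ℝ) ^ (2*β-α) ≤ c₂ * (j:ℝ) ^ (2*β-α) :=
          mul_le_mul_of_nonneg_right (min_le_right _ _) he.le
      _ ≤ (rincr β φ j j / (j:ℝ) ^ (2*β-α)) * (j:ℝ) ^ (2*β-α) :=
          mul_le_mul_of_nonneg_right (hc₂ ▸ hinf) he.le
      _ = rincr β φ j j := div_mul_cancel₀ _ he.ne'
  · have hceil : ⌈1/h₀⌉₊ ≤ j := le_trans (le_max_right _ _) hlt.le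
    have hjh : 1/h₀ ≤ (j:ℝ) := (Nat.ceil_le).1 hceil
    have hinv : 1/(j:ℝ) ≤ h₀ := by
      rw [div_le_iff₀ hjR]
      rw [div_le_iff₀ hh₀0] at hjh
      linarith
    have h0j : (0:ℝ) < 1/(j:ℝ) := by positivity
    have hk := hkey (1/(j:ℝ)) h0j hinv
    have hdiag := rincr_diag_eq (β:=β) (φ:=φ) hj
    have hfact : ((j:ℝ)+1) ^ (2*β) = (j:ℝ) ^ (2*β) * (1 + 1/(j:ℝ)) ^ (2*β) := by
      rw [← Real.mul_rpow hjR.le (by positivity)]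
      congr 1; field_simp
    have hdivj : ((j:ℝ)+1)/(j:ℝ) = 1 + 1/(j:ℝ) := by field_simp
    have hX : rincr β φ j j
        = (j:ℝ) ^ (2*β) * ((1 + 1/(j:ℝ)) ^ (2*β) * φ 1 + φ 1 - 2 * φ (1 + 1/(j:ℝ))) := by
      rw [hdiag, hfact, hdivj]; ring
    have hpow : (j:ℝ) ^ (2*β) * (1/(j:ℝ)) ^ α = (j:ℝ) ^ (2*β-α) := by
      rw [one_div, Real.inv_rpow hjR.le, ← Real.rpow_neg hjR.le, ← Real.rpow_add hjR]
      ring_nf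
    calc min lam c₂ * (j:ℝ) ^ (2*β-α) ≤ lam * (j:ℝ) ^ (2*β-α) :=
          mul_le_mul_of_nonneg_right (min_le_left _ _) he.le
      _ = (j:ℝ) ^ (2*β) * (lam * (1/(j:ℝ)) ^ α) := by rw [← hpow]; ring
      _ ≤ (j:ℝ) ^ (2*β) * ((1 + 1/(j:ℝ)) ^ (2*β) * φ 1 + φ 1 - 2 * φ (1 + 1/(j:ℝ))) :=
          mul_le_mul_of_nonneg_left hk (Real.rpow_nonneg hjR.le _)
      _ = rincr β φ j j := hX.symm


section offdiag
open Set Filter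

lemma rincr_offdiag_eq {β : ℝ} {φ : ℝ → ℝ} {j k : ℕ} (hk : 1 ≤ k) (hkj : k + 1 ≤ j) :
    rincr β φ j k
      = (((k:ℝ)+1) ^ (2*β) * φ (((j:ℝ)+1)/((k:ℝ)+1)) - (k:ℝ) ^ (2*β) * φ (((j:ℝ)+1)/(k:ℝ)))
      - (((k:ℝ)+1) ^ (2*β) * φ ((j:ℝ)/((k:ℝ)+1)) - (k:ℝ) ^ (2*β) * φ ((j:ℝ)/(k:ℝ))) := by
  have hk0 : (0:ℝ) < (k:ℝ) := by exact_mod_cast Nat.pos_of_ne_zero (by omega)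
  have hj0 : (0:ℝ) < (j:ℝ) := by
    have : 0 < j := by omega
    exact_mod_cast this
  have h1 : (k:ℝ)+1 ≤ (j:ℝ) := by exact_mod_cast hkj
  have h2 : (k:ℝ)+1 ≤ (j:ℝ)+1 := by linarith
  have h3 : (k:ℝ) ≤ (j:ℝ) := by linarith
  have h4 : (k:ℝ) ≤ (j:ℝ)+1 := by linarith
  unfold rincr Rcov
  rw [if_neg (by push_neg; constructor <;> positivity),
      if_neg (by push_neg; constructor <;> positivity),
      if_neg (by push_neg; constructor <;> positivity),
      if_neg (by push_neg; constructor <;> positivity)]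
  rw [min_eq_right h2, max_eq_left h2, min_eq_right h1, max_eq_left h1,
      min_eq_right h4, max_eq_left h4, min_eq_right h3, max_eq_left h3]
  ring

lemma rincr_offdiag_rep {β α lam : ℝ} {φ ψ : ℝ → ℝ} (h1 : CondH1 β α lam φ ψ)
    {j k : ℕ} (hj : 4 ≤ j) (hk : 1 ≤ k) (h3 : 3*k ≤ j) :
    ∃ T S : ℝ, (j:ℝ) < T ∧ T < (j:ℝ)+1 ∧ (k:ℝ) < S ∧ S < (k:ℝ)+1 ∧
      rincr β φ j k = (2*β-1) * S ^ (2*β-2) * deriv φ (T/S)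
        - T * S ^ (2*β-3) * deriv (deriv φ) (T/S) := by
  have hkj : k + 1 ≤ j := by omega
  have h2k2 : 2*(k+1) ≤ j := by omega
  set K : ℝ := (k:ℝ) with hKdef
  set J : ℝ := (j:ℝ) with hJdef
  have hK1 : 1 ≤ K := by rw [hKdef]; exact_mod_cast hk
  have hK0 : 0 < K := by linarith
  have hJ4 : 4 ≤ J := by rw [hJdef]; exact_mod_cast hj
  have hKJ : 2*(K+1) ≤ J := by rw [hKdef, hJdef]; exact_mod_cast h2k2
  set H : ℝ → ℝ := fun t => (K+1) ^ (2*β) * φ (t/(K+1)) - K ^ (2*β) * φ (t/K) with hHdef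
  have hHd : ∀ t ∈ Icc J (J+1), HasDerivAt H
      ((K+1) ^ (2*β) * (deriv φ (t/(K+1)) * (1/(K+1))) - K ^ (2*β) * (deriv φ (t/K) * (1/K))) t := by
    intro t ht
    have ht0 : J ≤ t := ht.1
    have ht1 : (1:ℝ) < t/(K+1) := by
      rw [lt_div_iff₀ (by linarith)]
      linarith
    have ht2 : (1:ℝ) < t/K := by
      rw [lt_div_iff₀ hK0]
      linarith
    have d1 : HasDerivAt (fun t : ℝ => φ (t/(K+1))) (deriv φ (t/(K+1)) * (1/(K+1))) t :=
      (phi_diffAt h1 ht1).hasDerivAt.comp t ((hasDerivAt_id t).div_const (K+1))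
    have d2 : HasDerivAt (fun t : ℝ => φ (t/K)) (deriv φ (t/K) * (1/K)) t :=
      (phi_diffAt h1 ht2).hasDerivAt.comp t ((hasDerivAt_id t).div_const K)
    exact (d1.const_mul ((K+1) ^ (2*β))).sub (d2.const_mul (K ^ (2*β)))
  obtain ⟨T, hT, hTval⟩ := mvt_aux (f := H) (lt_add_one J)
    (fun t ht => (hHd t ht).differentiableAt)
  have hderT := (hHd T (Set.Ioo_subset_Icc_self hT)).deriv
  set F : ℝ → ℝ := fun s => s ^ (2*β-1) * deriv φ (T/s) with hFdef
  have hFd : ∀ s ∈ Icc K (K+1), HasDerivAt F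
      ((2*β-1) * s ^ (2*β-1-1) * deriv φ (T/s)
        + s ^ (2*β-1) * (deriv (deriv φ) (T/s) * (T * (-(s^2)⁻¹)))) s := by
    intro s hs
    have hs0 : 0 < s := lt_of_lt_of_le hK0 hs.1
    have hx1 : 1 < T/s := by
      rw [lt_div_iff₀ hs0]
      have : s ≤ K+1 := hs.2
      nlinarith [hT.1]
    have d1 : HasDerivAt (fun s : ℝ => s ^ (2*β-1)) ((2*β-1) * s ^ (2*β-1-1)) s :=
      Real.hasDerivAt_rpow_const (Or.inl hs0.ne')
    have dinner : HasDerivAt (fun s : ℝ => T/s) (T * (-(s^2)⁻¹)) s := by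
      simpa [div_eq_mul_inv] using (hasDerivAt_inv hs0.ne').const_mul T
    have d2 : HasDerivAt (fun s : ℝ => deriv φ (T/s))
        (deriv (deriv φ) (T/s) * (T * (-(s^2)⁻¹))) s :=
      (deriv_phi_diffAt h1 hx1).hasDerivAt.comp s dinner
    exact d1.mul d2
  obtain ⟨S, hS, hSval⟩ := mvt_aux (f := F) (lt_add_one K)
    (fun s hs => (hFd s hs).differentiableAt)
  have hderS := (hFd S (Set.Ioo_subset_Icc_self hS)).deriv
  refine ⟨T, S, hT.1, hT.2, hS.1, hS.2, ?_⟩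
  have hS0 : 0 < S := lt_of_lt_of_le hK0 hS.1.le
  have e0 : rincr β φ j k = H (J+1) - H J := by
    rw [rincr_offdiag_eq hk hkj]
  have e1 : rincr β φ j k = deriv H T := by
    rw [e0, hTval]; ring
  have c1 : ∀ c : ℝ, 0 < c → c ^ (2*β) * (1/c) = c ^ (2*β-1) := by
    intro c hc
    rw [Real.rpow_sub hc, Real.rpow_one]
    field_simp
  have e2 : deriv H T = F (K+1) - F K := by
    rw [hderT]
    simp only [hFdef]
    have p1 : (K+1) ^ (2*β) * (deriv φ (T/(K+1)) * (1/(K+1)))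
        = (K+1) ^ (2*β-1) * deriv φ (T/(K+1)) := by
      rw [← c1 (K+1) (by linarith)]; ring
    have p2 : K ^ (2*β) * (deriv φ (T/K) * (1/K)) = K ^ (2*β-1) * deriv φ (T/K) := by
      rw [← c1 K hK0]; ring
    rw [p1, p2]
  have e3 : F (K+1) - F K = deriv F S := by rw [hSval]; ring
  have e4 : deriv F S = (2*β-1) * S ^ (2*β-2) * deriv φ (T/S)
      - T * S ^ (2*β-3) * deriv (deriv φ) (T/S) := by
    rw [hderS]
    have q1 : 2*β-1-1 = 2*β-2 := by ring
    rw [q1]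
    have hs23 : S ^ (2*β-1) * (S^2)⁻¹ = S ^ (2*β-3) := by
      rw [← Real.rpow_natCast S 2, ← Real.rpow_neg hS0.le, ← Real.rpow_add hS0]
      congr 1
      push_cast
      ring
    have q2 : S ^ (2*β-1) * (deriv (deriv φ) (T/S) * (T * (-(S^2)⁻¹)))
        = - (T * (S ^ (2*β-1) * (S^2)⁻¹) * deriv (deriv φ) (T/S)) := by ring
    rw [q2, hs23]
    ring
  rw [e1, e2, e3, e4]

end offdiag


section corebound
open Set Filter

lemma two_rpow_le {e : ℝ} (he : e ≤ 3) : (2:ℝ) ^ e ≤ 8 := by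
  calc (2:ℝ) ^ e ≤ (2:ℝ) ^ (3:ℝ) := Real.rpow_le_rpow_of_exponent_le one_le_two he
    _ = 8 := by
      rw [show (3:ℝ) = ((3:ℕ):ℝ) by norm_num, Real.rpow_natCast]
      norm_num

lemma shift_rpow_bound {x e : ℝ} (hx : 2 ≤ x) (he0 : e ≤ 0) (he3 : -3 ≤ e) :
    (x-1) ^ e ≤ 8 * x ^ e := by
  have hx0 : (0:ℝ) < x := by linarith
  have h2 : (0:ℝ) < x/2 := by linarith
  have hxm : x/2 ≤ x - 1 := by linarith
  calc (x-1) ^ e ≤ (x/2) ^ e := Real.rpow_le_rpow_of_nonpos h2 hxm he0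
    _ = x ^ e * ((2:ℝ) ^ e)⁻¹ := by
        rw [Real.div_rpow hx0.le (by norm_num : (0:ℝ) ≤ 2), div_eq_mul_inv]
    _ = x ^ e * (2:ℝ) ^ (-e) := by rw [← Real.rpow_neg (by norm_num : (0:ℝ) ≤ 2)]
    _ ≤ x ^ e * 8 :=
        mul_le_mul_of_nonneg_left (two_rpow_le (by linarith)) (Real.rpow_nonneg hx0.le _)
    _ = 8 * x ^ e := by ring

lemma offdiag_core {β α lam C₁ p : ℝ} {φ ψ : ℝ → ℝ}
    (hβ0 : 0 < β) (hβ1 : β < 1) (hC₁ : 0 < C₁)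
    (hp0 : p ≤ 0) (hp2 : -2 ≤ p)
    (h1 : CondH1 β α lam φ ψ)
    (hb : ∀ x : ℝ, 2 ≤ x → |deriv φ x| ≤ C₁ * (x-1) ^ p ∧
      |deriv (deriv φ) x| ≤ C₁ * (x-1) ^ (p-1))
    {j k : ℕ} (hj : 4 ≤ j) (hk : 1 ≤ k) (h3 : 3*k ≤ j) :
    |rincr β φ j k| ≤ 128*C₁ * (k:ℝ) ^ (2*β-2-p) * (j:ℝ) ^ p := by
  obtain ⟨T, S, hT1, hT2, hS1, hS2, hrep⟩ := rincr_offdiag_rep h1 hj hk h3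
  have h2k2 : 2*(k+1) ≤ j := by omega
  have hK1 : (1:ℝ) ≤ (k:ℝ) := by exact_mod_cast hk
  have hJ4 : (4:ℝ) ≤ (j:ℝ) := by exact_mod_cast hj
  have hKJ : 2*((k:ℝ)+1) ≤ (j:ℝ) := by exact_mod_cast h2k2
  have hS0 : (0:ℝ) < S := by linarith
  have hT0 : (0:ℝ) < T := by linarith
  have hJ0 : (0:ℝ) < (j:ℝ) := by linarith
  have hK0 : (0:ℝ) < (k:ℝ) := by linarith
  have hx2 : 2 ≤ T/S := by
    rw [le_div_iff₀ hS0]; nlinarith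
  set x := T/S with hxdef
  have hx0 : (0:ℝ) < x := lt_of_lt_of_le two_pos hx2
  obtain ⟨hb1, hb2⟩ := hb x hx2
  have e1 : |deriv φ x| ≤ 8*C₁ * x ^ p := by
    calc |deriv φ x| ≤ C₁ * (x-1) ^ p := hb1
      _ ≤ C₁ * (8 * x ^ p) :=
          mul_le_mul_of_nonneg_left (shift_rpow_bound hx2 hp0 (by linarith)) hC₁.le
      _ = 8*C₁ * x ^ p := by ring
  have e2 : |deriv (deriv φ) x| ≤ 8*C₁ * x ^ (p-1) := by
    calc |deriv (deriv φ) x| ≤ C₁ * (x-1) ^ (p-1) := hb2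
      _ ≤ C₁ * (8 * x ^ (p-1)) :=
          mul_le_mul_of_nonneg_left (shift_rpow_bound hx2 (by linarith) (by linarith)) hC₁.le
      _ = 8*C₁ * x ^ (p-1) := by ring
  have habs : |rincr β φ j k|
      ≤ |2*β-1| * S ^ (2*β-2) * |deriv φ x| + T * S ^ (2*β-3) * |deriv (deriv φ) x| := by
    rw [hrep]
    refine le_trans (abs_sub_le_abs_add_abs' _ _) (le_of_eq ?_)
    rw [abs_mul, abs_mul, abs_mul, abs_mul, abs_of_nonneg (Real.rpow_nonneg hS0.le (2*β-2)),
      abs_of_nonneg hT0.le, abs_of_nonneg (Real.rpow_nonneg hS0.le (2*β-3))]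
  set a := 2*β-2-p with hadef
  have hxp : x ^ p = T ^ p * S ^ (-p) := by
    rw [hxdef, Real.div_rpow hT0.le hS0.le, Real.rpow_neg hS0.le, div_eq_mul_inv]
  have hxp1 : x ^ (p-1) = T ^ (p-1) * S ^ (1-p) := by
    rw [hxdef, Real.div_rpow hT0.le hS0.le, show (1-p : ℝ) = -(p-1) from by ring,
      Real.rpow_neg hS0.le, div_eq_mul_inv]
  have hsa : S ^ (2*β-2) * S ^ (-p) = S ^ a := by
    rw [← Real.rpow_add hS0, hadef]; ring_nf
  have hsa' : S ^ (2*β-3) * S ^ (1-p) = S ^ a := by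
    rw [← Real.rpow_add hS0, hadef]; ring_nf
  have htp : T * T ^ (p-1) = T ^ p := by
    nth_rewrite 1 [← Real.rpow_one T]
    rw [← Real.rpow_add hT0]; ring_nf
  have hb2b : |2*β-1| ≤ 1 := abs_le.2 ⟨by linarith, by linarith⟩
  have t1 : |2*β-1| * S ^ (2*β-2) * |deriv φ x| ≤ 8*C₁ * (S ^ a * T ^ p) := by
    calc |2*β-1| * S ^ (2*β-2) * |deriv φ x|
        ≤ 1 * S ^ (2*β-2) * (8*C₁ * x ^ p) := by
          apply mul_le_mul _ e1 (abs_nonneg _) (by positivity)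
          exact mul_le_mul_of_nonneg_right hb2b (Real.rpow_nonneg hS0.le _)
      _ = 8*C₁ * (S ^ (2*β-2) * S ^ (-p)) * T ^ p := by rw [hxp]; ring
      _ = 8*C₁ * (S ^ a * T ^ p) := by rw [hsa]; ring
  have t2 : T * S ^ (2*β-3) * |deriv (deriv φ) x| ≤ 8*C₁ * (S ^ a * T ^ p) := by
    calc T * S ^ (2*β-3) * |deriv (deriv φ) x|
        ≤ T * S ^ (2*β-3) * (8*C₁ * x ^ (p-1)) := by
          apply mul_le_mul_of_nonneg_left e2 (by positivity)
      _ = 8*C₁ * ((S ^ (2*β-3) * S ^ (1-p)) * (T * T ^ (p-1))) := by rw [hxp1]; ring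
      _ = 8*C₁ * (S ^ a * T ^ p) := by rw [hsa', htp]
  have hSa : S ^ a ≤ 8 * (k:ℝ) ^ a := by
    rcases le_or_gt 0 a with ha | ha
    · calc S ^ a ≤ (2*(k:ℝ)) ^ a := Real.rpow_le_rpow hS0.le (by linarith) ha
        _ = 2 ^ a * (k:ℝ) ^ a := Real.mul_rpow (by norm_num) hK0.le
        _ ≤ 8 * (k:ℝ) ^ a := by
            apply mul_le_mul_of_nonneg_right _ (Real.rpow_nonneg hK0.le _)
            exact two_rpow_le (by rw [hadef]; linarith)
    · calc S ^ a ≤ (k:ℝ) ^ a := Real.rpow_le_rpow_of_nonpos hK0 hS1.le ha.le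
        _ ≤ 8 * (k:ℝ) ^ a := by nlinarith [Real.rpow_pos_of_pos hK0 a]
  have hTp : T ^ p ≤ (j:ℝ) ^ p := Real.rpow_le_rpow_of_nonpos hJ0 hT1.le hp0
  calc |rincr β φ j k| ≤ 8*C₁ * (S ^ a * T ^ p) + 8*C₁ * (S ^ a * T ^ p) := by
        refine le_trans habs ?_
        exact add_le_add t1 t2
    _ = 16*C₁ * (S ^ a * T ^ p) := by ring
    _ ≤ 16*C₁ * ((8 * (k:ℝ) ^ a) * (j:ℝ) ^ p) := by
        apply mul_le_mul_of_nonneg_left _ (by positivity)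
        apply mul_le_mul hSa hTp (Real.rpow_nonneg hT0.le _) (by positivity)
    _ = 128*C₁ * (k:ℝ) ^ a * (j:ℝ) ^ p := by ring

end corebound


section rhobound
open Set Filter

lemma rho_bound {β α lam ν C₁ : ℝ} {φ ψ : ℝ → ℝ}
    (hβ0 : 0 < β) (hβ1 : β < 1) (hα0 : 0 < α) (hα2β : α ≤ 2 * β) (hlam : 0 < lam)
    (h1 : CondH1 β α lam φ ψ) (h2 : CondH2 α ν C₁ φ)
    (hpos : ∀ j : ℕ, 0 < rincr β φ j j) :
    ∃ Kc : ℝ, 0 < Kc ∧ ∀ j k : ℕ, 4 ≤ j → 1 ≤ k → 3*k ≤ j →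
      |rhoincr β φ j k| ≤ Kc * (j:ℝ) ^ (-(min (2-α) (ν+β-α/2))) := by
  obtain ⟨c, hc0, hc⟩ := diag_lower hβ0 hβ1 hα0 hα2β hlam h1 hpos
  obtain ⟨hC₁, hν1, hν2, hbnd⟩ := h2
  set μ := min (2-α) (ν+β-α/2) with hμ
  set γ := β - α/2 with hγ
  have hγ0 : 0 ≤ γ := by rw [hγ]; linarith
  have hα2 : α < 2 := by linarith
  have hμ1 : μ ≤ 2 - α := min_le_left _ _
  have hμ2 : μ ≤ ν + γ := by rw [hγ]; exact le_trans (min_le_right _ _) (by ring_nf; rfl)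
  refine ⟨128*C₁/c, by positivity, ?_⟩
  intro j k hj hk h3
  have hK1 : (1:ℝ) ≤ (k:ℝ) := by exact_mod_cast hk
  have hJ4 : (4:ℝ) ≤ (j:ℝ) := by exact_mod_cast hj
  have hJ1 : (1:ℝ) ≤ (j:ℝ) := by linarith
  have hKJr : (k:ℝ) ≤ (j:ℝ) := by
    have : k ≤ j := by omega
    exact_mod_cast this
  have hJ0 : (0:ℝ) < (j:ℝ) := by linarith
  have hK0 : (0:ℝ) < (k:ℝ) := by linarith
  -- lower bound for the xi's
  have hxi : ∀ m : ℕ, 1 ≤ m → Real.sqrt c * (m:ℝ) ^ γ ≤ Real.sqrt (rincr β φ m m) := by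
    intro m hm
    have hm0 : (0:ℝ) < (m:ℝ) := by exact_mod_cast Nat.pos_of_ne_zero (by omega)
    have hsq : ((m:ℝ) ^ γ) * ((m:ℝ) ^ γ) = (m:ℝ) ^ (2*β-α) := by
      rw [← Real.rpow_add hm0]; congr 1; rw [hγ]; ring
    calc Real.sqrt c * (m:ℝ) ^ γ
        = Real.sqrt c * Real.sqrt ((m:ℝ) ^ (2*β-α)) := by
          rw [← hsq, Real.sqrt_mul_self (Real.rpow_nonneg hm0.le _)]
      _ = Real.sqrt (c * (m:ℝ) ^ (2*β-α)) := (Real.sqrt_mul hc0.le _).symm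
      _ ≤ Real.sqrt (rincr β φ m m) := Real.sqrt_le_sqrt (hc m hm)
  have hxj := hxi j (by omega)
  have hxk := hxi k hk
  have hDl : c * ((j:ℝ) ^ γ * (k:ℝ) ^ γ)
      ≤ Real.sqrt (rincr β φ j j) * Real.sqrt (rincr β φ k k) := by
    have h1' : 0 ≤ Real.sqrt c * (j:ℝ) ^ γ := by positivity
    have hcc : c = Real.sqrt c * Real.sqrt c := (Real.mul_self_sqrt hc0.le).symm
    calc c * ((j:ℝ) ^ γ * (k:ℝ) ^ γ)
        = (Real.sqrt c * (j:ℝ) ^ γ) * (Real.sqrt c * (k:ℝ) ^ γ) := by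
          nth_rewrite 1 [hcc]; ring
      _ ≤ Real.sqrt (rincr β φ j j) * Real.sqrt (rincr β φ k k) :=
          mul_le_mul hxj hxk (by positivity) (Real.sqrt_nonneg _)
  have hD0 : (0:ℝ) < c * ((j:ℝ) ^ γ * (k:ℝ) ^ γ) := by positivity
  have hDpos : (0:ℝ) < Real.sqrt (rincr β φ j j) * Real.sqrt (rincr β φ k k) :=
    lt_of_lt_of_le hD0 hDl
  -- reduce to a bound on rincr
  have hred : ∀ B : ℝ, |rincr β φ j k| ≤ B * (c * ((j:ℝ) ^ γ * (k:ℝ) ^ γ)) →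
      |rhoincr β φ j k| ≤ B := by
    intro B hB
    have hB0 : 0 ≤ B := by
      by_contra hneg
      push_neg at hneg
      nlinarith [abs_nonneg (rincr β φ j k)]
    unfold rhoincr
    rw [abs_div, abs_of_pos hDpos, div_le_iff₀ hDpos]
    calc |rincr β φ j k| ≤ B * (c * ((j:ℝ) ^ γ * (k:ℝ) ^ γ)) := hB
      _ ≤ B * (Real.sqrt (rincr β φ j j) * Real.sqrt (rincr β φ k k)) :=
          mul_le_mul_of_nonneg_left hDl hB0
  apply hred
  have hBc : (128*C₁/c * (j:ℝ) ^ (-μ)) * (c * ((j:ℝ) ^ γ * (k:ℝ) ^ γ))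
      = 128*C₁ * ((j:ℝ) ^ (-μ) * (j:ℝ) ^ γ * (k:ℝ) ^ γ) := by
    field_simp
  rw [hBc]
  rcases lt_or_ge α 1 with hα1 | hα1
  · -- α < 1 : use p = -ν
    have hbp : ∀ x:ℝ, 2 ≤ x → |deriv φ x| ≤ C₁*(x-1) ^ (-ν) ∧
        |deriv (deriv φ) x| ≤ C₁*(x-1) ^ (-ν-1) := fun x hx => (hbnd x hx).1 hα1
    have hcore := offdiag_core hβ0 hβ1 hC₁ (by linarith : -ν ≤ 0) (by linarith : -2 ≤ -ν)
      h1 (fun x hx => ⟨(hbp x hx).1, by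
        rw [show -ν - 1 = -ν - 1 from rfl]; exact (hbp x hx).2⟩) hj hk h3
    have haa : 2*β-2-(-ν) = γ + (β + ν - 2 + α/2) := by rw [hγ]; ring
    set e' := β + ν - 2 + α/2 with he'
    have hsplit : (k:ℝ) ^ (2*β-2-(-ν)) = (k:ℝ) ^ γ * (k:ℝ) ^ e' := by
      rw [haa, Real.rpow_add hK0]
    refine le_trans hcore ?_
    rw [hsplit]
    rcases le_or_gt 0 e' with he0 | he0
    · have hKe : (k:ℝ) ^ e' ≤ (j:ℝ) ^ e' := Real.rpow_le_rpow hK0.le hKJr he0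
      have hJe : (j:ℝ) ^ e' * (j:ℝ) ^ (-ν) ≤ (j:ℝ) ^ (-μ) * (j:ℝ) ^ γ := by
        rw [← Real.rpow_add hJ0, ← Real.rpow_add hJ0]
        apply Real.rpow_le_rpow_of_exponent_le hJ1
        rw [he', hγ]
        have := hμ1
        linarith
      calc 128*C₁ * ((k:ℝ) ^ γ * (k:ℝ) ^ e') * (j:ℝ) ^ (-ν)
          = 128*C₁ * ((k:ℝ) ^ γ * ((k:ℝ) ^ e' * (j:ℝ) ^ (-ν))) := by ring
        _ ≤ 128*C₁ * ((k:ℝ) ^ γ * ((j:ℝ) ^ e' * (j:ℝ) ^ (-ν))) := by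
            apply mul_le_mul_of_nonneg_left _ (by positivity)
            apply mul_le_mul_of_nonneg_left _ (Real.rpow_nonneg hK0.le _)
            exact mul_le_mul_of_nonneg_right hKe (Real.rpow_nonneg hJ0.le _)
        _ ≤ 128*C₁ * ((k:ℝ) ^ γ * ((j:ℝ) ^ (-μ) * (j:ℝ) ^ γ)) := by
            apply mul_le_mul_of_nonneg_left _ (by positivity)
            exact mul_le_mul_of_nonneg_left hJe (Real.rpow_nonneg hK0.le _)
        _ = 128*C₁ * ((j:ℝ) ^ (-μ) * (j:ℝ) ^ γ * (k:ℝ) ^ γ) := by ring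
    · have hKe : (k:ℝ) ^ e' ≤ 1 := Real.rpow_le_one_of_one_le_of_nonpos hK1 he0.le
      have hJe : (j:ℝ) ^ (-ν) ≤ (j:ℝ) ^ (-μ) * (j:ℝ) ^ γ := by
        rw [← Real.rpow_add hJ0]
        apply Real.rpow_le_rpow_of_exponent_le hJ1
        linarith [hμ2]
      calc 128*C₁ * ((k:ℝ) ^ γ * (k:ℝ) ^ e') * (j:ℝ) ^ (-ν)
          = 128*C₁ * ((k:ℝ) ^ γ * ((k:ℝ) ^ e' * (j:ℝ) ^ (-ν))) := by ring
        _ ≤ 128*C₁ * ((k:ℝ) ^ γ * (1 * ((j:ℝ) ^ (-μ) * (j:ℝ) ^ γ))) := by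
            apply mul_le_mul_of_nonneg_left _ (by positivity)
            apply mul_le_mul_of_nonneg_left _ (Real.rpow_nonneg hK0.le _)
            exact mul_le_mul hKe hJe (Real.rpow_nonneg hJ0.le _) zero_le_one
        _ = 128*C₁ * ((j:ℝ) ^ (-μ) * (j:ℝ) ^ γ * (k:ℝ) ^ γ) := by ring
  · -- α ≥ 1 : use p = α - 2
    have hcore := offdiag_core hβ0 hβ1 hC₁ (by linarith : α-2 ≤ 0) (by linarith : -2 ≤ α-2)
      h1 (fun x hx => ⟨((hbnd x hx).2 hα1).1, by
        rw [show α-2-1 = α-3 from by ring]; exact ((hbnd x hx).2 hα1).2⟩) hj hk h3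
    have haa : 2*β-2-(α-2) = γ + γ := by rw [hγ]; ring
    have hsplit : (k:ℝ) ^ (2*β-2-(α-2)) = (k:ℝ) ^ γ * (k:ℝ) ^ γ := by
      rw [haa, Real.rpow_add hK0]
    refine le_trans hcore ?_
    rw [hsplit]
    have hKe : (k:ℝ) ^ γ ≤ (j:ℝ) ^ γ := Real.rpow_le_rpow hK0.le hKJr hγ0
    have hJe : (j:ℝ) ^ (α-2) ≤ (j:ℝ) ^ (-μ) :=
      Real.rpow_le_rpow_of_exponent_le hJ1 (by linarith [hμ1])
    calc 128*C₁ * ((k:ℝ) ^ γ * (k:ℝ) ^ γ) * (j:ℝ) ^ (α-2)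
        = 128*C₁ * ((k:ℝ) ^ γ * ((k:ℝ) ^ γ * (j:ℝ) ^ (α-2))) := by ring
      _ ≤ 128*C₁ * ((k:ℝ) ^ γ * ((j:ℝ) ^ γ * (j:ℝ) ^ (-μ))) := by
          apply mul_le_mul_of_nonneg_left _ (by positivity)
          apply mul_le_mul_of_nonneg_left _ (Real.rpow_nonneg hK0.le _)
          exact mul_le_mul hKe hJe (Real.rpow_nonneg hJ0.le _) (Real.rpow_nonneg hJ0.le _)
      _ = 128*C₁ * ((j:ℝ) ^ (-μ) * (j:ℝ) ^ γ * (k:ℝ) ^ γ) := by ring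

end rhobound

/-- Step 4 in the proof of Lemma 5.2: far-off-diagonal pairs (with `k ≤ j/3`)
do not contribute to the asymptotic variance: under (H.1), (H.2) and `r(j,j) > 0`,
for `q ≥ 2` with `α < 2 - 1/q` and `t > 0`,
`(1/n) Σ_{j=3}^{⌊nt⌋-1} Σ_{k=1}^{⌊j/3⌋} |ρ(j,k)|^q → 0`. -/
theorem stmt_10 (β α lam ν C₁ : ℝ) (φ ψ : ℝ → ℝ)
    (hβ0 : 0 < β) (hβ1 : β < 1) (hα0 : 0 < α) (hα2β : α ≤ 2 * β) (hlam : 0 < lam)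
    (h1 : CondH1 β α lam φ ψ) (h2 : CondH2 α ν C₁ φ)
    (hpos : ∀ j : ℕ, 0 < rincr β φ j j)
    (q : ℕ) (hq : 2 ≤ q) (hαq : α < 2 - 1 / (q : ℝ)) (t : ℝ) (ht : 0 < t) :
    Tendsto (fun n : ℕ => (1 / (n : ℝ)) *
        ∑ j ∈ Finset.Ico 3 ⌊(n : ℝ) * t⌋₊,
          ∑ k ∈ Finset.Icc 1 (j / 3),
            |rhoincr β φ j k| ^ q)
      atTop (nhds 0) := by
  obtain ⟨Kc, hKc0, hKc⟩ := rho_bound hβ0 hβ1 hα0 hα2β hlam h1 h2 hpos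
  set μ := min (2-α) (ν+β-α/2) with hμ
  have hq0 : (0:ℝ) < (q:ℝ) := by exact_mod_cast (by omega : 0 < q)
  have hμq : 1 < μ * q := by
    have h2α : 1/(q:ℝ) < 2 - α := by linarith
    have hν1 : 1 < ν := h2.2.1
    have hβα : 0 ≤ β - α/2 := by linarith
    have hq2 : (2:ℝ) ≤ (q:ℝ) := by exact_mod_cast hq
    have hμl : 1/(q:ℝ) < μ := by
      apply lt_min h2α
      have h12 : 1/(q:ℝ) ≤ 1/2 := one_div_le_one_div_of_le (by norm_num) hq2
      linarith
    calc (1:ℝ) = (1/(q:ℝ)) * q := by field_simp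
      _ < μ * q := mul_lt_mul_of_pos_right hμl hq0
  set S : ℕ → ℝ := fun j => ∑ k ∈ Finset.Icc 1 (j / 3), |rhoincr β φ j k| ^ q with hS
  have hS0 : ∀ j, 0 ≤ S j := fun j => Finset.sum_nonneg fun k _ => pow_nonneg (abs_nonneg _) q
  have hSb : ∀ j : ℕ, 4 ≤ j → S j ≤ Kc^q * (j:ℝ) ^ (1 - μ*q) := by
    intro j hj
    have hJ0 : (0:ℝ) < (j:ℝ) := by exact_mod_cast (by omega : 0 < j)
    have hterm : ∀ k ∈ Finset.Icc 1 (j/3), |rhoincr β φ j k| ^ q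
        ≤ Kc ^ q * (j:ℝ) ^ (-(μ*q)) := by
      intro k hkmem
      obtain ⟨hk1, hk3⟩ := Finset.mem_Icc.1 hkmem
      have h3k : 3*k ≤ j := by
        have := (Nat.le_div_iff_mul_le (by norm_num : 0 < 3)).1 hk3
        omega
      have hb := hKc j k hj hk1 h3k
      calc |rhoincr β φ j k| ^ q ≤ (Kc * (j:ℝ) ^ (-μ)) ^ q :=
            pow_le_pow_left₀ (abs_nonneg _) hb q
        _ = Kc^q * ((j:ℝ) ^ (-μ))^q := mul_pow _ _ q
        _ = Kc^q * (j:ℝ) ^ (-(μ*q)) := by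
            rw [← Real.rpow_natCast ((j:ℝ) ^ (-μ)) q, ← Real.rpow_mul hJ0.le]
            congr 1
            ring
    calc S j ≤ ∑ _k ∈ Finset.Icc 1 (j/3), Kc^q * (j:ℝ) ^ (-(μ*q)) :=
          Finset.sum_le_sum hterm
      _ = ((Finset.Icc 1 (j/3)).card : ℝ) * (Kc^q * (j:ℝ) ^ (-(μ*q))) := by
          rw [Finset.sum_const, nsmul_eq_mul]
      _ ≤ (j:ℝ) * (Kc^q * (j:ℝ) ^ (-(μ*q))) := by
          apply mul_le_mul_of_nonneg_right _ (by positivity)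
          rw [Nat.card_Icc]
          have hcard : j/3 + 1 - 1 ≤ j := by omega
          exact_mod_cast hcard
      _ = Kc^q * ((j:ℝ) ^ (1:ℝ) * (j:ℝ) ^ (-(μ*q))) := by rw [Real.rpow_one]; ring
      _ = Kc^q * (j:ℝ) ^ (1-μ*q) := by
          rw [← Real.rpow_add hJ0]
          ring_nf
  have hStend : Tendsto S atTop (nhds 0) := by
    have hg : Tendsto (fun j : ℕ => Kc^q * (j:ℝ) ^ (1 - μ*q)) atTop (nhds 0) := by
      have h1' : Tendsto (fun x : ℝ => x ^ (1 - μ*q)) atTop (nhds 0) := by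
        have h2' := tendsto_rpow_neg_atTop (y := μ*q - 1) (by linarith)
        simpa [show -(μ*q-1) = 1-μ*q from by ring] using h2'
      have h3' := (h1'.comp tendsto_natCast_atTop_atTop).const_mul (Kc^q)
      simpa using h3'
    apply squeeze_zero' ?_ ?_ hg
    · filter_upwards with j using hS0 j
    · filter_upwards [eventually_ge_atTop 4] with j hj using hSb j hj
  have hces : Tendsto (fun m : ℕ => (m:ℝ)⁻¹ * ∑ j ∈ Finset.range m, S j) atTop (nhds 0) :=
    hStend.cesaro
  have hfloor : Tendsto (fun n : ℕ => ⌊(n:ℝ)*t⌋₊) atTop atTop := by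
    have h4 := tendsto_nat_floor_mul_atTop t ht
    simpa [mul_comm] using h4
  have hratio : Tendsto (fun n : ℕ => (⌊(n:ℝ)*t⌋₊ : ℝ)/(n:ℝ)) atTop (nhds t) := by
    have h5 := (tendsto_nat_floor_mul_div_atTop (le_of_lt ht)).comp
      (tendsto_natCast_atTop_atTop (R := ℝ))
    simpa [Function.comp_def, mul_comm] using h5
  have hw : Tendsto (fun n : ℕ => (⌊(n:ℝ)*t⌋₊:ℝ)/(n:ℝ)
      * ((⌊(n:ℝ)*t⌋₊:ℝ)⁻¹ * ∑ j ∈ Finset.range ⌊(n:ℝ)*t⌋₊, S j)) atTop (nhds (t*0)) :=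
    hratio.mul (hces.comp hfloor)
  rw [mul_zero] at hw
  apply tendsto_of_tendsto_of_tendsto_of_le_of_le' tendsto_const_nhds hw ?_ ?_
  · filter_upwards with n
    apply mul_nonneg (by positivity)
    exact Finset.sum_nonneg fun j _ => hS0 j
  · filter_upwards with n
    rcases Nat.eq_zero_or_pos ⌊(n:ℝ)*t⌋₊ with hm0 | hm0
    · simp [hm0]
    · have hmn : (0:ℝ) < (⌊(n:ℝ)*t⌋₊:ℝ) := by exact_mod_cast hm0
      rcases Nat.eq_zero_or_pos n with hn0 | hn0
      · simp [hn0]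
      · have hn0' : (0:ℝ) < (n:ℝ) := by exact_mod_cast hn0
        have heq : (⌊(n:ℝ)*t⌋₊:ℝ)/(n:ℝ) * ((⌊(n:ℝ)*t⌋₊:ℝ)⁻¹ * ∑ j ∈ Finset.range ⌊(n:ℝ)*t⌋₊, S j)
            = (1/(n:ℝ)) * ∑ j ∈ Finset.range ⌊(n:ℝ)*t⌋₊, S j := by
          field_simp
        rw [heq]
        apply mul_le_mul_of_nonneg_left _ (by positivity)
        apply Finset.sum_le_sum_of_subset_of_nonneg
        · intro x hx
          exact Finset.mem_range.2 (Finset.mem_Ico.1 hx).2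
        · intro j _ _
          exact hS0 j
end
end

section
/- Let H ∈ (0,1) and K ∈ (0,1), and let φ(x) := 2^{-K}((1 + x^{2H})^K - (x-1)^{2HK}) for x ≥ 1. Then there exists a constant C > 0 such that for all x ≥ 2: |φ'(x)| ≤ C( (x-1)^{2HK-2} + (x-1)^{2HK-2H-1} ) and |φ''(x)| ≤ C( (x-1)^{2HK-3} + (x-1)^{2HK-2H-2} ). -/
noncomputable section

open Real

private lemma gap_bound {p : ℝ} (hp : p ≤ 1) {s : ℝ} (hs : 1 ≤ s) :
    |(s + 1) ^ p - s ^ p| ≤ |p| * s ^ (p - 1) := by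
  have hs0 : (0:ℝ) < s := lt_of_lt_of_le one_pos hs
  have key := Convex.norm_image_sub_le_of_norm_hasDerivWithin_le
    (f := fun t : ℝ => t ^ p) (f' := fun t : ℝ => p * t ^ (p - 1))
    (C := |p| * s ^ (p - 1)) (s := Set.Icc s (s + 1))
    (fun t ht => (Real.hasDerivAt_rpow_const
      (Or.inl (lt_of_lt_of_le hs0 ht.1).ne')).hasDerivWithinAt)
    (fun t ht => by
      rw [Real.norm_eq_abs, abs_mul, abs_of_nonneg (Real.rpow_nonneg
        (le_of_lt (lt_of_lt_of_le hs0 ht.1)) _)]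
      exact mul_le_mul_of_nonneg_left
        (Real.rpow_le_rpow_of_nonpos hs0 ht.1 (by linarith)) (abs_nonneg p))
    (convex_Icc _ _)
    (Set.left_mem_Icc.mpr (by linarith))
    (Set.right_mem_Icc.mpr (by linarith))
  simpa using key

set_option maxHeartbeats 1000000 in
/-- Derivative bounds verifying condition (H.2) for the bifractional Brownian motion:
for `H, K ∈ (0,1)` and `φ(x) = 2^{-K}((1+x^{2H})^K - (x-1)^{2HK})`, one has, for `x ≥ 2`,
`|φ'(x)| ≤ C((x-1)^{2HK-2} + (x-1)^{2HK-2H-1})` and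
`|φ''(x)| ≤ C((x-1)^{2HK-3} + (x-1)^{2HK-2H-2})`. -/
theorem stmt_13 (H K : ℝ) (hH0 : 0 < H) (hH1 : H < 1) (hK0 : 0 < K) (hK1 : K < 1)
    (φ : ℝ → ℝ)
    (hφ : ∀ x : ℝ, 1 ≤ x →
      φ x = (2 : ℝ) ^ (-K) * ((1 + x ^ (2 * H)) ^ K - (x - 1) ^ (2 * H * K))) :
    ∃ C : ℝ, 0 < C ∧ ∀ x : ℝ, 2 ≤ x →
      |deriv φ x| ≤ C * ((x - 1) ^ (2 * H * K - 2) + (x - 1) ^ (2 * H * K - 2 * H - 1)) ∧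
      |deriv (deriv φ) x| ≤
        C * ((x - 1) ^ (2 * H * K - 3) + (x - 1) ^ (2 * H * K - 2 * H - 2)) := by
  set a := 2 * H with ha
  have ha0 : 0 < a := by positivity
  have ha2 : a < 2 := by simp only [ha]; linarith
  set c := (2:ℝ) ^ (-K) with hc
  have hc0 : 0 < c := Real.rpow_pos_of_pos two_pos _
  have hc1 : c ≤ 1 := Real.rpow_le_one_of_one_le_of_nonpos one_le_two (by linarith)
  set f : ℝ → ℝ := fun y => c * ((1 + y ^ a) ^ K - (y - 1) ^ (a * K)) with hf
  set f1 : ℝ → ℝ := fun y =>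
    c * (a * K) * (y ^ (a - 1) * (1 + y ^ a) ^ (K - 1) - (y - 1) ^ (a * K - 1)) with hf1
  set f2 : ℝ → ℝ := fun y =>
    c * (a * K) * ((a - 1) * y ^ (a - 2) * (1 + y ^ a) ^ (K - 1)
      + a * (K - 1) * y ^ (2 * a - 2) * (1 + y ^ a) ^ (K - 2)
      - (a * K - 1) * (y - 1) ^ (a * K - 2)) with hf2
  -- derivative computations
  have hder1 : ∀ x : ℝ, 1 < x → HasDerivAt f (f1 x) x := by
    intro x hx
    have hx0 : (0:ℝ) < x := by linarith
    have hxm : (0:ℝ) < x - 1 := by linarith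
    have hxa : (0:ℝ) < x ^ a := Real.rpow_pos_of_pos hx0 _
    have h1xa : (0:ℝ) < 1 + x ^ a := by linarith
    have d1 : HasDerivAt (fun y : ℝ => y ^ a) (a * x ^ (a - 1)) x :=
      Real.hasDerivAt_rpow_const (Or.inl hx0.ne')
    have d2 : HasDerivAt (fun y : ℝ => 1 + y ^ a) (a * x ^ (a - 1)) x := d1.const_add 1
    have d3 : HasDerivAt (fun y : ℝ => (1 + y ^ a) ^ K)
        ((a * x ^ (a - 1)) * K * (1 + x ^ a) ^ (K - 1)) x := d2.rpow_const (Or.inl h1xa.ne')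
    have d4 : HasDerivAt (fun y : ℝ => (y - 1) ^ (a * K))
        (1 * (a * K) * (x - 1) ^ (a * K - 1)) x :=
      ((hasDerivAt_id x).sub_const 1).rpow_const (Or.inl hxm.ne')
    have := (d3.sub d4).const_mul c
    refine this.congr_deriv ?_
    simp only [hf1]; ring
  have hder2 : ∀ x : ℝ, 1 < x → HasDerivAt f1 (f2 x) x := by
    intro x hx
    have hx0 : (0:ℝ) < x := by linarith
    have hxm : (0:ℝ) < x - 1 := by linarith
    have hxa : (0:ℝ) < x ^ a := Real.rpow_pos_of_pos hx0 _
    have h1xa : (0:ℝ) < 1 + x ^ a := by linarith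
    have d2 : HasDerivAt (fun y : ℝ => 1 + y ^ a) (a * x ^ (a - 1)) x :=
      (Real.hasDerivAt_rpow_const (Or.inl hx0.ne')).const_add 1
    have e1 : HasDerivAt (fun y : ℝ => y ^ (a - 1)) ((a - 1) * x ^ (a - 1 - 1)) x :=
      Real.hasDerivAt_rpow_const (Or.inl hx0.ne')
    have e2 : HasDerivAt (fun y : ℝ => (1 + y ^ a) ^ (K - 1))
        ((a * x ^ (a - 1)) * (K - 1) * (1 + x ^ a) ^ (K - 1 - 1)) x :=
      d2.rpow_const (Or.inl h1xa.ne')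
    have e3 := e1.mul e2
    have e4 : HasDerivAt (fun y : ℝ => (y - 1) ^ (a * K - 1))
        (1 * (a * K - 1) * (x - 1) ^ (a * K - 1 - 1)) x :=
      ((hasDerivAt_id x).sub_const 1).rpow_const (Or.inl hxm.ne')
    have := (e3.sub e4).const_mul (c * (a * K))
    refine this.congr_deriv ?_
    rw [show a - 1 - 1 = a - 2 from by ring, show K - 1 - 1 = K - 2 from by ring,
      show a * K - 1 - 1 = a * K - 2 from by ring]
    have hxx : x ^ (a - 1) * x ^ (a - 1) = x ^ (2 * a - 2) := by
      rw [← Real.rpow_add hx0]; ring_nf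
    simp only [hf2]
    linear_combination (c * (a * K) * a * (K - 1) * (1 + x ^ a) ^ (K - 2)) * hxx
  have hmem : ∀ x : ℝ, 1 < x → Set.Ioi (1:ℝ) ∈ nhds x := fun x hx => isOpen_Ioi.mem_nhds hx
  have hd1 : ∀ x : ℝ, 1 < x → deriv φ x = f1 x := by
    intro x hx
    have heq : φ =ᶠ[nhds x] f :=
      Filter.eventuallyEq_of_mem (hmem x hx) (fun y hy => hφ y (le_of_lt hy))
    exact heq.deriv_eq.trans (hder1 x hx).deriv
  have hd2 : ∀ x : ℝ, 1 < x → deriv (deriv φ) x = f2 x := by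
    intro x hx
    have heq : deriv φ =ᶠ[nhds x] f1 :=
      Filter.eventuallyEq_of_mem (hmem x hx) (fun y hy => hd1 y hy)
    exact heq.deriv_eq.trans (hder2 x hx).deriv
  -- bounds
  refine ⟨10, by norm_num, fun x hx => ?_⟩
  have hx1 : (1:ℝ) < x := by linarith
  have hx0 : (0:ℝ) < x := by linarith
  have hxm : (0:ℝ) < x - 1 := by linarith
  have hxm1 : (1:ℝ) ≤ x - 1 := by linarith
  have hxa1 : (1:ℝ) ≤ x ^ a := Real.one_le_rpow (by linarith) ha0.le
  have hxa0 : (0:ℝ) < x ^ a := by linarith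
  have haK2 : a * K < 2 := by nlinarith
  have haK0 : 0 < a * K := by positivity
  have hcaK : c * (a * K) ≤ 2 := by nlinarith
  have hcaK0 : 0 < c * (a * K) := by positivity
  -- base monotonicity for nonpositive exponents
  have hbase : ∀ p : ℝ, p ≤ 0 → x ^ p ≤ (x - 1) ^ p := fun p hp =>
    Real.rpow_le_rpow_of_nonpos hxm (by linarith) hp
  have hpos : ∀ p : ℝ, (0:ℝ) < (x - 1) ^ p := fun p => Real.rpow_pos_of_pos hxm p
  constructor
  · rw [hd1 x hx1]
    have hsplit : x ^ (a - 1) * (1 + x ^ a) ^ (K - 1) - (x - 1) ^ (a * K - 1)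
        = x ^ (a - 1) * ((1 + x ^ a) ^ (K - 1) - (x ^ a) ^ (K - 1))
          + (x ^ (a * K - 1) - (x - 1) ^ (a * K - 1)) := by
      have h1 : x ^ (a - 1) * (x ^ a) ^ (K - 1) = x ^ (a * K - 1) := by
        rw [← Real.rpow_mul hx0.le, ← Real.rpow_add hx0]; ring_nf
      linear_combination h1
    have e1 : |(1 + x ^ a) ^ (K - 1) - (x ^ a) ^ (K - 1)| ≤ |K - 1| * (x ^ a) ^ (K - 2) := by
      have := gap_bound (p := K - 1) (by linarith) hxa1
      rwa [show K - 1 - 1 = K - 2 from by ring, add_comm (x ^ a) 1] at this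
    have e2 : |x ^ (a * K - 1) - (x - 1) ^ (a * K - 1)| ≤ |a * K - 1| * (x - 1) ^ (a * K - 2) := by
      have := gap_bound (p := a * K - 1) (by linarith) hxm1
      rwa [show x - 1 + 1 = x from by ring, show a * K - 1 - 1 = a * K - 2 from by ring] at this
    have hterm1 : |x ^ (a - 1) * ((1 + x ^ a) ^ (K - 1) - (x ^ a) ^ (K - 1))|
        ≤ (x - 1) ^ (a * K - a - 1) := by
      rw [abs_mul, abs_of_nonneg (Real.rpow_nonneg hx0.le _)]
      have hmul : x ^ (a - 1) * (x ^ a) ^ (K - 2) = x ^ (a * K - a - 1) := by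
        rw [← Real.rpow_mul hx0.le, ← Real.rpow_add hx0]; ring_nf
      calc x ^ (a - 1) * |(1 + x ^ a) ^ (K - 1) - (x ^ a) ^ (K - 1)|
          ≤ x ^ (a - 1) * (|K - 1| * (x ^ a) ^ (K - 2)) :=
            mul_le_mul_of_nonneg_left e1 (Real.rpow_nonneg hx0.le _)
        _ = |K - 1| * x ^ (a * K - a - 1) := by linear_combination |K - 1| * hmul
        _ ≤ 1 * (x - 1) ^ (a * K - a - 1) := by
            refine mul_le_mul (abs_le.mpr ⟨by linarith, by linarith⟩)
              (hbase _ (by nlinarith)) (Real.rpow_nonneg hx0.le _) one_pos.le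
        _ = (x - 1) ^ (a * K - a - 1) := one_mul _
    have hterm2 : |x ^ (a * K - 1) - (x - 1) ^ (a * K - 1)| ≤ (x - 1) ^ (a * K - 2) := by
      refine e2.trans ?_
      calc |a * K - 1| * (x - 1) ^ (a * K - 2)
          ≤ 1 * (x - 1) ^ (a * K - 2) :=
            mul_le_mul_of_nonneg_right (abs_le.mpr ⟨by linarith, by linarith⟩) (hpos _).le
        _ = _ := one_mul _
    calc |f1 x| = c * (a * K) * |x ^ (a - 1) * ((1 + x ^ a) ^ (K - 1) - (x ^ a) ^ (K - 1))
          + (x ^ (a * K - 1) - (x - 1) ^ (a * K - 1))| := by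
          simp only [hf1]
          rw [hsplit, abs_mul, abs_of_pos hcaK0]
      _ ≤ 2 * ((x - 1) ^ (a * K - a - 1) + (x - 1) ^ (a * K - 2)) := by
          refine mul_le_mul hcaK (le_trans (abs_add_le _ _) (add_le_add hterm1 hterm2))
            (abs_nonneg _) (by norm_num)
      _ ≤ 10 * ((x - 1) ^ (a * K - 2) + (x - 1) ^ (a * K - a - 1)) := by
          nlinarith [hpos (a * K - 2), hpos (a * K - a - 1)]
  · rw [hd2 x hx1]
    have h1 : x ^ (a - 2) * (x ^ a) ^ (K - 1) = x ^ (a * K - 2) := by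
      rw [← Real.rpow_mul hx0.le, ← Real.rpow_add hx0]; ring_nf
    have h2 : x ^ (2 * a - 2) * (x ^ a) ^ (K - 2) = x ^ (a * K - 2) := by
      rw [← Real.rpow_mul hx0.le, ← Real.rpow_add hx0]; ring_nf
    have hsplit : (a - 1) * x ^ (a - 2) * (1 + x ^ a) ^ (K - 1)
        + a * (K - 1) * x ^ (2 * a - 2) * (1 + x ^ a) ^ (K - 2)
        - (a * K - 1) * (x - 1) ^ (a * K - 2)
        = (a - 1) * (x ^ (a - 2) * ((1 + x ^ a) ^ (K - 1) - (x ^ a) ^ (K - 1)))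
          + a * (K - 1) * (x ^ (2 * a - 2) * ((1 + x ^ a) ^ (K - 2) - (x ^ a) ^ (K - 2)))
          + (a * K - 1) * (x ^ (a * K - 2) - (x - 1) ^ (a * K - 2)) := by
      linear_combination (a - 1) * h1 + (a * (K - 1)) * h2
    have e1 : |(1 + x ^ a) ^ (K - 1) - (x ^ a) ^ (K - 1)| ≤ |K - 1| * (x ^ a) ^ (K - 2) := by
      have := gap_bound (p := K - 1) (by linarith) hxa1
      rwa [show K - 1 - 1 = K - 2 from by ring, add_comm (x ^ a) 1] at this
    have e1' : |(1 + x ^ a) ^ (K - 2) - (x ^ a) ^ (K - 2)| ≤ |K - 2| * (x ^ a) ^ (K - 3) := by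
      have := gap_bound (p := K - 2) (by linarith) hxa1
      rwa [show K - 2 - 1 = K - 3 from by ring, add_comm (x ^ a) 1] at this
    have e2 : |x ^ (a * K - 2) - (x - 1) ^ (a * K - 2)| ≤ |a * K - 2| * (x - 1) ^ (a * K - 3) := by
      have := gap_bound (p := a * K - 2) (by linarith) hxm1
      rwa [show x - 1 + 1 = x from by ring, show a * K - 2 - 1 = a * K - 3 from by ring] at this
    have hT1 : |(a - 1) * (x ^ (a - 2) * ((1 + x ^ a) ^ (K - 1) - (x ^ a) ^ (K - 1)))|
        ≤ (x - 1) ^ (a * K - a - 2) := by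
      rw [abs_mul, abs_mul, abs_of_nonneg (Real.rpow_nonneg hx0.le _)]
      have hmul : x ^ (a - 2) * (x ^ a) ^ (K - 2) = x ^ (a * K - a - 2) := by
        rw [← Real.rpow_mul hx0.le, ← Real.rpow_add hx0]; ring_nf
      calc |a - 1| * (x ^ (a - 2) * |(1 + x ^ a) ^ (K - 1) - (x ^ a) ^ (K - 1)|)
          ≤ 1 * (x ^ (a - 2) * (|K - 1| * (x ^ a) ^ (K - 2))) := by
            refine mul_le_mul (abs_le.mpr ⟨by linarith, by linarith⟩)
              (mul_le_mul_of_nonneg_left e1 (Real.rpow_nonneg hx0.le _))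
              (by positivity) one_pos.le
        _ = |K - 1| * x ^ (a * K - a - 2) := by linear_combination |K - 1| * hmul
        _ ≤ 1 * (x - 1) ^ (a * K - a - 2) := by
            refine mul_le_mul (abs_le.mpr ⟨by linarith, by linarith⟩)
              (hbase _ (by nlinarith)) (Real.rpow_nonneg hx0.le _) one_pos.le
        _ = _ := one_mul _
    have hT2 : |a * (K - 1) * (x ^ (2 * a - 2) * ((1 + x ^ a) ^ (K - 2) - (x ^ a) ^ (K - 2)))|
        ≤ 4 * (x - 1) ^ (a * K - a - 2) := by
      rw [abs_mul (a * (K - 1)), abs_mul (x ^ (2 * a - 2)),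
        abs_of_nonneg (Real.rpow_nonneg hx0.le (2 * a - 2))]
      have hmul : x ^ (2 * a - 2) * (x ^ a) ^ (K - 3) = x ^ (a * K - a - 2) := by
        rw [← Real.rpow_mul hx0.le, ← Real.rpow_add hx0]; ring_nf
      calc |a * (K - 1)| * (x ^ (2 * a - 2) * |(1 + x ^ a) ^ (K - 2) - (x ^ a) ^ (K - 2)|)
          ≤ 2 * (x ^ (2 * a - 2) * (|K - 2| * (x ^ a) ^ (K - 3))) := by
            refine mul_le_mul (abs_le.mpr ⟨by nlinarith, by nlinarith⟩)
              (mul_le_mul_of_nonneg_left e1' (Real.rpow_nonneg hx0.le _))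
              (by positivity) (by norm_num)
        _ = 2 * |K - 2| * x ^ (a * K - a - 2) := by linear_combination 2 * |K - 2| * hmul
        _ ≤ 2 * 2 * (x - 1) ^ (a * K - a - 2) := by
            refine mul_le_mul
              (mul_le_mul_of_nonneg_left (abs_le.mpr ⟨by linarith, by linarith⟩) (by norm_num))
              (hbase _ (by nlinarith)) (Real.rpow_nonneg hx0.le _) (by norm_num)
        _ = 4 * (x - 1) ^ (a * K - a - 2) := by ring
    have hT3 : |(a * K - 1) * (x ^ (a * K - 2) - (x - 1) ^ (a * K - 2))|
        ≤ 2 * (x - 1) ^ (a * K - 3) := by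
      rw [abs_mul]
      calc |a * K - 1| * |x ^ (a * K - 2) - (x - 1) ^ (a * K - 2)|
          ≤ 1 * (|a * K - 2| * (x - 1) ^ (a * K - 3)) :=
            mul_le_mul (abs_le.mpr ⟨by linarith, by linarith⟩) e2 (abs_nonneg _) one_pos.le
        _ ≤ 1 * (2 * (x - 1) ^ (a * K - 3)) := by
            refine mul_le_mul_of_nonneg_left
              (mul_le_mul_of_nonneg_right (abs_le.mpr ⟨by linarith, by linarith⟩) (hpos _).le)
              one_pos.le
        _ = 2 * (x - 1) ^ (a * K - 3) := by ring
    calc |f2 x| = c * (a * K) * |(a - 1) * (x ^ (a - 2) * ((1 + x ^ a) ^ (K - 1) - (x ^ a) ^ (K - 1)))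
          + a * (K - 1) * (x ^ (2 * a - 2) * ((1 + x ^ a) ^ (K - 2) - (x ^ a) ^ (K - 2)))
          + (a * K - 1) * (x ^ (a * K - 2) - (x - 1) ^ (a * K - 2))| := by
          simp only [hf2]
          rw [hsplit, abs_mul, abs_of_pos hcaK0]
      _ ≤ 2 * ((x - 1) ^ (a * K - a - 2) + 4 * (x - 1) ^ (a * K - a - 2)
            + 2 * (x - 1) ^ (a * K - 3)) := by
          refine mul_le_mul hcaK (le_trans (abs_add_le _ _)
            (add_le_add (le_trans (abs_add_le _ _) (add_le_add hT1 hT2)) hT3))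
            (abs_nonneg _) (by norm_num)
      _ ≤ 10 * ((x - 1) ^ (a * K - 3) + (x - 1) ^ (a * K - a - 2)) := by
          nlinarith [hpos (a * K - 3), hpos (a * K - a - 2)]
end
end

section
/- Let φ(x) := √x · arcsin(1/√x) for x ≥ 1. Then there exists a constant C > 0 such that for all x ≥ 2: |φ'(x)| ≤ C (x-1)^{-2} and |φ''(x)| ≤ C (x-1)^{-3}. (Explicitly, φ'(x) = (1/(2√x))(arcsin(1/√x) - 1/√(x-1)).) -/
noncomputable section
open Real

lemma sw_key {x : ℝ} (hx : 1 < x) :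
    Real.sqrt (1 - (1 / Real.sqrt x) ^ 2) = Real.sqrt (x - 1) / Real.sqrt x := by
  have hx0 : 0 < x := by linarith
  have hs2 : Real.sqrt x ^ 2 = x := Real.sq_sqrt hx0.le
  have h1 : 1 - (1 / Real.sqrt x) ^ 2 = (x - 1) / x := by
    rw [div_pow, one_pow, hs2]
    field_simp
  rw [h1, Real.sqrt_div (by linarith : (0:ℝ) ≤ x - 1)]

lemma sw_arc {x : ℝ} (hx : 1 < x) :
    HasDerivAt (fun y => Real.arcsin (1 / Real.sqrt y))
      (-(1 / (2 * x * Real.sqrt (x - 1)))) x := by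
  have hx0 : 0 < x := by linarith
  have hs0 : 0 < Real.sqrt x := Real.sqrt_pos.mpr hx0
  have hs1 : 1 < Real.sqrt x := by
    have := Real.sqrt_lt_sqrt (by norm_num : (0:ℝ) ≤ 1) hx
    simpa using this
  have ht0 : 0 < Real.sqrt (x - 1) := Real.sqrt_pos.mpr (by linarith)
  have hs2 : Real.sqrt x ^ 2 = x := Real.sq_sqrt hx0.le
  have ht2 : Real.sqrt (x - 1) ^ 2 = x - 1 := Real.sq_sqrt (by linarith)
  have h_sqrt : HasDerivAt Real.sqrt (1 / (2 * Real.sqrt x)) x := Real.hasDerivAt_sqrt hx0.ne'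
  have h_inv : HasDerivAt (fun y => (Real.sqrt y)⁻¹)
      (-(1 / (2 * Real.sqrt x)) / (Real.sqrt x) ^ 2) x := h_sqrt.inv hs0.ne'
  have hlt : (Real.sqrt x)⁻¹ < 1 := by
    rw [inv_lt_one_iff₀]; right; exact hs1
  have hinvpos : 0 < (Real.sqrt x)⁻¹ := inv_pos.mpr hs0
  have hne1 : (Real.sqrt x)⁻¹ ≠ 1 := ne_of_lt hlt
  have hnem1 : (Real.sqrt x)⁻¹ ≠ -1 := by intro h; rw [h] at hinvpos; linarith
  have h_arc : HasDerivAt (fun y => Real.arcsin ((Real.sqrt y)⁻¹))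
      ((1 / Real.sqrt (1 - ((Real.sqrt x)⁻¹) ^ 2)) * (-(1 / (2 * Real.sqrt x)) / Real.sqrt x ^ 2))
      x := by have := (Real.hasDerivAt_arcsin hnem1 hne1).comp x h_inv; exact this
  simp only [← one_div] at h_arc ⊢
  convert h_arc using 1
  rw [sw_key hx]
  rw [hs2]
  field_simp

lemma sw_tinv {x : ℝ} (hx : 1 < x) :
    HasDerivAt (fun y => 1 / Real.sqrt (y - 1))
      (-(1 / (2 * (x - 1) * Real.sqrt (x - 1)))) x := by
  have ht0 : 0 < Real.sqrt (x - 1) := Real.sqrt_pos.mpr (by linarith)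
  have ht2 : Real.sqrt (x - 1) ^ 2 = x - 1 := Real.sq_sqrt (by linarith)
  have h1 : HasDerivAt (fun y : ℝ => Real.sqrt (y - 1)) (1 / (2 * Real.sqrt (x - 1))) x := by
    have := (Real.hasDerivAt_sqrt (by intro h; rw [h] at ht0; simp at ht0 : x - 1 ≠ 0)).comp x
      ((hasDerivAt_id x).sub_const 1)
    simpa [Function.comp_def] using this
  have h2 := h1.inv ht0.ne'
  simp only [← one_div] at h2 ⊢
  refine h2.congr_deriv (Eq.symm ?_)
  rw [ht2]
  field_simp [sub_ne_zero.mpr hx.ne']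

lemma sw_c {x : ℝ} (hx : 1 < x) :
    HasDerivAt (fun y => 1 / (2 * Real.sqrt y)) (-(1 / (4 * x * Real.sqrt x))) x := by
  have hx0 : 0 < x := by linarith
  have hs0 : 0 < Real.sqrt x := Real.sqrt_pos.mpr hx0
  have hs2 : Real.sqrt x ^ 2 = x := Real.sq_sqrt hx0.le
  have h_sqrt : HasDerivAt Real.sqrt (1 / (2 * Real.sqrt x)) x := Real.hasDerivAt_sqrt hx0.ne'
  have h2 := (h_sqrt.const_mul 2).inv (by positivity)
  simp only [← one_div] at h2 ⊢
  refine h2.congr_deriv (Eq.symm ?_)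
  field_simp
  linear_combination (-4) * hs2

lemma sw_hasDerivAt1 {x : ℝ} (hx : 1 < x) :
    HasDerivAt (fun y => Real.sqrt y * Real.arcsin (1 / Real.sqrt y))
      ((1 / (2 * Real.sqrt x)) * (Real.arcsin (1 / Real.sqrt x) - 1 / Real.sqrt (x - 1))) x := by
  have hx0 : 0 < x := by linarith
  have hs0 : 0 < Real.sqrt x := Real.sqrt_pos.mpr hx0
  have ht0 : 0 < Real.sqrt (x - 1) := Real.sqrt_pos.mpr (by linarith)
  have hs2 : Real.sqrt x ^ 2 = x := Real.sq_sqrt hx0.le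
  have ht2 : Real.sqrt (x - 1) ^ 2 = x - 1 := Real.sq_sqrt (by linarith)
  have h_sqrt : HasDerivAt Real.sqrt (1 / (2 * Real.sqrt x)) x := Real.hasDerivAt_sqrt hx0.ne'
  have hmul := h_sqrt.mul (sw_arc hx)
  refine hmul.congr_deriv (Eq.symm ?_)
  field_simp
  linear_combination (1) * hs2

lemma sw_hasDerivAt2 {x : ℝ} (hx : 1 < x) :
    HasDerivAt (fun y => (1 / (2 * Real.sqrt y)) *
        (Real.arcsin (1 / Real.sqrt y) - 1 / Real.sqrt (y - 1)))
      (-(1 / (4 * x * Real.sqrt x)) * (Real.arcsin (1 / Real.sqrt x) - 1 / Real.sqrt (x - 1))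
        + 1 / (4 * x * (x - 1) * Real.sqrt x * Real.sqrt (x - 1))) x := by
  have hx0 : 0 < x := by linarith
  have hs0 : 0 < Real.sqrt x := Real.sqrt_pos.mpr hx0
  have ht0 : 0 < Real.sqrt (x - 1) := Real.sqrt_pos.mpr (by linarith)
  have hs2 : Real.sqrt x ^ 2 = x := Real.sq_sqrt hx0.le
  have ht2 : Real.sqrt (x - 1) ^ 2 = x - 1 := Real.sq_sqrt (by linarith)
  have h := (sw_c hx).mul ((sw_arc hx).sub (sw_tinv hx))
  refine h.congr_deriv (Eq.symm ?_)
  have hx1 : (0:ℝ) < x - 1 := by linarith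
  simp only [Pi.sub_apply]
  field_simp
  ring

set_option maxHeartbeats 1000000 in
/-- Verification of condition (H.2) for Swanson's process: for
`φ(x) = √x · arcsin(1/√x)`, one has `φ'(x) = (1/(2√x))(arcsin(1/√x) - 1/√(x-1))`,
`|φ'(x)| ≤ C(x-1)^{-2}` and `|φ''(x)| ≤ C(x-1)^{-3}` for all `x ≥ 2`. -/
theorem stmt_16 (φ : ℝ → ℝ)
    (hφ : ∀ x : ℝ, 1 ≤ x → φ x = Real.sqrt x * Real.arcsin (1 / Real.sqrt x)) :
    ∃ C : ℝ, 0 < C ∧ ∀ x : ℝ, 2 ≤ x →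
      deriv φ x = (1 / (2 * Real.sqrt x)) *
          (Real.arcsin (1 / Real.sqrt x) - 1 / Real.sqrt (x - 1)) ∧
      |deriv φ x| ≤ C * (x - 1) ^ (-(2 : ℝ)) ∧
      |deriv (deriv φ) x| ≤ C * (x - 1) ^ (-(3 : ℝ)) := by
  have hder : ∀ y : ℝ, 1 < y → deriv φ y =
      (1 / (2 * Real.sqrt y)) * (Real.arcsin (1 / Real.sqrt y) - 1 / Real.sqrt (y - 1)) := by
    intro y hy
    have hEq : φ =ᶠ[nhds y] fun z => Real.sqrt z * Real.arcsin (1 / Real.sqrt z) := by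
      filter_upwards [Ioi_mem_nhds hy] with z hz using hφ z (le_of_lt hz)
    exact ((sw_hasDerivAt1 hy).congr_of_eventuallyEq hEq).deriv
  refine ⟨1, one_pos, fun x hx2 => ?_⟩
  have hx1 : (1:ℝ) < x := by linarith
  have hx0 : (0:ℝ) < x := by linarith
  have hxm1 : (0:ℝ) < x - 1 := by linarith
  have h1 := hder x hx1
  have hdd : deriv (deriv φ) x =
      -(1 / (4 * x * Real.sqrt x)) * (Real.arcsin (1 / Real.sqrt x) - 1 / Real.sqrt (x - 1))
        + 1 / (4 * x * (x - 1) * Real.sqrt x * Real.sqrt (x - 1)) := by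
    have hEq2 : deriv φ =ᶠ[nhds x] fun z =>
        (1 / (2 * Real.sqrt z)) * (Real.arcsin (1 / Real.sqrt z) - 1 / Real.sqrt (z - 1)) := by
      filter_upwards [Ioi_mem_nhds hx1] with z hz using hder z hz
    rw [hEq2.deriv_eq]
    exact (sw_hasDerivAt2 hx1).deriv
  set s := Real.sqrt x with hsdef
  set t := Real.sqrt (x - 1) with htdef
  have hs0 : 0 < s := Real.sqrt_pos.mpr hx0
  have ht0 : 0 < t := Real.sqrt_pos.mpr (by linarith)
  have hs2 : s ^ 2 = x := Real.sq_sqrt hx0.le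
  have ht2 : t ^ 2 = x - 1 := Real.sq_sqrt (by linarith)
  have ht1 : 1 ≤ t := by nlinarith
  have hs1 : 1 < s := by nlinarith
  have hts : t ≤ s := by nlinarith
  clear_value s t
  -- arcsin bounds
  have hinvlt : (1:ℝ)/s < 1 := by rw [div_lt_one hs0]; exact hs1
  have hinvpos : (0:ℝ) < 1/s := by positivity
  have hsin : Real.sin (Real.arcsin (1/s)) = 1/s :=
    Real.sin_arcsin (by linarith) hinvlt.le
  have hpos : 0 < Real.arcsin (1/s) := Real.arcsin_pos.mpr hinvpos
  have harc_lb : 1/s < Real.arcsin (1/s) := by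
    have := Real.sin_lt hpos
    rwa [hsin] at this
  have harc_ub : Real.arcsin (1/s) < 1/t := by
    have hlt2 : Real.arcsin (1/s) < Real.pi/2 := Real.arcsin_lt_pi_div_two.mpr hinvlt
    have htan := Real.lt_tan hpos hlt2
    have hcos : Real.cos (Real.arcsin (1/s)) = t/s := by
      rw [Real.cos_arcsin, hsdef, htdef]; exact sw_key hx1
    rw [Real.tan_eq_sin_div_cos, hsin, hcos] at htan
    have heq : (1/s)/(t/s) = 1/t := by field_simp
    rwa [heq] at htan
  -- key bound on A
  have hdiff : (s - t) * (s + t) = 1 := by nlinarith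
  have hkey : 1/t - 1/s ≤ 1/(2*t^3) := by
    rw [div_sub_div _ _ ht0.ne' hs0.ne', div_le_div_iff₀ (by positivity) (by positivity)]
    nlinarith [hdiff, mul_pos ht0 hs0, pow_pos ht0 3]
  have hA : |Real.arcsin (1/s) - 1/t| ≤ 1/(2*t^3) := by
    rw [abs_le]
    constructor
    · nlinarith
    · nlinarith [harc_ub]
  have hrp2 : (x - 1) ^ (-(2:ℝ)) = 1/(t^4) := by
    rw [Real.rpow_neg hxm1.le, show ((2:ℝ)) = ((2:ℕ):ℝ) by norm_num, Real.rpow_natCast,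
      ← ht2, ← pow_mul]
    norm_num
  have hrp3 : (x - 1) ^ (-(3:ℝ)) = 1/(t^6) := by
    rw [Real.rpow_neg hxm1.le, show ((3:ℝ)) = ((3:ℕ):ℝ) by norm_num, Real.rpow_natCast,
      ← ht2, ← pow_mul]
    norm_num
  refine ⟨h1, ?_, ?_⟩
  · rw [h1, hrp2, one_mul, abs_mul, abs_of_pos (by positivity : (0:ℝ) < 1/(2*s))]
    have h2 : 1/(2*s) * |Real.arcsin (1/s) - 1/t| ≤ 1/(2*s) * (1/(2*t^3)) := by
      apply mul_le_mul_of_nonneg_left hA (by positivity)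
    refine h2.trans ?_
    rw [div_mul_div_comm, one_mul, div_le_div_iff₀ (by positivity) (by positivity)]
    nlinarith [pow_pos ht0 3, pow_pos ht0 4]
  · rw [hdd, hrp3, one_mul]
    have habs : |(-(1 / (4 * x * s)) * (Real.arcsin (1/s) - 1/t)
          + 1 / (4 * x * (x - 1) * s * t))|
        ≤ 1/(4*x*s) * (1/(2*t^3)) + 1/(4*x*(x-1)*s*t) := by
      refine (abs_add_le _ _).trans ?_
      gcongr
      · rw [abs_mul, abs_neg, abs_of_pos (by positivity : (0:ℝ) < 1/(4*x*s))]
        exact mul_le_mul_of_nonneg_left hA (by positivity)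
      · rw [abs_of_pos]
        positivity
    refine habs.trans ?_
    have e1 : 1/(4*x*s) * (1/(2*t^3)) + 1/(4*x*(x-1)*s*t) = 3/(8*s^3*t^3) := by
      rw [← ht2, ← hs2]
      field_simp
      ring
    rw [e1, div_le_div_iff₀ (by positivity) (by positivity)]
    nlinarith [pow_le_pow_left₀ ht0.le hts 3, pow_pos ht0 3, pow_pos hs0 3]
end
end
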